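/- arXiv:math/0608716 — 8 statements merged into one kernel-verified Lean document; each statement's English description precedes it below -/
import Mathlib

section
/- Let R > 0, C > 0, and let w : (0, R) → (0, ∞) be a measurable function such that C·w(s) ≤ w(t) whenever 0 < s ≤ t < R. Then for every continuously differentiable function u : [0, R] → ℂ which vanishes on [R', R] for some 0 < R' < R, and for every j ∈ [0, R), one has ∫_j^R (w(θ)/(R·(R − θ)))·|u(θ)|² dθ ≤ (1/C)·∫_0^R w(θ)·|u'(θ)|² dθ, as an inequality of Lebesgue integrals of nonnegative functions (valid in [0, ∞]). -/
open MeasureTheory Set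

/-- A weighted Hardy-type inequality: if the weight `w` on `(0,R)` satisfies
the quasi-monotonicity condition `C·w(s) ≤ w(t)` for `0 < s ≤ t < R`, then for any `C¹`
function `u` on `[0,R]` vanishing near the right endpoint and any `j ∈ [0,R)`,
`∫_j^R (w θ/(R(R−θ)))·|u θ|² dθ ≤ (1/C)·∫_0^R w θ·|u' θ|² dθ`. -/
theorem stmt0
    (R C : ℝ) (hR : 0 < R) (hC : 0 < C)
    (w : ℝ → ℝ) (hw_meas : Measurable w)
    (hw_pos : ∀ t ∈ Ioo (0 : ℝ) R, 0 < w t)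
    (hw_mono : ∀ s t : ℝ, 0 < s → s ≤ t → t < R → C * w s ≤ w t)
    (u : ℝ → ℂ) (hu : ContDiffOn ℝ 1 u (Icc 0 R))
    (R' : ℝ) (hR'0 : 0 < R') (hR'R : R' < R)
    (hu0 : ∀ t ∈ Icc R' R, u t = 0)
    (j : ℝ) (hj : j ∈ Ico (0 : ℝ) R) :
    ∫⁻ θ in Ioo j R, ENNReal.ofReal (w θ / (R * (R - θ)) * ‖u θ‖ ^ 2)
      ≤ ENNReal.ofReal (1 / C) *
        ∫⁻ θ in Ioo (0 : ℝ) R, ENNReal.ofReal (w θ * ‖deriv u θ‖ ^ 2) := by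
  set I := ∫⁻ θ in Ioo (0:ℝ) R, ENNReal.ofReal (w θ * ‖deriv u θ‖ ^ 2) with hI
  have hu' : ∀ t ∈ Ioo (0:ℝ) R, HasDerivAt u (deriv u t) t := by
    intro t ht
    have h1 : Icc (0:ℝ) R ∈ nhds t := Icc_mem_nhds ht.1 ht.2
    exact ((hu.contDiffAt h1).differentiableAt one_ne_zero).hasDerivAt
  have hdc : ContinuousOn (deriv u) (Ioo 0 R) :=
    (hu.mono Ioo_subset_Icc_self).continuousOn_deriv_of_isOpen isOpen_Ioo le_rfl
  have hmeas_d : Measurable (deriv u) := measurable_deriv u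
  have key : ∀ θ ∈ Ioo j R,
      ENNReal.ofReal (w θ / (R * (R - θ)) * ‖u θ‖ ^ 2)
        ≤ ENNReal.ofReal (1/(C*R)) * I := by
    intro θ hθ
    have hθ0 : 0 < θ := lt_of_le_of_lt hj.1 hθ.1
    have hθR : θ < R := hθ.2
    by_cases hcase : R' ≤ θ
    · have h0 : u θ = 0 := hu0 θ ⟨hcase, hθR.le⟩
      simp [h0]
    push_neg at hcase
    have hsub : Icc θ R' ⊆ Ioo 0 R := fun t ht =>
      ⟨lt_of_lt_of_le hθ0 ht.1, lt_of_le_of_lt ht.2 hR'R⟩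
    have huIcc : uIcc θ R' = Icc θ R' := uIcc_of_le hcase.le
    have hint : IntervalIntegrable (deriv u) volume θ R' :=
      (hdc.mono (huIcc ▸ hsub)).intervalIntegrable
    have hftc : ∫ t in θ..R', deriv u t = u R' - u θ :=
      intervalIntegral.integral_eq_sub_of_hasDerivAt
        (fun t ht => hu' t (hsub (huIcc ▸ ht))) hint
    have huθ : ‖u θ‖ ≤ ∫ t in θ..R', ‖deriv u t‖ := by
      have h2 := intervalIntegral.norm_integral_le_integral_norm
        (f := deriv u) (μ := volume) hcase.le
      rwa [hftc, hu0 R' ⟨le_rfl, hR'R.le⟩, zero_sub, norm_neg] at h2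
    set s : Set ℝ := Ioc θ R' with hs
    have hs_sub : s ⊆ Ioo 0 R := fun t ht =>
      ⟨hθ0.trans ht.1, lt_of_le_of_lt ht.2 hR'R⟩
    have hInt_s : IntegrableOn (fun t => ‖deriv u t‖) s := by
      have := ((hdc.mono hsub).norm.integrableOn_compact (μ := volume) isCompact_Icc)
      exact this.mono_set Ioc_subset_Icc_self
    have h1 : ENNReal.ofReal ‖u θ‖ ≤ ∫⁻ t in s, ENNReal.ofReal ‖deriv u t‖ := by
      rw [← ofReal_integral_eq_lintegral_ofReal hInt_s
        (Filter.Eventually.of_forall fun t => norm_nonneg _)]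
      apply ENNReal.ofReal_le_ofReal
      rwa [intervalIntegral.integral_of_le hcase.le] at huθ
    -- Cauchy–Schwarz in ℝ≥0∞
    set A := ∫⁻ t in s, ENNReal.ofReal (‖deriv u t‖ ^ 2) with hA
    have holder : (∫⁻ t in s, ENNReal.ofReal ‖deriv u t‖)
        ≤ A ^ ((1:ℝ)/2) * (ENNReal.ofReal (R' - θ)) ^ ((1:ℝ)/2) := by
      have hpq : Real.HolderConjugate 2 2 := Real.HolderConjugate.two_two
      have hme : AEMeasurable (fun t => ENNReal.ofReal ‖deriv u t‖)
          (volume.restrict s) := (hmeas_d.norm.ennreal_ofReal).aemeasurable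
      have h2 := ENNReal.lintegral_mul_le_Lp_mul_Lq (volume.restrict s) hpq
        hme (aemeasurable_const (b := (1:ENNReal)))
      simp only [Pi.mul_apply, mul_one, ENNReal.one_rpow, lintegral_const,
        Measure.restrict_apply, MeasurableSet.univ, univ_inter] at h2
      have heq : ∀ t, ENNReal.ofReal ‖deriv u t‖ ^ (2:ℝ)
          = ENNReal.ofReal (‖deriv u t‖ ^ 2) := by
        intro t
        rw [ENNReal.ofReal_rpow_of_nonneg (norm_nonneg _) (by norm_num)]
        norm_num
      simp only [heq] at h2
      calc (∫⁻ t in s, ENNReal.ofReal ‖deriv u t‖)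
          ≤ A ^ ((1:ℝ)/2) * (volume s) ^ ((1:ℝ)/2) := by rw [one_mul] at h2; exact h2
        _ = A ^ ((1:ℝ)/2) * (ENNReal.ofReal (R' - θ)) ^ ((1:ℝ)/2) := by
            rw [hs, Real.volume_Ioc]
    have hsq : ENNReal.ofReal (‖u θ‖ ^ 2) ≤ ENNReal.ofReal (R' - θ) * A := by
      have h2 : ENNReal.ofReal (‖u θ‖ ^ 2) = (ENNReal.ofReal ‖u θ‖) ^ 2 := by
        rw [ENNReal.ofReal_pow (norm_nonneg _)]
      rw [h2]
      calc (ENNReal.ofReal ‖u θ‖) ^ 2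
          ≤ (A ^ ((1:ℝ)/2) * (ENNReal.ofReal (R' - θ)) ^ ((1:ℝ)/2)) ^ 2 := by
            gcongr
            exact h1.trans holder
        _ = ENNReal.ofReal (R' - θ) * A := by
            rw [mul_pow, ← ENNReal.rpow_natCast (A ^ ((1:ℝ)/2)),
              ← ENNReal.rpow_natCast ((ENNReal.ofReal (R' - θ)) ^ ((1:ℝ)/2)),
              ← ENNReal.rpow_mul, ← ENNReal.rpow_mul]
            norm_num [mul_comm]
    -- put the weight in
    have hwθ : 0 < w θ := hw_pos θ ⟨hθ0, hθR⟩
    have hRθ : 0 < R - θ := by linarith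
    have hfrac : 0 ≤ w θ / (R * (R - θ)) := by positivity
    calc ENNReal.ofReal (w θ / (R * (R - θ)) * ‖u θ‖ ^ 2)
        = ENNReal.ofReal (w θ / (R * (R - θ))) * ENNReal.ofReal (‖u θ‖ ^ 2) := by
          rw [ENNReal.ofReal_mul hfrac]
      _ ≤ ENNReal.ofReal (w θ / (R * (R - θ))) * (ENNReal.ofReal (R' - θ) * A) := by
          gcongr
      _ = ENNReal.ofReal (w θ / (R * (R - θ)) * (R' - θ)) * A := by
          rw [ENNReal.ofReal_mul hfrac, mul_assoc]
      _ ≤ ENNReal.ofReal (w θ / R) * A := by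
          gcongr
          rw [div_mul_eq_mul_div, div_le_div_iff₀ (by positivity) hR]
          nlinarith [mul_le_mul_of_nonneg_left (show R' - θ ≤ R - θ by linarith)
            (mul_nonneg hwθ.le hR.le)]
      _ = ∫⁻ t in s, ENNReal.ofReal (w θ / R * ‖deriv u t‖ ^ 2) := by
          rw [hA, ← lintegral_const_mul' _ _ ENNReal.ofReal_ne_top]
          congr 1
          ext t
          rw [← ENNReal.ofReal_mul (by positivity)]
      _ ≤ ∫⁻ t in s, ENNReal.ofReal (1/(C*R) * (w t * ‖deriv u t‖ ^ 2)) := by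
          apply setLIntegral_mono
            (by exact ((hw_meas.mul (hmeas_d.norm.pow measurable_const)).const_mul
              _).ennreal_ofReal)
          intro t ht
          apply ENNReal.ofReal_le_ofReal
          have hm := hw_mono θ t hθ0 ht.1.le (lt_of_le_of_lt ht.2 hR'R)
          have hx : (0:ℝ) ≤ ‖deriv u t‖ ^ 2 := sq_nonneg _
          rw [div_mul_eq_mul_div, one_div, inv_mul_eq_div,
            div_le_div_iff₀ hR (by positivity)]
          nlinarith [mul_le_mul_of_nonneg_right hm hx]
      _ = ENNReal.ofReal (1/(C*R)) *
            ∫⁻ t in s, ENNReal.ofReal (w t * ‖deriv u t‖ ^ 2) := by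
          rw [← lintegral_const_mul' _ _ ENNReal.ofReal_ne_top]
          congr 1
          ext t
          rw [← ENNReal.ofReal_mul (by positivity)]
      _ ≤ ENNReal.ofReal (1/(C*R)) * I := by
          gcongr
          exact lintegral_mono_set hs_sub
  calc ∫⁻ θ in Ioo j R, ENNReal.ofReal (w θ / (R * (R - θ)) * ‖u θ‖ ^ 2)
      ≤ ∫⁻ _ in Ioo j R, ENNReal.ofReal (1/(C*R)) * I :=
        setLIntegral_mono' measurableSet_Ioo key
    _ = ENNReal.ofReal (1/(C*R)) * I * volume (Ioo j R) := setLIntegral_const _ _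
    _ = (ENNReal.ofReal (1/(C*R)) * ENNReal.ofReal (R - j)) * I := by
        rw [Real.volume_Ioo]; ring
    _ ≤ ENNReal.ofReal (1/C) * I := by
        gcongr
        rw [← ENNReal.ofReal_mul (by positivity)]
        apply ENNReal.ofReal_le_ofReal
        rw [div_mul_eq_mul_div, one_mul, div_le_div_iff₀ (by positivity) hC]
        nlinarith [hj.1, hj.2, hC.le, hR.le]
end

section
/- Let R > 0, C > 0, and let w : (0, R) → (0, ∞) be a measurable function such that C·w(s) ≤ w(t) whenever 0 < s ≤ t < R. Then for every continuously differentiable function u : [0, R] → ℂ which vanishes on [R', R] for some 0 < R' < R, and for every j ∈ [0, R), one has ∫_j^R w(θ)·|u(θ)|² dθ ≤ ((R − j)²/C)·∫_j^R w(θ)·|u'(θ)|² dθ, as an inequality of Lebesgue integrals of nonnegative functions (valid in [0, ∞]). -/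
open MeasureTheory Set

/-- If the weight `w` on `(0,R)` satisfies the quasi-monotonicity condition
`C·w(s) ≤ w(t)` for `0 < s ≤ t < R`, then for any `C¹` function `u` on `[0,R]` vanishing near
the right endpoint and any `j ∈ [0,R)`,
`∫_j^R w θ·|u θ|² dθ ≤ ((R−j)²/C)·∫_j^R w θ·|u' θ|² dθ`. -/
theorem stmt1
    (R C : ℝ) (hR : 0 < R) (hC : 0 < C)
    (w : ℝ → ℝ) (hw_meas : Measurable w)
    (hw_pos : ∀ t ∈ Ioo (0 : ℝ) R, 0 < w t)
    (hw_mono : ∀ s t : ℝ, 0 < s → s ≤ t → t < R → C * w s ≤ w t)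
    (u : ℝ → ℂ) (hu : ContDiffOn ℝ 1 u (Icc 0 R))
    (R' : ℝ) (hR'0 : 0 < R') (hR'R : R' < R)
    (hu0 : ∀ t ∈ Icc R' R, u t = 0)
    (j : ℝ) (hj : j ∈ Ico (0 : ℝ) R) :
    ∫⁻ θ in Ioo j R, ENNReal.ofReal (w θ * ‖u θ‖ ^ 2)
      ≤ ENNReal.ofReal ((R - j) ^ 2 / C) *
        ∫⁻ θ in Ioo j R, ENNReal.ofReal (w θ * ‖deriv u θ‖ ^ 2) := by
  obtain ⟨hj0, hjR⟩ := hj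
  set F : ℝ → ENNReal := fun t => ENNReal.ofReal ‖deriv u t‖ with hF
  set I : ENNReal := ∫⁻ θ in Ioo j R, ENNReal.ofReal (w θ * ‖deriv u θ‖ ^ 2) with hI
  have hFsq : ∀ t : ℝ, F t ^ 2 = ENNReal.ofReal (‖deriv u t‖ ^ 2) := fun t =>
    (ENNReal.ofReal_pow (norm_nonneg _) 2).symm
  have hopen : ContDiffOn ℝ 1 u (Ioo 0 R) := hu.mono Ioo_subset_Icc_self
  have hdc : ContinuousOn (deriv u) (Ioo 0 R) :=
    hopen.continuousOn_deriv_of_isOpen isOpen_Ioo le_rfl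
  have hder : ∀ t ∈ Ioo (0:ℝ) R, HasDerivAt u (deriv u t) t := fun t ht =>
    ((hopen.differentiableOn one_ne_zero).differentiableAt (isOpen_Ioo.mem_nhds ht)).hasDerivAt
  set R'' : ℝ := (R' + R)/2 with hR''def
  have hR'R'' : R' < R'' := by rw [hR''def]; linarith
  have hR''R : R'' < R := by rw [hR''def]; linarith
  have huR'' : u R'' = 0 := hu0 R'' ⟨hR'R''.le, hR''R.le⟩
  -- key pointwise bound
  have key : ∀ θ ∈ Ioo j R,
      ENNReal.ofReal C * ENNReal.ofReal (w θ * ‖u θ‖ ^ 2)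
        ≤ ENNReal.ofReal (R - j) * I := by
    intro θ hθ
    obtain ⟨hθj, hθR⟩ := hθ
    have hθ0 : 0 < θ := lt_of_le_of_lt hj0 hθj
    have hwθ : 0 < w θ := hw_pos θ ⟨hθ0, hθR⟩
    by_cases hcase : R' ≤ θ
    · have h0 : u θ = 0 := hu0 θ ⟨hcase, hθR.le⟩
      simp [h0]
    push_neg at hcase
    have hθR'' : θ ≤ R'' := (hcase.trans hR'R'').le
    have hsub : Icc θ R'' ⊆ Ioo 0 R := fun t ht =>
      ⟨hθ0.trans_le ht.1, lt_of_le_of_lt ht.2 hR''R⟩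
    have hFTC : ∫ t in θ..R'', deriv u t = u R'' - u θ := by
      apply intervalIntegral.integral_eq_sub_of_hasDerivAt
      · intro t ht
        rw [uIcc_of_le hθR''] at ht
        exact hder t (hsub ht)
      · apply ContinuousOn.intervalIntegrable
        rw [uIcc_of_le hθR'']
        exact hdc.mono hsub
    have hA : ENNReal.ofReal ‖u θ‖ ≤ ∫⁻ t in Ioo θ R, F t := by
      have h1 : u θ = -∫ t in Ioc θ R'', deriv u t := by
        rw [← intervalIntegral.integral_of_le hθR'', hFTC, huR'']
        ring
      calc ENNReal.ofReal ‖u θ‖ = ↑‖∫ t in Ioc θ R'', deriv u t‖₊ := by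
            rw [h1, norm_neg, ofReal_norm, enorm_eq_nnnorm]
        _ ≤ ∫⁻ t in Ioc θ R'', ↑‖deriv u t‖₊ := enorm_integral_le_lintegral_enorm _
        _ = ∫⁻ t in Ioc θ R'', F t :=
            lintegral_congr fun t => (ofReal_norm (deriv u t)).symm
        _ ≤ ∫⁻ t in Ioo θ R, F t :=
            lintegral_mono_set (fun t ht => ⟨ht.1, lt_of_le_of_lt ht.2 hR''R⟩)
    -- Cauchy–Schwarz
    have hCS : (∫⁻ t in Ioo θ R, F t) ^ 2
        ≤ (∫⁻ t in Ioo θ R, F t ^ 2) * ENNReal.ofReal (R - θ) := by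
      have hpq : Real.HolderConjugate 2 2 := Real.HolderConjugate.two_two
      have h := ENNReal.lintegral_mul_le_Lp_mul_Lq (volume.restrict (Ioo θ R)) hpq
        ((measurable_deriv u).norm.ennreal_ofReal.aemeasurable)
        (aemeasurable_const (b := (1:ENNReal)))
      simp only [Pi.mul_apply, mul_one, ENNReal.one_rpow, lintegral_const,
        Measure.restrict_apply MeasurableSet.univ, univ_inter,
        Real.volume_Ioo, one_mul] at h
      have h2 : ∫⁻ t in Ioo θ R, F t
          ≤ (∫⁻ t in Ioo θ R, F t ^ 2) ^ (1/(2:ℝ)) *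
            (ENNReal.ofReal (R - θ)) ^ (1/(2:ℝ)) := by
        simpa [hF, ENNReal.rpow_two] using h
      calc (∫⁻ t in Ioo θ R, F t) ^ 2
          ≤ ((∫⁻ t in Ioo θ R, F t ^ 2) ^ (1/(2:ℝ)) *
              (ENNReal.ofReal (R - θ)) ^ (1/(2:ℝ))) ^ 2 := pow_le_pow_left' h2 2
        _ = (∫⁻ t in Ioo θ R, F t ^ 2) * ENNReal.ofReal (R - θ) := by
            rw [mul_pow, ← ENNReal.rpow_two ((∫⁻ t in Ioo θ R, F t ^ 2) ^ (1/(2:ℝ))),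
              ← ENNReal.rpow_two ((ENNReal.ofReal (R - θ)) ^ (1/(2:ℝ))),
              ← ENNReal.rpow_mul, ← ENNReal.rpow_mul]
            norm_num
    -- weight comparison
    have hwcomp : ENNReal.ofReal (C * w θ) *
        ∫⁻ t in Ioo θ R, F t ^ 2 ≤ I := by
      rw [← lintegral_const_mul' _ _ ENNReal.ofReal_ne_top]
      calc ∫⁻ t in Ioo θ R, ENNReal.ofReal (C * w θ) * F t ^ 2
          ≤ ∫⁻ t in Ioo θ R, ENNReal.ofReal (w t * ‖deriv u t‖ ^ 2) := by
            apply setLIntegral_mono' measurableSet_Ioo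
            intro t ht
            have h1 : C * w θ ≤ w t := hw_mono θ t hθ0 ht.1.le ht.2
            rw [hFsq t, ← ENNReal.ofReal_mul (mul_nonneg hC.le hwθ.le)]
            exact ENNReal.ofReal_le_ofReal
              (mul_le_mul_of_nonneg_right h1 (sq_nonneg _))
        _ ≤ I := lintegral_mono_set (fun t ht => ⟨hθj.trans ht.1, ht.2⟩)
    calc ENNReal.ofReal C * ENNReal.ofReal (w θ * ‖u θ‖ ^ 2)
        = ENNReal.ofReal (C * w θ) * ENNReal.ofReal ‖u θ‖ ^ 2 := by
          rw [ENNReal.ofReal_mul hwθ.le, ENNReal.ofReal_mul hC.le,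
            ENNReal.ofReal_pow (norm_nonneg _)]
          ring
      _ ≤ ENNReal.ofReal (C * w θ) * (∫⁻ t in Ioo θ R, F t) ^ 2 :=
          mul_le_mul_right (pow_le_pow_left' hA 2) _
      _ ≤ ENNReal.ofReal (C * w θ) *
            ((∫⁻ t in Ioo θ R, F t ^ 2) * ENNReal.ofReal (R - θ)) :=
          mul_le_mul_right hCS _
      _ = (ENNReal.ofReal (C * w θ) * ∫⁻ t in Ioo θ R, F t ^ 2) *
            ENNReal.ofReal (R - θ) := by ring
      _ ≤ I * ENNReal.ofReal (R - j) :=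
          mul_le_mul' hwcomp (ENNReal.ofReal_le_ofReal (by linarith))
      _ = ENNReal.ofReal (R - j) * I := mul_comm _ _
  -- integrate the pointwise bound
  have main : ENNReal.ofReal C * ∫⁻ θ in Ioo j R, ENNReal.ofReal (w θ * ‖u θ‖ ^ 2)
      ≤ ENNReal.ofReal (R - j) * (ENNReal.ofReal (R - j) * I) := by
    rw [← lintegral_const_mul' _ _ ENNReal.ofReal_ne_top]
    calc ∫⁻ θ in Ioo j R, ENNReal.ofReal C * ENNReal.ofReal (w θ * ‖u θ‖ ^ 2)
        ≤ ∫⁻ _θ in Ioo j R, ENNReal.ofReal (R - j) * I :=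
          setLIntegral_mono' measurableSet_Ioo key
      _ = ENNReal.ofReal (R - j) * I * volume (Ioo j R) := setLIntegral_const _ _
      _ = ENNReal.ofReal (R - j) * (ENNReal.ofReal (R - j) * I) := by
          rw [Real.volume_Ioo]; ring
  -- conclude
  have hCne : ENNReal.ofReal C ≠ 0 := by
    simp [ENNReal.ofReal_eq_zero, not_le, hC]
  rw [ENNReal.ofReal_div_of_pos hC, div_eq_mul_inv, mul_right_comm, ← div_eq_mul_inv,
    ENNReal.le_div_iff_mul_le (Or.inl hCne) (Or.inl ENNReal.ofReal_ne_top)]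
  calc (∫⁻ θ in Ioo j R, ENNReal.ofReal (w θ * ‖u θ‖ ^ 2)) * ENNReal.ofReal C
      = ENNReal.ofReal C * ∫⁻ θ in Ioo j R, ENNReal.ofReal (w θ * ‖u θ‖ ^ 2) :=
        mul_comm _ _
    _ ≤ ENNReal.ofReal (R - j) * (ENNReal.ofReal (R - j) * I) := main
    _ = ENNReal.ofReal ((R - j) ^ 2) * I := by
        rw [sq (R - j), ENNReal.ofReal_mul (by linarith)]; ring
end

section
/- Let k ≥ 1 be an integer and ℓ_j > 0 (j ∈ ℕ) with R := ∑_j ℓ_j < ∞, and consider the regular rooted metric tree with branching number k and generation lengths ℓ_j. Let ρ_j ∈ (0, 1) (j ∈ ℕ) and C > 0 satisfy C·k^i·ρ_i ≤ k^j·ρ_j for all integers i ≤ j, let c ≥ 1, and let a_j, b_j : [0, ℓ_j] → (0, ∞) be measurable with ρ_j/c ≤ a_j(t) ≤ c·ρ_j and ρ_j/c ≤ b_j(t) ≤ c·ρ_j for all t. Then for every C¹ tree function u of finite support satisfying the Dirichlet condition u_∅(0) = 0 at the root, and for every j ∈ ℕ: ∑_{words w with |w| > j} ∫_0^{ℓ_{|w|}}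 |u_w(t)|²·b_{|w|}(t) dt ≤ (c²/C)·R(j)²·∑_{all words w} ∫_0^{ℓ_{|w|}} |u_w'(t)|²·a_{|w|}(t) dt, where R(j) := ∑_{i > j} ℓ_i. -/
open MeasureTheory Set

private lemma sq_add_le (x y μ ν A B : ℝ)
    (hμ : 0 < μ) (hν : 0 < ν) (h1 : x^2 ≤ μ * A) (h2 : y^2 ≤ ν * B) :
    (x + y)^2 ≤ (μ + ν) * (A + B) := by
  have key : μ*ν*(x+y)^2 ≤ (μ+ν)*(ν*x^2+μ*y^2) := by nlinarith [sq_nonneg (ν*x - μ*y)]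
  have h3 : ν*x^2 + μ*y^2 ≤ μ*ν*(A+B) := by
    nlinarith [mul_le_mul_of_nonneg_left h1 hν.le, mul_le_mul_of_nonneg_left h2 hμ.le]
  have hμν : 0 < μ*ν := mul_pos hμ hν
  nlinarith [mul_le_mul_of_nonneg_left h3 (add_pos hμ hν).le]

private lemma ofFn_snoc'' {k n : ℕ} (f : Fin n → Fin k) (i : Fin k) :
    List.ofFn (Fin.snoc f i) = List.ofFn f ++ [i] := by
  rw [List.ofFn_succ']
  simp [Fin.snoc_castSucc, Fin.snoc_last, List.concat_eq_append]

private lemma sum_ofFn_succ {k n : ℕ} {M : Type*} [AddCommMonoid M] (F : List (Fin k) → M) :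
    ∑ g : Fin (n+1) → Fin k, F (List.ofFn g)
      = ∑ f : Fin n → Fin k, ∑ i : Fin k, F (List.ofFn f ++ [i]) := by
  have hbij : Function.Bijective
      (fun p : (Fin n → Fin k) × Fin k => (Fin.snoc p.1 p.2 : Fin (n+1) → Fin k)) := by
    constructor
    · rintro ⟨f, i⟩ ⟨g, l⟩ h
      simp only [Prod.mk.injEq]
      constructor
      · funext t
        have := congrFun h t.castSucc
        simpa using this
      · have := congrFun h (Fin.last n)
        simpa using this
    · intro g
      refine ⟨⟨fun t => g t.castSucc, g (Fin.last n)⟩, ?_⟩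
      funext t
      induction t using Fin.lastCases with
      | last => simp
      | cast t => simp
  calc ∑ g : Fin (n+1) → Fin k, F (List.ofFn g)
      = ∑ p : (Fin n → Fin k) × Fin k, F (List.ofFn p.1 ++ [p.2]) :=
        (Fintype.sum_bijective _ hbij _ _ (fun p => by rw [ofFn_snoc''])).symm
    _ = _ := Fintype.sum_prod_type _

private lemma cs_interval (g : ℝ → ℝ) (t L : ℝ) (ht : t ≤ L)
    (h1 : IntervalIntegrable g volume t L)
    (h2 : IntervalIntegrable (fun s => (g s)^2) volume t L) :
    (∫ s in t..L, g s)^2 ≤ (L - t) * ∫ s in t..L, (g s)^2 := by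
  rcases eq_or_lt_of_le ht with h | h
  · simp [← h]
  · set Len := L - t with hLen
    have hLpos : 0 < Len := by simp [hLen]; linarith
    set lam := (∫ s in t..L, g s) / Len with hlam
    have key : 0 ≤ ∫ s in t..L, (g s - lam)^2 :=
      intervalIntegral.integral_nonneg ht (fun s _ => sq_nonneg _)
    have expand : (∫ s in t..L, (g s - lam)^2)
        = (∫ s in t..L, (g s)^2) - 2*lam*(∫ s in t..L, g s) + lam^2 * Len := by
      have e1 : ∀ s, (g s - lam)^2 = ((g s)^2 - (2*lam)*(g s)) + lam^2 := by intro s; ring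
      simp_rw [e1]
      rw [intervalIntegral.integral_add (h2.sub (h1.const_mul (2*lam))) intervalIntegrable_const,
        intervalIntegral.integral_sub h2 (h1.const_mul (2*lam)),
        intervalIntegral.integral_const_mul, intervalIntegral.integral_const]
      simp [hLen]
      ring
    rw [expand] at key
    have h2' : lam * Len = ∫ s in t..L, g s := by
      rw [hlam]; field_simp
    nlinarith [key, sq_nonneg lam]

noncomputable def Etree (k N : ℕ) (ρ : ℕ → ℝ) (c : ℝ) (Ir : List (Fin k) → ℝ)
    (w : List (Fin k)) : ℝ :=
  if _h : w.length < N then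
    (c / ρ w.length) * Ir w + (1 / (k : ℝ)) * ∑ i : Fin k, Etree k N ρ c Ir (w ++ [i])
  else 0
termination_by N - w.length
decreasing_by simp [List.length_append]; omega

/-- On a regular rooted metric tree with branching number `k` and generation
lengths `ℓ_j` of finite total length, encoded by indexing edges by finite words over `Fin k`:
if the weights `a_j, b_j` are comparable to `ρ_j` and `g·ρ = k^j·ρ_j` is quasi-monotone, then
for every finitely supported `C¹` tree function `u` vanishing at the root, the weighted
`L²`-mass beyond generation `j` is bounded by `(c²/C)·R(j)²` times the weighted Dirichlet
energy, where `R(j) = ∑_{i>j} ℓ_i`. -/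
theorem stmt2 (k : ℕ) (hk : 1 ≤ k)
    (ℓ : ℕ → ℝ) (hℓ : ∀ j, 0 < ℓ j) (hsum : Summable ℓ)
    (ρ : ℕ → ℝ) (hρ : ∀ j, ρ j ∈ Ioo (0 : ℝ) 1)
    (C : ℝ) (hC : 0 < C)
    (hmono : ∀ i j : ℕ, i ≤ j → C * ((k : ℝ) ^ i * ρ i) ≤ (k : ℝ) ^ j * ρ j)
    (c : ℝ) (hc : 1 ≤ c)
    (a b : ℕ → ℝ → ℝ)
    (ha_meas : ∀ j, Measurable (a j)) (hb_meas : ∀ j, Measurable (b j))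
    (ha : ∀ j, ∀ t ∈ Icc 0 (ℓ j), ρ j / c ≤ a j t ∧ a j t ≤ c * ρ j)
    (hb : ∀ j, ∀ t ∈ Icc 0 (ℓ j), ρ j / c ≤ b j t ∧ b j t ≤ c * ρ j)
    (u : List (Fin k) → ℝ → ℂ)
    (hu_C1 : ∀ w, ContDiffOn ℝ 1 (u w) (Icc 0 (ℓ w.length)))
    (hu_vertex : ∀ (w : List (Fin k)) (i : Fin k), u w (ℓ w.length) = u (w ++ [i]) 0)
    (hu_fin : {w : List (Fin k) | u w ≠ 0}.Finite)
    (hu_root : u [] 0 = 0)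
    (j : ℕ) :
    (∑' w : List (Fin k),
        if j < w.length then
          ∫⁻ t in Ioo 0 (ℓ w.length), ENNReal.ofReal (‖u w t‖ ^ 2 * b w.length t)
        else 0)
      ≤ ENNReal.ofReal (c ^ 2 / C * (∑' i : ℕ, if j < i then ℓ i else 0) ^ 2) *
        ∑' w : List (Fin k),
          ∫⁻ t in Ioo 0 (ℓ w.length),
            ENNReal.ofReal (‖deriv (u w) t‖ ^ 2 * a w.length t) := by
  classical
  have hkpos : (0:ℝ) < k := by exact_mod_cast hk
  have hcpos : (0:ℝ) < c := lt_of_lt_of_le one_pos hc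
  have hρpos : ∀ n, 0 < ρ n := fun n => (hρ n).1
  -- the cutoff generation
  set S := hu_fin.toFinset with hS
  set N : ℕ := S.sup List.length + 1 with hN
  have huN : ∀ w : List (Fin k), N ≤ w.length → u w = 0 := by
    intro w h
    by_contra hne
    have hw : w ∈ S := hu_fin.mem_toFinset.2 hne
    have := Finset.le_sup (f := List.length) hw
    omega
  -- tail sums
  set T : ℕ → ℝ := fun n => ∑' i, if n ≤ i then ℓ i else 0 with hT
  set Rj : ℝ := ∑' i, if j < i then ℓ i else 0 with hRj
  have hsumT : ∀ n : ℕ, Summable (fun i => if n ≤ i then ℓ i else 0) := by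
    intro n
    apply Summable.congr (hsum.indicator {i | n ≤ i})
    intro i
    simp [Set.indicator_apply]
  have hTnn0 : ∀ (n i : ℕ), 0 ≤ (if n ≤ i then ℓ i else 0 : ℝ) := by
    intro n i; split_ifs with h; exacts [(hℓ i).le, le_rfl]
  have hRnn0 : ∀ i : ℕ, 0 ≤ (if j < i then ℓ i else 0 : ℝ) := by
    intro i; split_ifs with h; exacts [(hℓ i).le, le_rfl]
  have hsumRj : Summable (fun i : ℕ => if j < i then ℓ i else 0) := by
    apply Summable.congr (hsumT (j+1))
    intro i
    exact if_congr (by omega) rfl rfl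
  have hRjT : Rj = T (j+1) := by
    rw [hRj, hT]
    exact tsum_congr fun i => if_congr (by omega) rfl rfl
  have hRj0 : 0 ≤ Rj := tsum_nonneg hRnn0
  have hTpos : ∀ n, 0 < T n := by
    intro n
    have h1 : ℓ n ≤ T n := by
      have := Summable.le_tsum (hsumT n) n (fun i _ => hTnn0 n i)
      simpa using this
    exact lt_of_lt_of_le (hℓ n) h1
  have hTrec : ∀ n, T n = ℓ n + T (n+1) := by
    intro n
    have h0 : ∀ i : ℕ, (if n ≤ i then ℓ i else 0 : ℝ)
        = (if i = n then ℓ i else 0) + (if n+1 ≤ i then ℓ i else 0) := by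
      intro i
      rcases lt_trichotomy i n with h|h|h
      · rw [if_neg (by omega), if_neg (by omega), if_neg (by omega)]; ring
      · rw [if_pos (by omega), if_pos (by omega), if_neg (by omega)]; ring
      · rw [if_pos (by omega), if_neg (by omega), if_pos (by omega)]; ring
    have hsingle : Summable (fun i : ℕ => if i = n then ℓ i else 0) :=
      summable_of_ne_finset_zero (s := {n}) (by intro i hi; simp at hi; simp [hi])
    calc T n = ∑' i, ((if i = n then ℓ i else 0) + (if n+1 ≤ i then ℓ i else 0)) :=
          tsum_congr h0
      _ = (∑' i, if i = n then ℓ i else 0) + ∑' i, (if n+1 ≤ i then ℓ i else 0) :=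
          Summable.tsum_add hsingle (hsumT (n+1))
      _ = ℓ n + T (n+1) := by
          congr 1
          rw [tsum_eq_single n (fun i hi => if_neg hi)]
          simp
  have hTmono : ∀ m n : ℕ, m ≤ n → T n ≤ T m := by
    intro m n hmn
    apply Summable.tsum_le_tsum _ (hsumT n) (hsumT m)
    intro i; by_cases h : n ≤ i
    · rw [if_pos h, if_pos (le_trans hmn h)]
    · rw [if_neg h]; exact hTnn0 m i
  -- the edge energies
  set Ir : List (Fin k) → ℝ :=
    fun w => ∫ t in (0:ℝ)..(ℓ w.length), ‖deriv (u w) t‖^2 * a w.length t with hIr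
  have hapos : ∀ n, ∀ t ∈ Icc (0:ℝ) (ℓ n), 0 < a n t := by
    intro n t ht
    exact lt_of_lt_of_le (div_pos (hρpos n) hcpos) (ha n t ht).1
  have hIrnonneg : ∀ w, 0 ≤ Ir w :=
    fun w => intervalIntegral.integral_nonneg (hℓ _).le
      (fun s hs => mul_nonneg (by positivity) (hapos _ s hs).le)
  have hdm : ∀ w : List (Fin k), Measurable (deriv (u w)) := fun w => measurable_deriv _
  have hMex : ∀ w : List (Fin k), ∃ M : ℝ, ∀ t ∈ Ioo (0:ℝ) (ℓ w.length), ‖deriv (u w) t‖ ≤ M := by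
    intro w
    obtain ⟨M, hM⟩ := (isCompact_Icc (a := (0:ℝ)) (b := ℓ w.length)).exists_bound_of_continuousOn
      ((hu_C1 w).continuousOn_derivWithin (uniqueDiffOn_Icc (hℓ _)) le_rfl)
    refine ⟨M, fun t ht => ?_⟩
    rw [← derivWithin_of_mem_nhds (Icc_mem_nhds ht.1 ht.2)]
    exact hM t (Ioo_subset_Icc_self ht)
  have hint_deriv : ∀ w : List (Fin k), IntegrableOn (deriv (u w)) (Ioc 0 (ℓ w.length)) := by
    intro w
    obtain ⟨M, hM⟩ := hMex w
    rw [integrableOn_Ioc_iff_integrableOn_Ioo]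
    apply Measure.integrableOn_of_bounded (M := M) (measure_Ioo_lt_top).ne
      ((hdm w).aestronglyMeasurable)
    exact (ae_restrict_iff' measurableSet_Ioo).2 (ae_of_all _ hM)
  have hint_sq : ∀ w : List (Fin k),
      IntegrableOn (fun s => ‖deriv (u w) s‖^2) (Ioc 0 (ℓ w.length)) := by
    intro w
    obtain ⟨M, hM⟩ := hMex w
    rw [integrableOn_Ioc_iff_integrableOn_Ioo]
    apply Measure.integrableOn_of_bounded (M := M^2) (measure_Ioo_lt_top).ne
      (((hdm w).norm.pow_const 2).aestronglyMeasurable)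
    refine (ae_restrict_iff' measurableSet_Ioo).2 (ae_of_all _ fun t ht => ?_)
    rw [Real.norm_of_nonneg (by positivity)]
    exact pow_le_pow_left₀ (norm_nonneg _) (hM t ht) 2
  have hint_sqa : ∀ w : List (Fin k),
      IntegrableOn (fun s => ‖deriv (u w) s‖^2 * a w.length s) (Ioc 0 (ℓ w.length)) := by
    intro w
    obtain ⟨M, hM⟩ := hMex w
    rw [integrableOn_Ioc_iff_integrableOn_Ioo]
    apply Measure.integrableOn_of_bounded (M := M^2 * (c * ρ w.length)) (measure_Ioo_lt_top).ne
      ((((hdm w).norm.pow_const 2).mul (ha_meas _)).aestronglyMeasurable)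
    refine (ae_restrict_iff' measurableSet_Ioo).2 (ae_of_all _ fun t ht => ?_)
    have ht' : t ∈ Icc (0:ℝ) (ℓ w.length) := Ioo_subset_Icc_self ht
    simp only [Pi.mul_apply]
    rw [Real.norm_of_nonneg (mul_nonneg (by positivity) (hapos _ t ht').le)]
    apply mul_le_mul (by
        exact pow_le_pow_left₀ (norm_nonneg _) (hM t ht) 2) (ha _ t ht').2
      (hapos _ t ht').le (by positivity)
  have hii : ∀ (w : List (Fin k)), ∀ t ∈ Icc (0:ℝ) (ℓ w.length),
      IntervalIntegrable (deriv (u w)) volume t (ℓ w.length) := fun w t ht =>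
    (intervalIntegrable_iff_integrableOn_Ioc_of_le ht.2).2
      ((hint_deriv w).mono_set (Ioc_subset_Ioc_left ht.1))
  have hii_sq : ∀ (w : List (Fin k)), ∀ t ∈ Icc (0:ℝ) (ℓ w.length),
      IntervalIntegrable (fun s => ‖deriv (u w) s‖^2) volume t (ℓ w.length) := fun w t ht =>
    (intervalIntegrable_iff_integrableOn_Ioc_of_le ht.2).2
      ((hint_sq w).mono_set (Ioc_subset_Ioc_left ht.1))
  have hii_sqa : ∀ (w : List (Fin k)), ∀ t ∈ Icc (0:ℝ) (ℓ w.length),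
      IntervalIntegrable (fun s => ‖deriv (u w) s‖^2 * a w.length s) volume t (ℓ w.length) :=
    fun w t ht =>
    (intervalIntegrable_iff_integrableOn_Ioc_of_le ht.2).2
      ((hint_sqa w).mono_set (Ioc_subset_Ioc_left ht.1))
  have hHD : ∀ (w : List (Fin k)), ∀ s ∈ Ioo (0:ℝ) (ℓ w.length),
      HasDerivAt (u w) (deriv (u w) s) s := by
    intro w s hs
    exact ((((hu_C1 w).differentiableOn one_ne_zero) s (Ioo_subset_Icc_self hs)).differentiableAt
      (Icc_mem_nhds hs.1 hs.2)).hasDerivAt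
  have hFTC : ∀ (w : List (Fin k)), ∀ t ∈ Icc (0:ℝ) (ℓ w.length),
      u w (ℓ w.length) - u w t = ∫ s in t..(ℓ w.length), deriv (u w) s := by
    intro w t ht
    exact (intervalIntegral.integral_eq_sub_of_hasDerivAt_of_le ht.2
      (((hu_C1 w).continuousOn).mono (Icc_subset_Icc ht.1 le_rfl))
      (fun s hs => hHD w s ⟨lt_of_le_of_lt ht.1 hs.1, hs.2⟩)
      (hii w t ht)).symm
  -- Cauchy-Schwarz per edge
  have hXbound : ∀ (w : List (Fin k)), ∀ t ∈ Icc (0:ℝ) (ℓ w.length),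
      ‖∫ s in t..(ℓ w.length), deriv (u w) s‖^2 ≤ ℓ w.length * ((c / ρ w.length) * Ir w) := by
    intro w t ht
    set n := w.length with hn
    have h1 : ‖∫ s in t..(ℓ n), deriv (u w) s‖ ≤ ∫ s in t..(ℓ n), ‖deriv (u w) s‖ :=
      intervalIntegral.norm_integral_le_integral_norm ht.2
    have h2 : (∫ s in t..(ℓ n), ‖deriv (u w) s‖)^2
        ≤ (ℓ n - t) * ∫ s in t..(ℓ n), ‖deriv (u w) s‖^2 :=
      cs_interval _ _ _ ht.2 ((hii w t ht).norm) (hii_sq w t ht)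
    have h3 : (∫ s in t..(ℓ n), ‖deriv (u w) s‖^2)
        ≤ (c / ρ n) * ∫ s in t..(ℓ n), ‖deriv (u w) s‖^2 * a n s := by
      rw [← intervalIntegral.integral_const_mul]
      apply intervalIntegral.integral_mono_on ht.2 (hii_sq w t ht)
        ((hii_sqa w t ht).const_mul _)
      intro s hs
      have hs' : s ∈ Icc (0:ℝ) (ℓ n) := ⟨le_trans ht.1 hs.1, hs.2⟩
      have haa := (ha n s hs').1
      have h1a : (1:ℝ) ≤ (c / ρ n) * a n s := by
        have : (c / ρ n) * (ρ n / c) = 1 := by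
          rw [div_mul_div_comm, mul_comm (ρ n) c]
          exact div_self (mul_pos hcpos (hρpos n)).ne'
        calc (1:ℝ) = (c / ρ n) * (ρ n / c) := this.symm
          _ ≤ (c / ρ n) * a n s := by
              apply mul_le_mul_of_nonneg_left haa (div_pos hcpos (hρpos n)).le
      calc ‖deriv (u w) s‖^2 = ‖deriv (u w) s‖^2 * 1 := (mul_one _).symm
        _ ≤ ‖deriv (u w) s‖^2 * ((c / ρ n) * a n s) := by
            apply mul_le_mul_of_nonneg_left h1a (by positivity)
        _ = (c / ρ n) * (‖deriv (u w) s‖^2 * a n s) := by ring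
    have h4 : (∫ s in t..(ℓ n), ‖deriv (u w) s‖^2 * a n s) ≤ Ir w := by
      apply intervalIntegral.integral_mono_interval ht.1 ht.2 le_rfl
      · exact (ae_restrict_iff' measurableSet_Ioc).2 (ae_of_all _
          (fun s hs => mul_nonneg (by positivity) (hapos n s (Ioc_subset_Icc_self hs)).le))
      · exact (intervalIntegrable_iff_integrableOn_Ioc_of_le (hℓ n).le).2 (hint_sqa w)
    have hA0 : 0 ≤ ∫ s in t..(ℓ n), ‖deriv (u w) s‖^2 :=
      intervalIntegral.integral_nonneg ht.2 (fun s _ => by positivity)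
    calc ‖∫ s in t..(ℓ n), deriv (u w) s‖^2
        ≤ (∫ s in t..(ℓ n), ‖deriv (u w) s‖)^2 := pow_le_pow_left₀ (norm_nonneg _) h1 2
      _ ≤ (ℓ n - t) * ∫ s in t..(ℓ n), ‖deriv (u w) s‖^2 := h2
      _ ≤ ℓ n * ∫ s in t..(ℓ n), ‖deriv (u w) s‖^2 := by
          apply mul_le_mul_of_nonneg_right (by linarith [ht.1]) hA0
      _ ≤ ℓ n * ((c / ρ n) * Ir w) := by
          apply mul_le_mul_of_nonneg_left _ (hℓ n).le
          exact le_trans h3 (mul_le_mul_of_nonneg_left h4 (div_pos hcpos (hρpos n)).le)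
  -- nonnegativity of E
  have hEnonneg : ∀ (d : ℕ) (w : List (Fin k)), N ≤ w.length + d →
      0 ≤ Etree k N ρ c Ir w := by
    intro d
    induction d with
    | zero =>
      intro w hw
      rw [Etree.eq_def, dif_neg (by omega)]
    | succ d ih =>
      intro w hw
      by_cases hlt : w.length < N
      · rw [Etree.eq_def, dif_pos hlt]
        have hs : 0 ≤ ∑ i : Fin k, Etree k N ρ c Ir (w ++ [i]) :=
          Finset.sum_nonneg fun i _ => ih (w ++ [i]) (by simp; omega)
        have := hIrnonneg w
        have hρn := hρpos w.length
        positivity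
      · rw [Etree.eq_def, dif_neg hlt]
  have hE0 : ∀ w : List (Fin k), 0 ≤ Etree k N ρ c Ir w :=
    fun w => hEnonneg N w (by omega)
  -- the key pointwise bound
  have star : ∀ (d : ℕ) (w : List (Fin k)), N ≤ w.length + d →
      ∀ t ∈ Icc (0:ℝ) (ℓ w.length), ‖u w t‖^2 ≤ T w.length * Etree k N ρ c Ir w := by
    intro d
    induction d with
    | zero =>
      intro w hw t ht
      have hE : Etree k N ρ c Ir w = 0 := by rw [Etree.eq_def, dif_neg (by omega)]
      rw [hE, huN w (by omega)]
      simp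
    | succ d ih =>
      intro w hw t ht
      by_cases hlt : w.length < N
      · have hErec : Etree k N ρ c Ir w = (c / ρ w.length) * Ir w
            + (1/(k:ℝ)) * ∑ i : Fin k, Etree k N ρ c Ir (w ++ [i]) := by
          rw [Etree.eq_def, dif_pos hlt]
        set n := w.length with hn
        have hYbound : ∀ i : Fin k, ‖u w (ℓ n)‖^2 ≤ T (n+1) * Etree k N ρ c Ir (w ++ [i]) := by
          intro i
          rw [hu_vertex w i]
          have h := ih (w ++ [i]) (by simp; omega) 0 ⟨le_rfl, (hℓ _).le⟩
          simpa using h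
        have hYav : ‖u w (ℓ n)‖^2
            ≤ T (n+1) * ((1/(k:ℝ)) * ∑ i : Fin k, Etree k N ρ c Ir (w ++ [i])) := by
          have hsumb : (k:ℝ) * ‖u w (ℓ n)‖^2
              ≤ T (n+1) * ∑ i : Fin k, Etree k N ρ c Ir (w ++ [i]) := by
            calc (k:ℝ) * ‖u w (ℓ n)‖^2 = ∑ _i : Fin k, ‖u w (ℓ n)‖^2 := by
                  rw [Finset.sum_const, Finset.card_univ, Fintype.card_fin, nsmul_eq_mul]
              _ ≤ ∑ i : Fin k, T (n+1) * Etree k N ρ c Ir (w ++ [i]) :=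
                  Finset.sum_le_sum (fun i _ => hYbound i)
              _ = T (n+1) * ∑ i : Fin k, Etree k N ρ c Ir (w ++ [i]) := by
                  rw [Finset.mul_sum]
          calc ‖u w (ℓ n)‖^2 = (1/(k:ℝ)) * ((k:ℝ) * ‖u w (ℓ n)‖^2) := by field_simp
            _ ≤ (1/(k:ℝ)) * (T (n+1) * ∑ i : Fin k, Etree k N ρ c Ir (w ++ [i])) := by
                apply mul_le_mul_of_nonneg_left hsumb (by positivity)
            _ = T (n+1) * ((1/(k:ℝ)) * ∑ i : Fin k, Etree k N ρ c Ir (w ++ [i])) := by ring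
        have hdecomp : u w t = u w (ℓ n) - ∫ s in t..(ℓ n), deriv (u w) s := by
          rw [← hFTC w t ht]; ring
        have hnorm : ‖u w t‖ ≤ ‖∫ s in t..(ℓ n), deriv (u w) s‖ + ‖u w (ℓ n)‖ := by
          rw [hdecomp]
          calc ‖u w (ℓ n) - ∫ s in t..(ℓ n), deriv (u w) s‖
              ≤ ‖u w (ℓ n)‖ + ‖∫ s in t..(ℓ n), deriv (u w) s‖ := norm_sub_le _ _
            _ = _ := by ring
        have hsq : ‖u w t‖^2 ≤ (‖∫ s in t..(ℓ n), deriv (u w) s‖ + ‖u w (ℓ n)‖)^2 :=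
          pow_le_pow_left₀ (norm_nonneg _) hnorm 2
        have main := sq_add_le ‖∫ s in t..(ℓ n), deriv (u w) s‖ ‖u w (ℓ n)‖
          (ℓ n) (T (n+1)) ((c / ρ n) * Ir w)
          ((1/(k:ℝ)) * ∑ i : Fin k, Etree k N ρ c Ir (w ++ [i]))
          (hℓ n) (hTpos (n+1)) (hXbound w t ht) hYav
        rw [hTrec n, hErec]
        exact le_trans hsq main
      · have hE : Etree k N ρ c Ir w = 0 := by rw [Etree.eq_def, dif_neg hlt]
        rw [hE, huN w (by omega)]
        simp
  have star' : ∀ (w : List (Fin k)), ∀ t ∈ Icc (0:ℝ) (ℓ w.length),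
      ‖u w t‖^2 ≤ T w.length * Etree k N ρ c Ir w :=
    fun w => star N w (by omega)
  have hTE0 : ∀ w : List (Fin k), 0 ≤ T w.length * Etree k N ρ c Ir w :=
    fun w => le_trans (by positivity) (star' w 0 ⟨le_rfl, (hℓ _).le⟩)
  -- generation sums
  set en : ℕ → ℝ := fun m => ∑ f : Fin m → Fin k, Etree k N ρ c Ir (List.ofFn f) with hen
  set isq : ℕ → ℝ := fun m => ∑ f : Fin m → Fin k, Ir (List.ofFn f) with hisq
  have hen0 : ∀ m, 0 ≤ en m := fun m => Finset.sum_nonneg fun f _ => hE0 _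
  have hisq0 : ∀ m, 0 ≤ isq m := fun m => Finset.sum_nonneg fun f _ => hIrnonneg _
  have en_zero : ∀ m, N ≤ m → en m = 0 := by
    intro m hm
    apply Finset.sum_eq_zero
    intro f _
    rw [Etree.eq_def, dif_neg (by simp only [List.length_ofFn]; omega)]
  have en_rec : ∀ m, m < N → en m = (c / ρ m) * isq m + (1/(k:ℝ)) * en (m+1) := by
    intro m hm
    have h1 : en m = ∑ f : Fin m → Fin k, ((c / ρ m) * Ir (List.ofFn f)
        + (1/(k:ℝ)) * ∑ i : Fin k, Etree k N ρ c Ir (List.ofFn f ++ [i])) := by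
      simp only [hen]
      apply Finset.sum_congr rfl
      intro f _
      rw [Etree.eq_def]
      simp only [List.length_ofFn]
      rw [dif_pos hm]
    rw [h1, Finset.sum_add_distrib]
    simp only [hen, hisq]
    conv_rhs => rw [sum_ofFn_succ (fun w => Etree k N ρ c Ir w),
      Finset.mul_sum Finset.univ (fun f : Fin m → Fin k => Ir (List.ofFn f)) ((c:ℝ) / ρ m),
      Finset.mul_sum Finset.univ
        (fun f : Fin m → Fin k => ∑ i : Fin k, Etree k N ρ c Ir (List.ofFn f ++ [i]))
        (1/(k:ℝ))]
  have en_closed : ∀ (d m : ℕ), N ≤ m + d →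
      en m = ∑ p ∈ Finset.Ico m N, (1/(k:ℝ))^(p - m) * ((c / ρ p) * isq p) := by
    intro d
    induction d with
    | zero =>
      intro m hm
      rw [en_zero m (by omega), Finset.Ico_eq_empty (by omega), Finset.sum_empty]
    | succ d ih =>
      intro m hm
      by_cases hmN : m < N
      · rw [en_rec m hmN, ih (m+1) (by omega),
          Finset.mul_sum (Finset.Ico (m+1) N)
            (fun p => (1/(k:ℝ))^(p - (m+1)) * ((c / ρ p) * isq p)) (1/(k:ℝ)),
          Finset.sum_eq_sum_Ico_succ_bot hmN
            (fun p => (1/(k:ℝ))^(p - m) * ((c / ρ p) * isq p))]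
        simp only [Nat.sub_self, pow_zero, one_mul]
        congr 1
        apply Finset.sum_congr rfl
        intro p hp
        have hp' : m + 1 ≤ p := (Finset.mem_Ico.1 hp).1
        have hps : p - m = (p - (m+1)) + 1 := by omega
        rw [hps, pow_succ]
        ring
      · rw [en_zero m (by omega), Finset.Ico_eq_empty (by omega), Finset.sum_empty]
  have en_closed' : ∀ m, en m = ∑ p ∈ Finset.Ico m N, (1/(k:ℝ))^(p - m) * ((c / ρ p) * isq p) :=
    fun m => en_closed N m (by omega)
  -- quasi-monotonicity coefficient bound
  have hcoef : ∀ m p : ℕ, m ≤ p → ρ m * ((1/(k:ℝ))^(p - m) * (c / ρ p)) ≤ c / C := by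
    intro m p hmp
    have h1 := hmono m p hmp
    have hρm := hρpos m
    have hρp := hρpos p
    have hkmn : (k:ℝ)^(p - m) * (k:ℝ)^m = (k:ℝ)^p := by
      rw [← pow_add]; congr 1; omega
    have h2 : C * ρ m ≤ (k:ℝ)^(p - m) * ρ p := by
      have hkm : (0:ℝ) < (k:ℝ)^m := by positivity
      rw [← mul_le_mul_iff_left₀ hkm]
      calc C * ρ m * (k:ℝ)^m = C * ((k:ℝ)^m * ρ m) := by ring
        _ ≤ (k:ℝ)^p * ρ p := h1
        _ = (k:ℝ)^(p - m) * ρ p * (k:ℝ)^m := by rw [← hkmn]; ring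
    have hkpow : (0:ℝ) < (k:ℝ)^(p - m) := by positivity
    have hexp : ρ m * ((1/(k:ℝ))^(p - m) * (c / ρ p))
        = (ρ m * c) / ((k:ℝ)^(p - m) * ρ p) := by
      have hkne : ((k:ℝ)^(p - m)) ≠ 0 := hkpow.ne'
      have hρpne : ρ p ≠ 0 := (hρpos p).ne'
      rw [one_div, inv_pow]
      field_simp
      try ring
    rw [hexp, div_le_div_iff₀ (by positivity) hC]
    nlinarith [h2, hcpos.le]
  set SI : ℝ := ∑ p ∈ Finset.range N, isq p with hSI
  have hSI0 : 0 ≤ SI := Finset.sum_nonneg fun p _ => hisq0 p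
  have hℓIco : ∑ m ∈ Finset.Ico (j+1) N, ℓ m ≤ Rj := by
    have he : ∑ m ∈ Finset.Ico (j+1) N, ℓ m
        = ∑ m ∈ Finset.Ico (j+1) N, (if j < m then ℓ m else 0) := by
      apply Finset.sum_congr rfl
      intro m hm
      rw [if_pos (by have := (Finset.mem_Ico.1 hm).1; omega)]
    rw [he, hRj]
    exact Summable.sum_le_tsum _ (fun i _ => hRnn0 i) hsumRj
  have key_scalar : ∑ m ∈ Finset.Ico (j+1) N, ρ m * ℓ m * en m ≤ (c/C) * Rj * SI := by
    have hstep : ∀ m ∈ Finset.Ico (j+1) N, ρ m * ℓ m * en m ≤ ℓ m * ((c/C) * SI) := by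
      intro m hm
      rw [en_closed' m]
      have e1 : ρ m * ℓ m * ∑ p ∈ Finset.Ico m N, (1/(k:ℝ))^(p - m) * ((c / ρ p) * isq p)
          = ℓ m * ∑ p ∈ Finset.Ico m N, (ρ m * ((1/(k:ℝ))^(p - m) * (c / ρ p))) * isq p := by
        rw [Finset.mul_sum, Finset.mul_sum]
        apply Finset.sum_congr rfl
        intro p _
        ring
      rw [e1]
      apply mul_le_mul_of_nonneg_left _ (hℓ m).le
      calc ∑ p ∈ Finset.Ico m N, (ρ m * ((1/(k:ℝ))^(p - m) * (c / ρ p))) * isq p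
          ≤ ∑ p ∈ Finset.Ico m N, (c/C) * isq p := by
            apply Finset.sum_le_sum
            intro p hp
            exact mul_le_mul_of_nonneg_right (hcoef m p (Finset.mem_Ico.1 hp).1) (hisq0 p)
        _ = (c/C) * ∑ p ∈ Finset.Ico m N, isq p := by rw [Finset.mul_sum]
        _ ≤ (c/C) * SI := by
            apply mul_le_mul_of_nonneg_left _ (by positivity)
            apply Finset.sum_le_sum_of_subset_of_nonneg
            · intro p hp
              rw [Finset.mem_range]
              exact (Finset.mem_Ico.1 hp).2
            · intro p _ _
              exact hisq0 p
    calc ∑ m ∈ Finset.Ico (j+1) N, ρ m * ℓ m * en m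
        ≤ ∑ m ∈ Finset.Ico (j+1) N, ℓ m * ((c/C) * SI) := Finset.sum_le_sum hstep
      _ = (∑ m ∈ Finset.Ico (j+1) N, ℓ m) * ((c/C) * SI) := by rw [← Finset.sum_mul]
      _ ≤ Rj * ((c/C) * SI) := by
          apply mul_le_mul_of_nonneg_right hℓIco
          exact mul_nonneg (by positivity) hSI0
      _ = (c/C) * Rj * SI := by ring
  -- the finite set of relevant words
  set Fn : ℕ → Finset (List (Fin k)) :=
    fun m => Finset.image (fun f : Fin m → Fin k => List.ofFn f) Finset.univ with hFn
  set Fs : Finset (List (Fin k)) := (Finset.range N).biUnion Fn with hFs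
  have hmemFn : ∀ w : List (Fin k), w.length < N → w ∈ Fs := by
    intro w hw
    apply Finset.mem_biUnion.2
    exact ⟨w.length, Finset.mem_range.2 hw,
      Finset.mem_image.2 ⟨w.get, Finset.mem_univ _, List.ofFn_get w⟩⟩
  have hlenFn : ∀ (m : ℕ) (w : List (Fin k)), w ∈ Fn m → w.length = m := by
    intro m w hw
    obtain ⟨f, _, rfl⟩ := Finset.mem_image.1 hw
    exact List.length_ofFn
  have hdisj : (↑(Finset.range N) : Set ℕ).PairwiseDisjoint Fn := by
    intro x _ y _ hxy
    refine Finset.disjoint_left.mpr ?_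
    intro w hwx hwy
    exact hxy ((hlenFn x w hwx).symm.trans (hlenFn y w hwy))
  have hLHS_eq : (∑' w : List (Fin k),
      if j < w.length then
        ∫⁻ t in Ioo 0 (ℓ w.length), ENNReal.ofReal (‖u w t‖ ^ 2 * b w.length t)
      else 0)
      = ∑ w ∈ Fs, (if j < w.length then
        ∫⁻ t in Ioo 0 (ℓ w.length), ENNReal.ofReal (‖u w t‖ ^ 2 * b w.length t)
      else 0) := by
    apply tsum_eq_sum
    intro w hw
    have hlen : N ≤ w.length := by
      by_contra h
      exact hw (hmemFn w (by omega))
    rw [huN w hlen]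
    simp
  -- per-edge bound in ENNReal
  have hterm : ∀ w : List (Fin k),
      (∫⁻ t in Ioo 0 (ℓ w.length), ENNReal.ofReal (‖u w t‖ ^ 2 * b w.length t))
      ≤ ENNReal.ofReal (c * ρ w.length * ℓ w.length
          * (T w.length * Etree k N ρ c Ir w)) := by
    intro w
    set n := w.length with hn
    have hb1 : ∀ t ∈ Ioo (0:ℝ) (ℓ n), ENNReal.ofReal (‖u w t‖ ^ 2 * b n t)
        ≤ ENNReal.ofReal ((T n * Etree k N ρ c Ir w) * (c * ρ n)) := by
      intro t ht
      apply ENNReal.ofReal_le_ofReal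
      have ht' : t ∈ Icc (0:ℝ) (ℓ n) := Ioo_subset_Icc_self ht
      exact mul_le_mul (star' w t ht') (hb n t ht').2
        ((div_pos (hρpos n) hcpos).le.trans (hb n t ht').1) (hTE0 w)
    calc (∫⁻ t in Ioo 0 (ℓ n), ENNReal.ofReal (‖u w t‖ ^ 2 * b n t))
        ≤ ∫⁻ _t in Ioo (0:ℝ) (ℓ n),
            ENNReal.ofReal ((T n * Etree k N ρ c Ir w) * (c * ρ n)) :=
          setLIntegral_mono measurable_const hb1
      _ = ENNReal.ofReal ((T n * Etree k N ρ c Ir w) * (c * ρ n)) * volume (Ioo (0:ℝ) (ℓ n)) :=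
          setLIntegral_const _ _
      _ = ENNReal.ofReal (c * ρ n * ℓ n * (T n * Etree k N ρ c Ir w)) := by
          rw [Real.volume_Ioo, ← ENNReal.ofReal_mul (mul_nonneg (hTE0 w) (mul_pos hcpos (hρpos n)).le)]
          congr 1
          ring
  -- right-hand side per edge
  have hRHSterm : ∀ w : List (Fin k), ENNReal.ofReal (Ir w)
      = ∫⁻ t in Ioo 0 (ℓ w.length), ENNReal.ofReal (‖deriv (u w) t‖ ^ 2 * a w.length t) := by
    intro w
    set n := w.length with hn
    have hi : IntegrableOn (fun t => ‖deriv (u w) t‖^2 * a n t) (Ioo 0 (ℓ n)) :=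
      (hint_sqa w).mono_set Ioo_subset_Ioc_self
    have hnn : 0 ≤ᵐ[volume.restrict (Ioo (0:ℝ) (ℓ n))] fun t => ‖deriv (u w) t‖^2 * a n t :=
      (ae_restrict_iff' measurableSet_Ioo).2 (ae_of_all _ fun t ht =>
        mul_nonneg (by positivity) (hapos n t (Ioo_subset_Icc_self ht)).le)
    rw [← ofReal_integral_eq_lintegral_ofReal hi hnn]
    congr 1
    show Ir w = _
    rw [hIr]
    simp only
    rw [intervalIntegral.integral_of_le (hℓ n).le, integral_Ioc_eq_integral_Ioo]
  have hRHS_ge : ENNReal.ofReal SI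
      ≤ ∑' w : List (Fin k),
          ∫⁻ t in Ioo 0 (ℓ w.length), ENNReal.ofReal (‖deriv (u w) t‖ ^ 2 * a w.length t) := by
    have h1 : ENNReal.ofReal SI = ∑ m ∈ Finset.range N, ENNReal.ofReal (isq m) := by
      rw [hSI]
      exact ENNReal.ofReal_sum_of_nonneg fun m _ => hisq0 m
    have h2 : ∀ m : ℕ, ENNReal.ofReal (isq m)
        = ∑ w ∈ Fn m, ∫⁻ t in Ioo 0 (ℓ w.length),
            ENNReal.ofReal (‖deriv (u w) t‖ ^ 2 * a w.length t) := by
      intro m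
      simp only [hFn]
      rw [Finset.sum_image (fun f _ g _ h => List.ofFn_injective h)]
      simp only [hisq]
      rw [ENNReal.ofReal_sum_of_nonneg fun f _ => hIrnonneg _]
      apply Finset.sum_congr rfl
      intro f _
      exact hRHSterm (List.ofFn f)
    calc ENNReal.ofReal SI = ∑ m ∈ Finset.range N, ENNReal.ofReal (isq m) := h1
      _ = ∑ m ∈ Finset.range N, ∑ w ∈ Fn m, ∫⁻ t in Ioo 0 (ℓ w.length),
            ENNReal.ofReal (‖deriv (u w) t‖ ^ 2 * a w.length t) := by
          exact Finset.sum_congr rfl fun m _ => h2 m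
      _ = ∑ w ∈ Fs, ∫⁻ t in Ioo 0 (ℓ w.length),
            ENNReal.ofReal (‖deriv (u w) t‖ ^ 2 * a w.length t) := by
          rw [hFs, Finset.sum_biUnion hdisj]
      _ ≤ _ := ENNReal.sum_le_tsum Fs
  -- assemble the left-hand side
  have hfil : (Finset.range N).filter (fun m => j < m) = Finset.Ico (j+1) N := by
    ext m
    simp only [Finset.mem_filter, Finset.mem_range, Finset.mem_Ico]
    omega
  have hfinal : ∑ m ∈ (Finset.range N).filter (fun m => j < m), c * ρ m * ℓ m * (T m * en m)
      ≤ c^2/C * Rj^2 * SI := by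
    rw [hfil]
    calc ∑ m ∈ Finset.Ico (j+1) N, c * ρ m * ℓ m * (T m * en m)
        ≤ ∑ m ∈ Finset.Ico (j+1) N, c * Rj * (ρ m * ℓ m * en m) := by
          apply Finset.sum_le_sum
          intro m hm
          have hmj : j+1 ≤ m := (Finset.mem_Ico.1 hm).1
          have hTm : T m ≤ Rj := by rw [hRjT]; exact hTmono (j+1) m hmj
          have e1 : c * ρ m * ℓ m * (T m * en m) = (c * (ρ m * ℓ m * en m)) * T m := by ring
          have e2 : c * Rj * (ρ m * ℓ m * en m) = (c * (ρ m * ℓ m * en m)) * Rj := by ring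
          rw [e1, e2]
          apply mul_le_mul_of_nonneg_left hTm
          exact mul_nonneg hcpos.le
            (mul_nonneg (mul_nonneg (hρpos m).le (hℓ m).le) (hen0 m))
      _ = c * Rj * ∑ m ∈ Finset.Ico (j+1) N, ρ m * ℓ m * en m := by rw [Finset.mul_sum]
      _ ≤ c * Rj * ((c/C) * Rj * SI) :=
          mul_le_mul_of_nonneg_left key_scalar (mul_nonneg hcpos.le hRj0)
      _ = c^2/C * Rj^2 * SI := by ring
  have hLHS2 : (∑' w : List (Fin k),
      if j < w.length then
        ∫⁻ t in Ioo 0 (ℓ w.length), ENNReal.ofReal (‖u w t‖ ^ 2 * b w.length t)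
      else 0)
      ≤ ENNReal.ofReal (c^2/C * Rj^2 * SI) := by
    rw [hLHS_eq, hFs, Finset.sum_biUnion hdisj]
    have hbound1 : ∀ m ∈ Finset.range N,
        (∑ w ∈ Fn m, if j < w.length then
          ∫⁻ t in Ioo 0 (ℓ w.length), ENNReal.ofReal (‖u w t‖ ^ 2 * b w.length t) else 0)
        ≤ if j < m then ENNReal.ofReal (c * ρ m * ℓ m * (T m * en m)) else 0 := by
      intro m _
      simp only [hFn]
      rw [Finset.sum_image (fun f _ g _ h => List.ofFn_injective h)]
      by_cases hj : j < m
      · rw [if_pos hj]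
        calc (∑ f : Fin m → Fin k, if j < (List.ofFn f).length then
              ∫⁻ t in Ioo 0 (ℓ (List.ofFn f).length),
                ENNReal.ofReal (‖u (List.ofFn f) t‖ ^ 2 * b (List.ofFn f).length t) else 0)
            ≤ ∑ f : Fin m → Fin k,
              ENNReal.ofReal (c * ρ m * ℓ m * (T m * Etree k N ρ c Ir (List.ofFn f))) := by
              apply Finset.sum_le_sum
              intro f _
              have h := hterm (List.ofFn f)
              simp only [List.length_ofFn] at h ⊢
              rw [if_pos hj]
              exact h
          _ = ENNReal.ofReal (∑ f : Fin m → Fin k,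
                c * ρ m * ℓ m * (T m * Etree k N ρ c Ir (List.ofFn f))) := by
              rw [ENNReal.ofReal_sum_of_nonneg]
              intro f _
              have h1 : 0 ≤ T m * Etree k N ρ c Ir (List.ofFn f) := by
                have := hTE0 (List.ofFn f)
                simpa only [List.length_ofFn] using this
              have hρm := (hρpos m).le
              have hℓm := (hℓ m).le
              have := hcpos.le
              positivity
          _ = ENNReal.ofReal (c * ρ m * ℓ m * (T m * en m)) := by
              congr 1
              simp only [hen, Finset.mul_sum]
      · rw [if_neg hj]
        have : ∀ f : Fin m → Fin k, (if j < (List.ofFn f).length then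
            ∫⁻ t in Ioo 0 (ℓ (List.ofFn f).length),
              ENNReal.ofReal (‖u (List.ofFn f) t‖ ^ 2 * b (List.ofFn f).length t) else 0)
            = 0 := by
          intro f
          simp only [List.length_ofFn]
          rw [if_neg hj]
        rw [Finset.sum_congr rfl (fun f _ => this f), Finset.sum_const, smul_zero]
    calc (∑ m ∈ Finset.range N, ∑ w ∈ Fn m, if j < w.length then
          ∫⁻ t in Ioo 0 (ℓ w.length), ENNReal.ofReal (‖u w t‖ ^ 2 * b w.length t) else 0)
        ≤ ∑ m ∈ Finset.range N,
            (if j < m then ENNReal.ofReal (c * ρ m * ℓ m * (T m * en m)) else 0) :=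
          Finset.sum_le_sum hbound1
      _ = ∑ m ∈ (Finset.range N).filter (fun m => j < m),
            ENNReal.ofReal (c * ρ m * ℓ m * (T m * en m)) := by
          rw [Finset.sum_filter]
      _ = ENNReal.ofReal (∑ m ∈ (Finset.range N).filter (fun m => j < m),
            c * ρ m * ℓ m * (T m * en m)) := by
          rw [ENNReal.ofReal_sum_of_nonneg]
          intro m _
          exact mul_nonneg (mul_nonneg (mul_nonneg hcpos.le (hρpos m).le) (hℓ m).le)
            (mul_nonneg (hTpos m).le (hen0 m))
      _ ≤ ENNReal.ofReal (c^2/C * Rj^2 * SI) := ENNReal.ofReal_le_ofReal hfinal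
  calc (∑' w : List (Fin k),
      if j < w.length then
        ∫⁻ t in Ioo 0 (ℓ w.length), ENNReal.ofReal (‖u w t‖ ^ 2 * b w.length t)
      else 0)
      ≤ ENNReal.ofReal (c^2/C * Rj^2 * SI) := hLHS2
    _ = ENNReal.ofReal (c^2/C * Rj^2) * ENNReal.ofReal SI := by
        rw [← ENNReal.ofReal_mul (mul_nonneg (div_nonneg (sq_nonneg c) hC.le) (sq_nonneg Rj))]
    _ ≤ ENNReal.ofReal (c^2/C * Rj^2) * ∑' w : List (Fin k),
          ∫⁻ t in Ioo 0 (ℓ w.length),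
            ENNReal.ofReal (‖deriv (u w) t‖ ^ 2 * a w.length t) :=
        mul_le_mul_right hRHS_ge _
end

section
/- Let R > 0. Let g : (0, R) → [1, ∞) be nondecreasing and measurable, let ρ : (0, R) → (0, 1) be measurable, and suppose there is C > 0 with C·g(s)ρ(s) ≤ g(t)ρ(t) whenever 0 < s ≤ t < R. Let c ≥ 1 and let α, β : (0, R) → (0, ∞) be measurable with ρ(t)/c ≤ α(t) ≤ c·ρ(t) and ρ(t)/c ≤ β(t) ≤ c·ρ(t) for all t, and let W : (0, R) → ℝ be measurable with W(t) ≥ 1 for all t. Let μ be the measure on (0, R) with density g·β with respect to Lebesgue measure. Then the set of (equivalence classes in L²(μ) of) continuously differentiable functions u : ℝ → ℂ with compact support contained in the open interval (0, R) satisfying ∫_0^R (|u'(t)|²·α(t) + W(t)·|u(t)|²·β(t))·g(t) dt ≤ 1 is totally bounded in L²(μ). -/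
set_option maxHeartbeats 1000000


open MeasureTheory Set


private lemma base_est (R : ℝ) (α β W g : ℝ → ℝ)
    (hα : Measurable α) (hβ : Measurable β) (hWm : Measurable W) (hgm : Measurable g)
    (u : ℝ → ℂ) (hu : ContDiff ℝ 1 u)
    (hE : ∫⁻ t in Ioo (0:ℝ) R,
        ENNReal.ofReal ((‖deriv u t‖ ^ 2 * α t + W t * ‖u t‖ ^ 2 * β t) * g t) ≤ 1)
    (ψ : ℝ → ℝ) (hψc : Continuous ψ) (hψ0 : ∀ w, 0 ≤ ψ w)
    (a b r₀ r : ℝ) (hr₀ : 0 ≤ r₀) (hr : 0 ≤ r) (hab : a ≤ b)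
    (hsub : Ioo a b ⊆ Ioo (0:ℝ) R)
    (hI0 : ∀ w ∈ Ioo a b, 0 ≤ (‖deriv u w‖ ^ 2 * α w + W w * ‖u w‖ ^ 2 * β w) * g w)
    (hpt : ∀ w ∈ Ioo a b,
      ψ w ≤ r₀ + r * ((‖deriv u w‖ ^ 2 * α w + W w * ‖u w‖ ^ 2 * β w) * g w)) :
    ∫ w in a..b, ψ w ≤ r₀ * (b - a) + r := by
  set I : ℝ → ℝ := fun t => (‖deriv u t‖ ^ 2 * α t + W t * ‖u t‖ ^ 2 * β t) * g t with hI
  have hImeas : Measurable I := by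
    have h1 : Continuous (deriv u) := hu.continuous_deriv le_rfl
    have h2 : Continuous u := hu.continuous
    exact ((((h1.norm.pow 2).measurable.mul hα).add
      ((hWm.mul ((h2.norm.pow 2).measurable)).mul hβ)).mul hgm)
  rw [intervalIntegral.integral_of_le hab, integral_Ioc_eq_integral_Ioo,
    integral_eq_lintegral_of_nonneg_ae (ae_of_all _ hψ0) hψc.aestronglyMeasurable.restrict]
  apply ENNReal.toReal_le_of_le_ofReal (by nlinarith)
  calc ∫⁻ w in Ioo a b, ENNReal.ofReal (ψ w)
      ≤ ∫⁻ w in Ioo a b, (ENNReal.ofReal r₀ + ENNReal.ofReal r * ENNReal.ofReal (I w)) := by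
        refine setLIntegral_mono (by measurability) (fun w hw => ?_)
        calc ENNReal.ofReal (ψ w) ≤ ENNReal.ofReal (r₀ + r * I w) :=
              ENNReal.ofReal_le_ofReal (hpt w hw)
          _ = _ := by
              rw [ENNReal.ofReal_add hr₀ (mul_nonneg hr (hI0 w hw)), ENNReal.ofReal_mul hr]
    _ = ENNReal.ofReal r₀ * volume (Ioo a b)
        + ENNReal.ofReal r * ∫⁻ w in Ioo a b, ENNReal.ofReal (I w) := by
        rw [lintegral_add_left measurable_const, setLIntegral_const,
          lintegral_const_mul' _ _ ENNReal.ofReal_ne_top]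
    _ ≤ ENNReal.ofReal r₀ * ENNReal.ofReal (b - a) + ENNReal.ofReal r * 1 := by
        gcongr
        · rw [Real.volume_Ioo]
        · exact le_trans (lintegral_mono_set hsub) hE
    _ = ENNReal.ofReal (r₀ * (b - a) + r) := by
        rw [← ENNReal.ofReal_mul hr₀, mul_one,
          ← ENNReal.ofReal_add (mul_nonneg hr₀ (by linarith)) hr]

private lemma sqnorm_eq (z : ℂ) : ‖z‖^2 = z.re^2 + z.im^2 := by
  rw [Complex.sq_norm, Complex.normSq_apply]; ring

/-- Key pointwise estimate `‖u t‖² ≤ c / (C g(t) ρ(t))`. -/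
private lemma key_est (R : ℝ) (hR : 0 < R)
    (g : ℝ → ℝ) (hg_meas : Measurable g)
    (hg_one : ∀ t ∈ Ioo (0 : ℝ) R, 1 ≤ g t)
    (ρ : ℝ → ℝ)
    (hρ : ∀ t ∈ Ioo (0 : ℝ) R, ρ t ∈ Ioo (0 : ℝ) 1)
    (C : ℝ) (hC : 0 < C)
    (hmono : ∀ s t : ℝ, 0 < s → s ≤ t → t < R → C * (g s * ρ s) ≤ g t * ρ t)
    (c : ℝ) (hc : 1 ≤ c)
    (α β : ℝ → ℝ) (hα_meas : Measurable α) (hβ_meas : Measurable β)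
    (hα : ∀ t ∈ Ioo (0 : ℝ) R, ρ t / c ≤ α t ∧ α t ≤ c * ρ t)
    (hβ : ∀ t ∈ Ioo (0 : ℝ) R, ρ t / c ≤ β t ∧ β t ≤ c * ρ t)
    (W : ℝ → ℝ) (hW_meas : Measurable W) (hW : ∀ t ∈ Ioo (0 : ℝ) R, 1 ≤ W t)
    (u : ℝ → ℂ) (hu : ContDiff ℝ 1 u) (hsupp : tsupport u ⊆ Ioo (0 : ℝ) R)
    (hE : ∫⁻ t in Ioo (0:ℝ) R,
        ENNReal.ofReal ((‖deriv u t‖ ^ 2 * α t + W t * ‖u t‖ ^ 2 * β t) * g t) ≤ 1)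
    (t : ℝ) (ht : t ∈ Ioo (0:ℝ) R) :
    ‖u t‖^2 ≤ c / (C * (g t * ρ t)) := by
  have hd : ∀ x, HasDerivAt u (deriv u x) x := fun x => (hu.differentiable one_ne_zero x).hasDerivAt
  have hdc : Continuous (deriv u) := hu.continuous_deriv le_rfl
  have huc : Continuous u := hu.continuous
  set φ : ℝ → ℝ := fun s => (u s).re^2 + (u s).im^2 with hφ
  set φ' : ℝ → ℝ := fun s =>
    2*(u s).re*(deriv u s).re + 2*(u s).im*(deriv u s).im with hφ'
  have hre : ∀ x, HasDerivAt (fun y => (u y).re) ((deriv u x).re) x := fun x => by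
    have h := Complex.reCLM.hasFDerivAt.comp_hasDerivAt x (hd x); simp at h; exact h
  have him : ∀ x, HasDerivAt (fun y => (u y).im) ((deriv u x).im) x := fun x => by
    have h := Complex.imCLM.hasFDerivAt.comp_hasDerivAt x (hd x); simp at h; exact h
  have hφd : ∀ x, HasDerivAt φ (φ' x) x := by
    intro x
    have h := ((hre x).pow 2).add ((him x).pow 2)
    have h' : HasDerivAt φ (((2:ℕ):ℝ) * (u x).re ^ (2 - 1) * (deriv u x).re
      + ((2:ℕ):ℝ) * (u x).im ^ (2 - 1) * (deriv u x).im) x := h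
    convert h' using 1
    first
    | (simp [hφ']; ring)
    | simp [hφ']
  have hφ'c : Continuous φ' := by
    apply Continuous.add <;> apply Continuous.mul
    · exact continuous_const.mul (Complex.continuous_re.comp huc)
    · exact Complex.continuous_re.comp hdc
    · exact continuous_const.mul (Complex.continuous_im.comp huc)
    · exact Complex.continuous_im.comp hdc
  have hu0 : u R = 0 := by
    apply image_eq_zero_of_notMem_tsupport
    intro h
    exact absurd (hsupp h).2 (lt_irrefl R)
  have hint : IntervalIntegrable φ' volume t R := hφ'c.intervalIntegrable _ _
  have hFTC : ∫ x in t..R, φ' x = φ R - φ t :=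
    intervalIntegral.integral_eq_sub_of_hasDerivAt (fun x _ => hφd x) hint
  have hφR : φ R = 0 := by simp [hφ, hu0]
  set ψ : ℝ → ℝ := fun s => 2*(‖deriv u s‖*‖u s‖) with hψdef
  have hψc : Continuous ψ := continuous_const.mul (hdc.norm.mul huc.norm)
  have hψ0 : ∀ w, 0 ≤ ψ w := fun w => by positivity
  have hψint : IntervalIntegrable ψ volume t R := hψc.intervalIntegrable _ _
  have hφψ : ∀ s, -φ' s ≤ ψ s := by
    intro s
    have hA2 := sqnorm_eq (u s)
    have hB2 := sqnorm_eq (deriv u s)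
    have hA : (0:ℝ) ≤ ‖u s‖ := norm_nonneg _
    have hB : (0:ℝ) ≤ ‖deriv u s‖ := norm_nonneg _
    simp only [hφ', hψdef, neg_add]
    nlinarith [sq_nonneg ((u s).re*(deriv u s).im - (u s).im*(deriv u s).re),
      sq_nonneg (‖u s‖*‖deriv u s‖ + (u s).re*(deriv u s).re + (u s).im*(deriv u s).im),
      mul_nonneg hA hB]
  have h1 : φ t ≤ ∫ x in t..R, ψ x := by
    have : φ t = ∫ x in t..R, (-φ' x) := by
      rw [intervalIntegral.integral_neg, hFTC, hφR]; ring
    rw [this]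
    exact intervalIntegral.integral_mono_on ht.2.le hint.neg hψint (fun x _ => hφψ x)
  set lam : ℝ := c / (C * (g t * ρ t)) with hlam
  have hgρt : 0 < g t * ρ t := by
    have h1 := hg_one t ht
    have h2 := (hρ t ht).1
    positivity
  have hlam0 : 0 ≤ lam := by positivity
  have h2 : ∫ x in t..R, ψ x ≤ 0 * (R - t) + lam := by
    apply base_est R α β W g hα_meas hβ_meas hW_meas hg_meas u hu hE ψ hψc hψ0 t R 0 lam
      le_rfl hlam0 ht.2.le (fun w hw => ⟨lt_trans ht.1 hw.1, hw.2⟩)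
    · intro w hw
      have hwI : w ∈ Ioo (0:ℝ) R := ⟨lt_trans ht.1 hw.1, hw.2⟩
      have h1 := hg_one w hwI
      have h2 := (hρ w hwI).1
      have h3 := (hα w hwI).1
      have h4 := (hβ w hwI).1
      have h5 := hW w hwI
      have hα0 : 0 ≤ α w := le_trans (by positivity) h3
      have hβ0 : 0 ≤ β w := le_trans (by positivity) h4
      positivity
    · intro w hw
      have hwI : w ∈ Ioo (0:ℝ) R := ⟨lt_trans ht.1 hw.1, hw.2⟩
      have hg1 := hg_one w hwI
      have hρw := (hρ w hwI).1
      have hαl := (hα w hwI).1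
      have hβl := (hβ w hwI).1
      have hWl := hW w hwI
      have hm := hmono t w ht.1 hw.1.le hw.2
      have hca : ρ w ≤ c * α w := by
        rw [div_le_iff₀ (by linarith)] at hαl; linarith [hαl]
      have hcb : ρ w ≤ c * β w := by
        rw [div_le_iff₀ (by linarith)] at hβl; linarith [hβl]
      have hα0 : 0 ≤ α w := by nlinarith
      have hβ0 : 0 ≤ β w := by nlinarith
      -- q = α w * g w, p = W w * β w * g w ; show 1 ≤ lam * q and 1 ≤ lam * p
      have hq : 1 ≤ lam * (α w * g w) := by
        rw [hlam, div_mul_eq_mul_div, le_div_iff₀ (by positivity), one_mul]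
        nlinarith
      have hg0 : (0:ℝ) ≤ g w := by linarith
      have hp : 1 ≤ lam * (W w * (β w * g w)) := by
        rw [hlam, div_mul_eq_mul_div, le_div_iff₀ (by positivity), one_mul]
        nlinarith [mul_le_mul_of_nonneg_left hcb hg0,
          mul_le_mul_of_nonneg_right hWl (by positivity : (0:ℝ) ≤ c * (β w * g w))]
      set a := ‖deriv u w‖
      set b := ‖u w‖
      have ha : 0 ≤ a := norm_nonneg _
      have hb : 0 ≤ b := norm_nonneg _
      have e1 : a^2 * 1 ≤ a^2 * (lam * (α w * g w)) :=
        mul_le_mul_of_nonneg_left hq (sq_nonneg a)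
      have e2 : b^2 * 1 ≤ b^2 * (lam * (W w * (β w * g w))) :=
        mul_le_mul_of_nonneg_left hp (sq_nonneg b)
      have e3 : 2*(a*b) ≤ a^2 + b^2 := by nlinarith [sq_nonneg (a-b)]
      calc ψ w = 2*(a*b) := rfl
        _ ≤ a^2 * (lam * (α w * g w)) + b^2 * (lam * (W w * (β w * g w))) := by nlinarith
        _ = 0 + lam * ((a ^ 2 * α w + W w * b ^ 2 * β w) * g w) := by ring
  have : ‖u t‖^2 = φ t := sqnorm_eq (u t)
  rw [this]
  calc φ t ≤ ∫ x in t..R, ψ x := h1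
    _ ≤ 0 * (R - t) + lam := h2
    _ = lam := by ring

private lemma mod_est (R : ℝ) (hR : 0 < R)
    (g : ℝ → ℝ) (hg_meas : Measurable g)
    (hg_one : ∀ t ∈ Ioo (0 : ℝ) R, 1 ≤ g t)
    (ρ : ℝ → ℝ)
    (hρ : ∀ t ∈ Ioo (0 : ℝ) R, ρ t ∈ Ioo (0 : ℝ) 1)
    (C : ℝ) (hC : 0 < C)
    (hmono : ∀ s t : ℝ, 0 < s → s ≤ t → t < R → C * (g s * ρ s) ≤ g t * ρ t)
    (c : ℝ) (hc : 1 ≤ c)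
    (α β : ℝ → ℝ) (hα_meas : Measurable α) (hβ_meas : Measurable β)
    (hα : ∀ t ∈ Ioo (0 : ℝ) R, ρ t / c ≤ α t ∧ α t ≤ c * ρ t)
    (hβ : ∀ t ∈ Ioo (0 : ℝ) R, ρ t / c ≤ β t ∧ β t ≤ c * ρ t)
    (W : ℝ → ℝ) (hW_meas : Measurable W) (hW : ∀ t ∈ Ioo (0 : ℝ) R, 1 ≤ W t)
    (u : ℝ → ℂ) (hu : ContDiff ℝ 1 u)
    (hE : ∫⁻ t in Ioo (0:ℝ) R,
        ENNReal.ofReal ((‖deriv u t‖ ^ 2 * α t + W t * ‖u t‖ ^ 2 * β t) * g t) ≤ 1)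
    (δ' : ℝ) (hδ'0 : 0 < δ') (η : ℝ) (hη : 0 < η)
    (s t : ℝ) (hs : δ' ≤ s) (hst : s ≤ t) (htR : t < R) :
    ‖u t - u s‖ ≤ 1/(2*η) * (t - s) + η * (c/(C*(g δ' * ρ δ')))/2 := by
  have hd : ∀ x, HasDerivAt u (deriv u x) x := fun x => (hu.differentiable one_ne_zero x).hasDerivAt
  have hdc : Continuous (deriv u) := hu.continuous_deriv le_rfl
  have hδ'R : δ' < R := lt_of_le_of_lt (le_trans hs hst) htR
  have hδ'I : δ' ∈ Ioo (0:ℝ) R := ⟨hδ'0, hδ'R⟩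
  have hgρδ : 0 < g δ' * ρ δ' := by
    have h1 := hg_one δ' hδ'I
    have h2 := (hρ δ' hδ'I).1
    positivity
  set lam : ℝ := c / (C * (g δ' * ρ δ')) with hlam
  have hlam0 : 0 ≤ lam := by positivity
  have hsub : u t - u s = ∫ x in s..t, deriv u x :=
    (intervalIntegral.integral_eq_sub_of_hasDerivAt (fun x _ => hd x)
      (hdc.intervalIntegrable _ _)).symm
  rw [hsub]
  calc ‖∫ x in s..t, deriv u x‖ ≤ ∫ x in s..t, ‖deriv u x‖ :=
        intervalIntegral.norm_integral_le_integral_norm hst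
    _ ≤ 1/(2*η) * (t - s) + η * lam/2 := by
        apply base_est R α β W g hα_meas hβ_meas hW_meas hg_meas u hu hE _
          hdc.norm (fun w => norm_nonneg _) s t (1/(2*η)) (η*lam/2)
          (by positivity) (by positivity) hst
          (fun w hw => ⟨lt_of_lt_of_le hδ'0 (le_trans hs hw.1.le), lt_trans hw.2 htR⟩)
        · intro w hw
          have hwI : w ∈ Ioo (0:ℝ) R :=
            ⟨lt_of_lt_of_le hδ'0 (le_trans hs hw.1.le), lt_trans hw.2 htR⟩
          have h1 := hg_one w hwI
          have h2 := (hρ w hwI).1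
          have h3 := (hα w hwI).1
          have h4 := (hβ w hwI).1
          have h5 := hW w hwI
          have hα0 : 0 ≤ α w := le_trans (by positivity) h3
          have hβ0 : 0 ≤ β w := le_trans (by positivity) h4
          positivity
        · intro w hw
          have hwI : w ∈ Ioo (0:ℝ) R :=
            ⟨lt_of_lt_of_le hδ'0 (le_trans hs hw.1.le), lt_trans hw.2 htR⟩
          have hg1 := hg_one w hwI
          have hρw := (hρ w hwI).1
          have hαl := (hα w hwI).1
          have hβl := (hβ w hwI).1
          have hWl := hW w hwI
          have hm := hmono δ' w hδ'0 (le_trans hs hw.1.le) hwI.2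
          have hca : ρ w ≤ c * α w := by
            rw [div_le_iff₀ (by linarith)] at hαl; linarith [hαl]
          have hα0 : 0 ≤ α w := by nlinarith
          have hβ0 : 0 ≤ β w := le_trans (by positivity) hβl
          set a := ‖deriv u w‖ with hadef
          have ha : 0 ≤ a := norm_nonneg _
          have hq : 1 ≤ lam * (α w * g w) := by
            rw [hlam, div_mul_eq_mul_div, le_div_iff₀ (by positivity), one_mul]
            nlinarith
          have haux : a ≤ 1/(2*η) + η/2 * a^2 := by
            have h2 : a - η/2*a^2 ≤ 1/(2*η) := by
              rw [le_div_iff₀ (by positivity)]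
              nlinarith [sq_nonneg (η*a-1)]
            linarith
          have hIq : a^2 * (α w * g w) ≤ (a ^ 2 * α w + W w * ‖u w‖ ^ 2 * β w) * g w := by
            have h0 : 0 ≤ W w * ‖u w‖ ^ 2 * β w := by positivity
            nlinarith [h0]
          have hquad : a^2 ≤ lam * ((a ^ 2 * α w + W w * ‖u w‖ ^ 2 * β w) * g w) := by
            calc a^2 = a^2 * 1 := by ring
              _ ≤ a^2 * (lam * (α w * g w)) := mul_le_mul_of_nonneg_left hq (sq_nonneg a)
              _ = lam * (a^2 * (α w * g w)) := by ring
              _ ≤ _ := mul_le_mul_of_nonneg_left hIq hlam0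
          calc a ≤ 1/(2*η) + η/2 * a^2 := haux
            _ ≤ 1/(2*η) + η*lam/2 * ((a ^ 2 * α w + W w * ‖u w‖ ^ 2 * β w) * g w) := by
                nlinarith [hquad]
/-- On `(0,R)` with a nondecreasing branch-counting weight `g ≥ 1`, a
weight `ρ ∈ (0,1)` such that `g·ρ` is quasi-monotone, weights `α, β` comparable with `ρ`,
and a potential `W ≥ 1`, the set of (classes in `L²(g·β dt)` of) smooth compactly supported
functions in `(0,R)` with form energy `∫ (|u'|²·α + W·|u|²·β)·g dt ≤ 1` is totally bounded
in `L²(g·β dt)`. -/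
theorem stmt3 (R : ℝ) (hR : 0 < R)
    (g : ℝ → ℝ) (hg_meas : Measurable g)
    (hg_mono : ∀ s t : ℝ, 0 < s → s ≤ t → t < R → g s ≤ g t)
    (hg_one : ∀ t ∈ Ioo (0 : ℝ) R, 1 ≤ g t)
    (ρ : ℝ → ℝ) (hρ_meas : Measurable ρ)
    (hρ : ∀ t ∈ Ioo (0 : ℝ) R, ρ t ∈ Ioo (0 : ℝ) 1)
    (C : ℝ) (hC : 0 < C)
    (hmono : ∀ s t : ℝ, 0 < s → s ≤ t → t < R → C * (g s * ρ s) ≤ g t * ρ t)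
    (c : ℝ) (hc : 1 ≤ c)
    (α β : ℝ → ℝ) (hα_meas : Measurable α) (hβ_meas : Measurable β)
    (hα : ∀ t ∈ Ioo (0 : ℝ) R, ρ t / c ≤ α t ∧ α t ≤ c * ρ t)
    (hβ : ∀ t ∈ Ioo (0 : ℝ) R, ρ t / c ≤ β t ∧ β t ≤ c * ρ t)
    (W : ℝ → ℝ) (hW_meas : Measurable W) (hW : ∀ t ∈ Ioo (0 : ℝ) R, 1 ≤ W t) :
    TotallyBounded
      { f : Lp ℂ 2 ((volume.restrict (Ioo (0 : ℝ) R)).withDensity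
            fun t => ENNReal.ofReal (g t * β t)) |
        ∃ u : ℝ → ℂ, ContDiff ℝ 1 u ∧ tsupport u ⊆ Ioo (0 : ℝ) R ∧
          (f : ℝ → ℂ) =ᵐ[(volume.restrict (Ioo (0 : ℝ) R)).withDensity
              fun t => ENNReal.ofReal (g t * β t)] u ∧
          ∫⁻ t in Ioo (0 : ℝ) R,
              ENNReal.ofReal ((‖deriv u t‖ ^ 2 * α t + W t * ‖u t‖ ^ 2 * β t) * g t) ≤ 1 } := by
  classical
  set μ := ((volume.restrict (Ioo (0 : ℝ) R)).withDensity
      fun t => ENNReal.ofReal (g t * β t)) with hμdef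
  set S : Set (Lp ℂ 2 μ) :=
    { f : Lp ℂ 2 μ |
        ∃ u : ℝ → ℂ, ContDiff ℝ 1 u ∧ tsupport u ⊆ Ioo (0 : ℝ) R ∧
          (f : ℝ → ℂ) =ᵐ[μ] u ∧
          ∫⁻ t in Ioo (0 : ℝ) R,
              ENNReal.ofReal ((‖deriv u t‖ ^ 2 * α t + W t * ‖u t‖ ^ 2 * β t) * g t) ≤ 1 }
    with hSdef
  have hc0 : (0 : ℝ) < c := lt_of_lt_of_le one_pos hc
  apply Metric.totallyBounded_of_finite_discretization
  intro ε hε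
  have hex : ∀ x : ↥S, ∃ u : ℝ → ℂ, ContDiff ℝ 1 u ∧ tsupport u ⊆ Ioo (0 : ℝ) R ∧
      (⇑(x : Lp ℂ 2 μ) =ᵐ[μ] u) ∧
      ∫⁻ t in Ioo (0 : ℝ) R,
          ENNReal.ofReal ((‖deriv u t‖ ^ 2 * α t + W t * ‖u t‖ ^ 2 * β t) * g t) ≤ 1 :=
    fun x => x.2
  choose rep hrep1 hrep2 hrep3 hrep4 using hex
  -- constants
  set K4 : ℝ := 4 * c ^ 2 / C with hK4def
  have hK4 : 0 < K4 := by positivity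
  set δ : ℝ := min (R / 4) (ε ^ 2 / (32 * K4)) with hδdef
  have hδ0 : 0 < δ := lt_min (by positivity) (by positivity)
  have hδR4 : δ ≤ R / 4 := min_le_left _ _
  have hδε : δ ≤ ε ^ 2 / (32 * K4) := min_le_right _ _
  have hδI : δ ∈ Ioo (0 : ℝ) R := ⟨hδ0, by linarith⟩
  have hRδI : R - δ ∈ Ioo (0 : ℝ) R := ⟨by linarith, by linarith⟩
  have hgδ1 : 1 ≤ g δ := hg_one δ hδI
  have hρδ0 : 0 < ρ δ := (hρ δ hδI).1
  have hgδ0 : (0:ℝ) < g δ := by linarith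
  have hgρδ : 0 < g δ * ρ δ := by positivity
  have hgRδ1 : 1 ≤ g (R - δ) := hg_one _ hRδI
  have hgRδ0 : (0:ℝ) < g (R - δ) := by linarith
  set Gc : ℝ := g (R - δ) * c * R with hGcdef
  have hGc : 0 < Gc := by positivity
  set G : ℝ := Gc + 1 with hGdef
  have hG0 : 0 < G := by positivity
  have hsqrtG : 0 < Real.sqrt G := Real.sqrt_pos.mpr hG0
  set D0 : ℝ := ε / (4 * Real.sqrt G) with hD0def
  have hD0 : 0 < D0 := by positivity
  set ω : ℝ := D0 / 4 with hωdef
  have hω : 0 < ω := by positivity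
  set lamδ : ℝ := c / (C * (g δ * ρ δ)) with hlamδdef
  have hlamδ : 0 < lamδ := by positivity
  set η : ℝ := ω / lamδ with hηdef
  have hη : 0 < η := by positivity
  set n : ℕ := ⌈R * lamδ / ω ^ 2⌉₊ + 1 with hndef
  have hn0 : 0 < n := Nat.succ_pos _
  have hn0' : (0:ℝ) < (n:ℝ) := by exact_mod_cast hn0
  have hnR : R * lamδ / ω ^ 2 ≤ (n : ℝ) := by
    refine le_trans (Nat.le_ceil _) ?_
    exact_mod_cast Nat.le_succ _
  have hR2δ : 0 < R - 2 * δ := by linarith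
  set h : ℝ := (R - 2 * δ) / n with hhdef
  have hh0 : 0 < h := by positivity
  have hnh : δ + (n : ℝ) * h = R - δ := by
    rw [hhdef]; field_simp; ring
  have hhω : h ≤ ω ^ 2 / lamδ := by
    rw [hhdef, div_le_div_iff₀ hn0' hlamδ]
    have h1 : R * lamδ ≤ (n : ℝ) * ω ^ 2 := by
      rw [div_le_iff₀ (by positivity)] at hnR; linarith
    nlinarith [hlamδ.le, hδ0.le]
  set M : ℝ := Real.sqrt (c / (C * (C * (g δ * ρ δ)))) with hMdef
  have hM0 : 0 ≤ M := Real.sqrt_nonneg _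
  -- grid points lie in (0,R)
  have hgridI : ∀ i : Fin (n + 1), δ + (i : ℕ) * h ∈ Ioo (0 : ℝ) R := by
    intro i
    have h1 : ((i : ℕ) : ℝ) ≤ (n : ℝ) := by exact_mod_cast Fin.is_le i
    constructor
    · have h2 : (0:ℝ) ≤ ((i : ℕ) : ℝ) * h := by positivity
      linarith
    · have h2 : ((i : ℕ) : ℝ) * h ≤ (n : ℝ) * h := mul_le_mul_of_nonneg_right h1 hh0.le
      linarith [hnh]
  -- the discretization map
  set Φ : ↥S → (Fin (n + 1) → ℂ) := fun x i => rep x (δ + (i : ℕ) * h) with hΦdef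
  have hΦmem : ∀ x : ↥S, Φ x ∈ Metric.closedBall (0 : Fin (n + 1) → ℂ) M := by
    intro x
    rw [mem_closedBall_zero_iff, pi_norm_le_iff_of_nonneg hM0]
    intro i
    have hkey := key_est R hR g hg_meas hg_one ρ hρ C hC hmono c hc α β hα_meas hβ_meas
      hα hβ W hW_meas hW (rep x) (hrep1 x) (hrep2 x) (hrep4 x) _ (hgridI i)
    have hpt := hgridI i
    have hgpt1 : 1 ≤ g (δ + (i : ℕ) * h) := hg_one _ hpt
    have hρpt0 : 0 < ρ (δ + (i : ℕ) * h) := (hρ _ hpt).1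
    have hm := hmono δ (δ + (i : ℕ) * h) hδ0
      (le_add_of_nonneg_right (by positivity)) hpt.2
    have hden : C * (C * (g δ * ρ δ)) ≤ C * (g (δ + (i:ℕ)*h) * ρ (δ + (i:ℕ)*h)) := by
      nlinarith [hC.le]
    have h2 : c / (C * (g (δ + (i:ℕ)*h) * ρ (δ + (i:ℕ)*h))) ≤ c / (C * (C * (g δ * ρ δ))) :=
      div_le_div_of_nonneg_left hc0.le (by positivity) hden
    rw [hMdef, show ‖Φ x i‖ = ‖rep x (δ + (i:ℕ)*h)‖ from rfl]
    exact Real.le_sqrt_of_sq_le (le_trans hkey h2)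
  have hcomp : IsCompact (Metric.closedBall (0 : Fin (n + 1) → ℂ) M) :=
    isCompact_closedBall _ _
  obtain ⟨T, hTfin, hTsub⟩ :=
    Metric.totallyBounded_iff.mp hcomp.totallyBounded (D0 / 8) (by positivity)
  haveI : Fintype ↥T := hTfin.fintype
  have hcov : ∀ x : ↥S, ∃ z, z ∈ T ∧ Φ x ∈ Metric.ball z (D0 / 8) := by
    intro x
    have hx := hTsub (hΦmem x)
    simpa only [mem_iUnion, exists_prop] using hx
  choose ctr hctrT hctrB using hcov
  refine ⟨↥T, inferInstance, fun x => ⟨ctr x, hctrT x⟩, ?_⟩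
  intro x y hFeq
  have hctr_eq : ctr x = ctr y := congrArg Subtype.val hFeq
  have hΦd : dist (Φ x) (Φ y) < D0 / 4 := by
    have h1 := hctrB x
    have h2 := hctrB y
    rw [Metric.mem_ball] at h1 h2
    calc dist (Φ x) (Φ y) ≤ dist (Φ x) (ctr x) + dist (ctr x) (Φ y) := dist_triangle _ _ _
      _ = dist (Φ x) (ctr x) + dist (Φ y) (ctr y) := by
          rw [hctr_eq]; congr 1; exact dist_comm _ _
      _ < D0 / 8 + D0 / 8 := add_lt_add h1 h2
      _ = D0 / 4 := by ring
  have hΦdi : ∀ i : Fin (n + 1),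
      ‖rep x (δ + (i : ℕ) * h) - rep y (δ + (i : ℕ) * h)‖ < D0 / 4 := by
    intro i
    have h3 := (dist_le_pi_dist (Φ x) (Φ y) i).trans_lt hΦd
    rw [hΦdef] at h3
    simpa [dist_eq_norm] using h3
  -- grid approximation of points of the middle interval
  have hgrid : ∀ t ∈ Icc δ (R - δ), ∃ i : Fin (n + 1),
      δ ≤ δ + (i : ℕ) * h ∧ δ + (i : ℕ) * h ≤ t ∧ t - (δ + (i : ℕ) * h) ≤ h := by
    intro t ht
    set i0 : ℕ := ⌊(t - δ) / h⌋₊ with hi0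
    have htδ : 0 ≤ t - δ := by linarith [ht.1]
    have hile : (i0 : ℝ) ≤ (t - δ) / h := Nat.floor_le (by positivity)
    have hlt : (t - δ) / h < (i0 : ℝ) + 1 := Nat.lt_floor_add_one _
    have hi0n : i0 ≤ n := by
      have h1 : (t - δ) / h ≤ (R - 2 * δ) / h := by
        apply div_le_div_of_nonneg_right ?_ hh0.le
        linarith [ht.2]
      have h2 : (R - 2 * δ) / h = (n : ℝ) := by
        rw [hhdef]; field_simp
      have h3 : (i0 : ℝ) ≤ (n : ℝ) := le_trans hile (h1.trans_eq h2)
      exact_mod_cast h3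
    refine ⟨⟨i0, Nat.lt_succ_of_le hi0n⟩, ?_, ?_, ?_⟩
    · show δ ≤ δ + (i0 : ℝ) * h
      have : (0:ℝ) ≤ (i0:ℝ) * h := by positivity
      linarith
    · show δ + (i0 : ℝ) * h ≤ t
      have := (le_div_iff₀ hh0).mp hile
      linarith
    · show t - (δ + (i0 : ℝ) * h) ≤ h
      have := (div_lt_iff₀ hh0).mp hlt
      linarith
  -- uniform modulus of continuity on [δ, R-δ]
  have hmodbound : ∀ z : ↥S, ∀ s0 t : ℝ, δ ≤ s0 → s0 ≤ t → t < R → t - s0 ≤ h →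
      ‖rep z t - rep z s0‖ ≤ ω := by
    intro z s0 t hs0 hst htR' hth
    have hm := mod_est R hR g hg_meas hg_one ρ hρ C hC hmono c hc α β hα_meas hβ_meas
      hα hβ W hW_meas hW (rep z) (hrep1 z) (hrep4 z) δ hδ0 η hη s0 t hs0 hst htR'
    rw [← hlamδdef] at hm
    have e1 : 1/(2*η) * (t - s0) ≤ 1/(2*η) * h :=
      mul_le_mul_of_nonneg_left hth (by positivity)
    have e2 : 1/(2*η) * h ≤ ω/2 := by
      calc 1/(2*η) * h ≤ 1/(2*η) * (ω^2/lamδ) :=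
            mul_le_mul_of_nonneg_left hhω (by positivity)
        _ = ω/2 := by rw [hηdef]; field_simp [hω.ne', hlamδ.ne']
    have e3 : η * lamδ / 2 = ω / 2 := by rw [hηdef]; field_simp
    linarith
  -- uniform bound on the middle interval
  have hmid : ∀ t ∈ Icc δ (R - δ), ‖rep x t - rep y t‖ ≤ D0 := by
    intro t ht
    obtain ⟨i, hi1, hi2, hi3⟩ := hgrid t ht
    have htR' : t < R := by linarith [ht.2]
    have hmx := hmodbound x _ t hi1 hi2 htR' hi3
    have hmy := hmodbound y _ t hi1 hi2 htR' hi3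
    have hmm := hΦdi i
    have hsplit : rep x t - rep y t =
        (rep x t - rep x (δ + (i:ℕ)*h)) + ((rep x (δ + (i:ℕ)*h) - rep y (δ + (i:ℕ)*h))
          + (rep y (δ + (i:ℕ)*h) - rep y t)) := by ring
    rw [hsplit]
    have hny : ‖rep y (δ + (i:ℕ)*h) - rep y t‖ = ‖rep y t - rep y (δ + (i:ℕ)*h)‖ :=
      norm_sub_rev _ _
    calc ‖_ + (_ + _)‖ ≤ ‖rep x t - rep x (δ + (i:ℕ)*h)‖ +
          (‖rep x (δ + (i:ℕ)*h) - rep y (δ + (i:ℕ)*h)‖ + ‖rep y (δ + (i:ℕ)*h) - rep y t‖) :=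
          le_trans (norm_add_le _ _) (by gcongr; exact norm_add_le _ _)
      _ ≤ ω + (D0/4 + ω) := by
          rw [hny]
          exact add_le_add hmx (add_le_add hmm.le hmy)
      _ ≤ D0 := by rw [hωdef] at *; linarith
  -- pointwise tail bound
  have hpt_tail : ∀ t ∈ Ioo (0:ℝ) R, g t * β t * ‖rep x t - rep y t‖^2 ≤ K4 := by
    intro t ht
    have h1 := key_est R hR g hg_meas hg_one ρ hρ C hC hmono c hc α β hα_meas hβ_meas
      hα hβ W hW_meas hW (rep x) (hrep1 x) (hrep2 x) (hrep4 x) t ht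
    have h2 := key_est R hR g hg_meas hg_one ρ hρ C hC hmono c hc α β hα_meas hβ_meas
      hα hβ W hW_meas hW (rep y) (hrep1 y) (hrep2 y) (hrep4 y) t ht
    have hg1 := hg_one t ht
    have hρt := (hρ t ht).1
    have hgρ : 0 < g t * ρ t := by nlinarith
    have hβu := (hβ t ht).2
    have hβl := (hβ t ht).1
    have hβ0 : 0 ≤ β t := le_trans (by positivity) hβl
    have hnorm : ‖rep x t - rep y t‖^2 ≤ 2*‖rep x t‖^2 + 2*‖rep y t‖^2 := by
      have h3 := norm_sub_le (rep x t) (rep y t)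
      have h4 : ‖rep x t - rep y t‖^2 ≤ (‖rep x t‖ + ‖rep y t‖)^2 :=
        pow_le_pow_left₀ (norm_nonneg _) h3 2
      nlinarith only [h4, sq_nonneg (‖rep x t‖ - ‖rep y t‖)]
    have hgβ : g t * β t ≤ c * (g t * ρ t) := by
      nlinarith only [mul_le_mul_of_nonneg_left hβu (le_trans zero_le_one hg1)]
    have hsq : ‖rep x t - rep y t‖^2 ≤ 4*(c/(C*(g t * ρ t))) := by
      linarith only [hnorm, h1, h2]
    calc g t * β t * ‖rep x t - rep y t‖^2
        ≤ (c * (g t * ρ t)) * (4*(c/(C*(g t * ρ t)))) := by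
          apply mul_le_mul hgβ hsq (pow_nonneg (norm_nonneg _) 2) (mul_nonneg hc0.le hgρ.le)
      _ = K4 := by rw [hK4def]; field_simp
  -- now compute the distance in L²
  have hdistL : dist (x : Lp ℂ 2 μ) (y : Lp ℂ 2 μ) =
      (eLpNorm (fun t => rep x t - rep y t) 2 μ).toReal := by
    rw [dist_eq_norm, MeasureTheory.Lp.norm_def]
    congr 1
    apply eLpNorm_congr_ae
    exact (MeasureTheory.Lp.coeFn_sub _ _).trans ((hrep3 x).sub (hrep3 y))
  rw [hdistL]
  have hgoal : eLpNorm (fun t => rep x t - rep y t) 2 μ ≤ ENNReal.ofReal (ε/2) := by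
    rw [eLpNorm_eq_lintegral_rpow_enorm_toReal two_ne_zero ENNReal.ofNat_ne_top]
    have htoReal : (2 : ENNReal).toReal = (2:ℝ) := by simp
    rw [htoReal]
    have hint_eq : ∫⁻ a, ‖rep x a - rep y a‖ₑ ^ (2:ℝ) ∂μ =
        ∫⁻ t in Ioo (0:ℝ) R,
          ENNReal.ofReal (g t * β t) * ENNReal.ofReal (‖rep x t - rep y t‖^2) := by
      have h1 : ∀ a : ℝ, ‖rep x a - rep y a‖ₑ ^ (2:ℝ) =
          ENNReal.ofReal (‖rep x a - rep y a‖^2) := by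
        intro a
        rw [← ofReal_norm,
          ENNReal.ofReal_rpow_of_nonneg (norm_nonneg _) (by norm_num : (0:ℝ) ≤ 2),
          Real.rpow_two]
      simp_rw [h1]
      rw [hμdef]
      exact lintegral_withDensity_eq_lintegral_mul _ (hg_meas.mul hβ_meas).ennreal_ofReal
        ((((hrep1 x).continuous.sub (hrep1 y).continuous).norm.pow 2).measurable.ennreal_ofReal)
    rw [hint_eq]
    have hbody : ∫⁻ t in Ioo (0:ℝ) R,
        ENNReal.ofReal (g t * β t) * ENNReal.ofReal (‖rep x t - rep y t‖^2)
        ≤ ENNReal.ofReal ((ε/2)^2) := by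
      set F : ℝ → ENNReal := fun t =>
        ENNReal.ofReal (g t * β t) * ENNReal.ofReal (‖rep x t - rep y t‖^2) with hFdef
      have hgβ0 : ∀ t ∈ Ioo (0:ℝ) R, 0 ≤ g t * β t := by
        intro t ht
        have hg1 := hg_one t ht
        have hβl := (hβ t ht).1
        have hρt := (hρ t ht).1
        have hβ0 : 0 ≤ β t := le_trans (by positivity) hβl
        nlinarith
      have htail1 : ∫⁻ t in Ioo (0:ℝ) δ, F t ≤ ENNReal.ofReal (K4 * δ) := by
        calc ∫⁻ t in Ioo (0:ℝ) δ, F t ≤ ∫⁻ _ in Ioo (0:ℝ) δ, ENNReal.ofReal K4 := by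
              refine setLIntegral_mono measurable_const (fun w hw => ?_)
              have hwI : w ∈ Ioo (0:ℝ) R := ⟨hw.1, by linarith [hw.2]⟩
              simp only [hFdef]
              rw [← ENNReal.ofReal_mul (hgβ0 w hwI)]
              exact ENNReal.ofReal_le_ofReal (hpt_tail w hwI)
          _ = ENNReal.ofReal K4 * volume (Ioo (0:ℝ) δ) := setLIntegral_const _ _
          _ = ENNReal.ofReal (K4 * δ) := by
              rw [Real.volume_Ioo, ← ENNReal.ofReal_mul hK4.le]
              norm_num
      have htail2 : ∫⁻ t in Ioo (R - δ) R, F t ≤ ENNReal.ofReal (K4 * δ) := by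
        calc ∫⁻ t in Ioo (R - δ) R, F t ≤ ∫⁻ _ in Ioo (R - δ) R, ENNReal.ofReal K4 := by
              refine setLIntegral_mono measurable_const (fun w hw => ?_)
              have hwI : w ∈ Ioo (0:ℝ) R := ⟨by linarith [hw.1], hw.2⟩
              simp only [hFdef]
              rw [← ENNReal.ofReal_mul (hgβ0 w hwI)]
              exact ENNReal.ofReal_le_ofReal (hpt_tail w hwI)
          _ = ENNReal.ofReal K4 * volume (Ioo (R - δ) R) := setLIntegral_const _ _
          _ = ENNReal.ofReal (K4 * δ) := by
              rw [Real.volume_Ioo, ← ENNReal.ofReal_mul hK4.le]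
              congr 1
              ring
      have hmidI : ∫⁻ t in Icc δ (R - δ), F t ≤ ENNReal.ofReal (Gc * D0^2) := by
        calc ∫⁻ t in Icc δ (R - δ), F t
            ≤ ∫⁻ _ in Icc δ (R - δ), ENNReal.ofReal (g (R - δ) * c * D0^2) := by
              refine setLIntegral_mono measurable_const (fun w hw => ?_)
              have hwI : w ∈ Ioo (0:ℝ) R := ⟨by linarith [hw.1], by linarith [hw.2]⟩
              have hgw := hg_mono w (R - δ) (by linarith [hw.1]) hw.2 (by linarith)
              have hg1 := hg_one w hwI
              have hρw := (hρ w hwI)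
              have hρw0 : 0 < ρ w := hρw.1
              have hβw := (hβ w hwI).2
              have hβ0 : 0 ≤ β w := le_trans (by positivity) (hβ w hwI).1
              have hgw0 : (0:ℝ) ≤ g w := by linarith
              have hgβw : g w * β w ≤ g (R - δ) * c := by
                have e1 : g w * β w ≤ g w * (c * ρ w) := mul_le_mul_of_nonneg_left hβw hgw0
                have e2 : g w * (c * ρ w) ≤ g w * (c * 1) :=
                  mul_le_mul_of_nonneg_left
                    (mul_le_mul_of_nonneg_left hρw.2.le hc0.le) hgw0
                have e3 : g w * c ≤ g (R - δ) * c := mul_le_mul_of_nonneg_right hgw hc0.le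
                nlinarith only [e1, e2, e3]
              have hsqw : ‖rep x w - rep y w‖^2 ≤ D0^2 :=
                pow_le_pow_left₀ (norm_nonneg _) (hmid w hw) 2
              simp only [hFdef]
              rw [← ENNReal.ofReal_mul (hgβ0 w hwI)]
              apply ENNReal.ofReal_le_ofReal
              calc g w * β w * ‖rep x w - rep y w‖^2 ≤ (g (R - δ) * c) * D0^2 := by
                    apply mul_le_mul hgβw hsqw (by positivity) (by positivity)
                _ = g (R - δ) * c * D0^2 := by ring
          _ = ENNReal.ofReal (g (R - δ) * c * D0^2) * volume (Icc δ (R - δ)) :=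
              setLIntegral_const _ _
          _ ≤ ENNReal.ofReal (g (R - δ) * c * D0^2) * ENNReal.ofReal R := by
              gcongr
              rw [Real.volume_Icc]
              apply ENNReal.ofReal_le_ofReal
              linarith
          _ = ENNReal.ofReal (Gc * D0^2) := by
              rw [← ENNReal.ofReal_mul (by positivity)]
              congr 1
              rw [hGcdef]; ring
      have hsubset : Ioo (0:ℝ) R ⊆ (Ioo (0:ℝ) δ ∪ Icc δ (R - δ)) ∪ Ioo (R - δ) R := by
        intro t ht
        rcases lt_or_ge t δ with h1 | h1
        · exact Or.inl (Or.inl ⟨ht.1, h1⟩)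
        · rcases le_or_gt t (R - δ) with h2 | h2
          · exact Or.inl (Or.inr ⟨h1, h2⟩)
          · exact Or.inr ⟨h2, ht.2⟩
      calc ∫⁻ t in Ioo (0:ℝ) R, F t
          ≤ ∫⁻ t in (Ioo (0:ℝ) δ ∪ Icc δ (R - δ)) ∪ Ioo (R - δ) R, F t :=
            lintegral_mono_set hsubset
        _ ≤ (∫⁻ t in Ioo (0:ℝ) δ ∪ Icc δ (R - δ), F t) + ∫⁻ t in Ioo (R - δ) R, F t :=
            lintegral_union_le _ _ _
        _ ≤ ((∫⁻ t in Ioo (0:ℝ) δ, F t) + ∫⁻ t in Icc δ (R - δ), F t)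
            + ∫⁻ t in Ioo (R - δ) R, F t :=
            add_le_add_left (lintegral_union_le _ _ _) _
        _ ≤ (ENNReal.ofReal (K4 * δ) + ENNReal.ofReal (Gc * D0^2)) + ENNReal.ofReal (K4 * δ) :=
            add_le_add (add_le_add htail1 hmidI) htail2
        _ = ENNReal.ofReal ((K4 * δ + Gc * D0^2) + K4 * δ) := by
            rw [← ENNReal.ofReal_add (by positivity) (by positivity),
              ← ENNReal.ofReal_add (by positivity) (by positivity)]
        _ ≤ ENNReal.ofReal ((ε/2)^2) := by
            apply ENNReal.ofReal_le_ofReal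
            have e1 : K4 * δ ≤ ε^2/32 := by
              calc K4 * δ ≤ K4 * (ε ^ 2 / (32 * K4)) := mul_le_mul_of_nonneg_left hδε hK4.le
                _ = ε^2/32 := by field_simp
            have e2 : Gc * D0^2 ≤ ε^2/16 := by
              have hD0sq : D0^2 = ε^2/(16*G) := by
                rw [hD0def, div_pow, mul_pow, Real.sq_sqrt hG0.le]
                norm_num
              rw [hD0sq]
              calc Gc * (ε^2/(16*G)) ≤ G * (ε^2/(16*G)) := by
                    apply mul_le_mul_of_nonneg_right (by rw [hGdef]; linarith) (by positivity)
                _ = ε^2/16 := by field_simp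
            nlinarith
    calc (∫⁻ t in Ioo (0:ℝ) R,
            ENNReal.ofReal (g t * β t) * ENNReal.ofReal (‖rep x t - rep y t‖^2)) ^ (1/(2:ℝ))
        ≤ (ENNReal.ofReal ((ε/2)^2)) ^ (1/(2:ℝ)) := ENNReal.rpow_le_rpow hbody (by norm_num)
      _ = ENNReal.ofReal (ε/2) := by
          rw [ENNReal.ofReal_pow (by positivity : (0:ℝ) ≤ ε/2),
            ← ENNReal.rpow_natCast (ENNReal.ofReal (ε/2)) 2,
            ← ENNReal.rpow_mul]
          norm_num
  have := ENNReal.toReal_le_of_le_ofReal (by positivity) hgoal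
  linarith
end

section
/- Let d ≥ 1 be an integer, let Ω ⊆ ℝ^d be a Lebesgue-measurable set, let R̂ > 0 and C > 0, and let J : Ω × (0, R̂) → (0, ∞) be measurable with J(s, θ₁) ≤ C·J(s, θ₂) for every s ∈ Ω and all 0 < θ₁ ≤ θ₂ < R̂. Let v : Ω × (0, R̂) → ℝ be continuous, continuously differentiable in the variable θ with ∂v/∂θ continuous on Ω × (0, R̂), and suppose there is R' < R̂ such that v(s, θ) = 0 whenever θ ≥ R'. Then for every θ_j ∈ [0, R̂): ∫_Ω ∫_{θ_j}^{R̂} (v(s, θ)²/(C²·R̂·(R̂ − θ)))·J(s, θ) dθ ds ≤ (1/C)·∫_Ω ∫_0^{R̂} (∂v/∂θ(s, θ))²·J(s, θ) dθ ds, as an inequality in [0, ∞] for integrals with respect to Lebesgue measure. -/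
open MeasureTheory Set

private lemma cs_aux {μ : Measure ℝ} {f : ℝ → ENNReal} (hf : AEMeasurable f μ) :
    (∫⁻ t, f t ∂μ) ^ 2 ≤ μ Set.univ * ∫⁻ t, f t ^ 2 ∂μ := by
  have hpq : Real.HolderConjugate 2 2 :=
    (Real.holderConjugate_iff_eq_conjExponent one_lt_two).2 (by norm_num)
  have h := ENNReal.lintegral_mul_le_Lp_mul_Lq μ hpq hf
    (aemeasurable_const (b := (1 : ENNReal)))
  simp only [Pi.mul_apply, mul_one, ENNReal.one_rpow, lintegral_const, one_mul] at h
  calc (∫⁻ t, f t ∂μ) ^ 2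
      ≤ ((∫⁻ t, f t ^ (2:ℝ) ∂μ) ^ (1/(2:ℝ)) * (μ Set.univ) ^ (1/(2:ℝ))) ^ 2 :=
        pow_le_pow_left' h 2
    _ = (∫⁻ t, f t ^ (2:ℝ) ∂μ) * μ Set.univ := by
        rw [mul_pow, ← ENNReal.rpow_natCast (_ ^ (1/(2:ℝ))),
          ← ENNReal.rpow_natCast ((μ Set.univ) ^ (1/(2:ℝ))),
          ← ENNReal.rpow_mul, ← ENNReal.rpow_mul]
        norm_num
    _ = μ Set.univ * ∫⁻ t, f t ^ 2 ∂μ := by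
        rw [mul_comm]
        congr 1
        refine lintegral_congr fun t => ?_
        rw [← ENNReal.rpow_natCast (f t) 2]
        norm_num


/-- On the straightened cylinder `Ω × (0, R̂)` with a Jacobian weight `J`
satisfying `J(s,θ₁) ≤ C·J(s,θ₂)` for `θ₁ ≤ θ₂`, and a function `v` vanishing for `θ ≥ R'`
which is continuous and continuously differentiable in `θ`, one has for every `θ_j ∈ [0,R̂)`:
`∫_Ω ∫_{θ_j}^{R̂} (v²/(C²·R̂·(R̂−θ)))·J dθ ds ≤ (1/C)·∫_Ω ∫_0^{R̂} (∂v/∂θ)²·J dθ ds`. -/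
theorem stmt5 (d : ℕ) (hd : 1 ≤ d)
    (Ω : Set (Fin d → ℝ)) (hΩ : MeasurableSet Ω)
    (Rhat C : ℝ) (hRhat : 0 < Rhat) (hC : 0 < C)
    (J : (Fin d → ℝ) → ℝ → ℝ)
    (hJ_meas : Measurable fun p : (Fin d → ℝ) × ℝ => J p.1 p.2)
    (hJ_pos : ∀ s ∈ Ω, ∀ θ ∈ Ioo (0 : ℝ) Rhat, 0 < J s θ)
    (hJ_mono : ∀ s ∈ Ω, ∀ θ₁ θ₂ : ℝ, 0 < θ₁ → θ₁ ≤ θ₂ → θ₂ < Rhat →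
      J s θ₁ ≤ C * J s θ₂)
    (v : (Fin d → ℝ) → ℝ → ℝ)
    (hv_cont : ContinuousOn (fun p : (Fin d → ℝ) × ℝ => v p.1 p.2) (Ω ×ˢ Ioo (0 : ℝ) Rhat))
    (hv_diff : ∀ s ∈ Ω, ∀ θ ∈ Ioo (0 : ℝ) Rhat, DifferentiableAt ℝ (v s) θ)
    (hv'_cont : ContinuousOn (fun p : (Fin d → ℝ) × ℝ => deriv (v p.1) p.2)
      (Ω ×ˢ Ioo (0 : ℝ) Rhat))
    (R' : ℝ) (hR' : R' < Rhat)
    (hv0 : ∀ s ∈ Ω, ∀ θ : ℝ, R' ≤ θ → v s θ = 0)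
    (θj : ℝ) (hθj : θj ∈ Ico (0 : ℝ) Rhat) :
    (∫⁻ s in Ω, ∫⁻ θ in Ioo θj Rhat,
        ENNReal.ofReal (v s θ ^ 2 / (C ^ 2 * Rhat * (Rhat - θ)) * J s θ))
      ≤ ENNReal.ofReal (1 / C) *
        ∫⁻ s in Ω, ∫⁻ θ in Ioo (0 : ℝ) Rhat,
          ENNReal.ofReal (deriv (v s) θ ^ 2 * J s θ) := by
  set A : (Fin d → ℝ) → ENNReal := fun s =>
    ∫⁻ θ in Ioo (0:ℝ) Rhat, ENNReal.ofReal (deriv (v s) θ ^ 2 * J s θ) with hA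
  have key : ∀ s ∈ Ω,
      (∫⁻ θ in Ioo θj Rhat,
        ENNReal.ofReal (v s θ ^ 2 / (C ^ 2 * Rhat * (Rhat - θ)) * J s θ))
        ≤ ENNReal.ofReal (1 / C) * A s := by
    intro s hs
    -- continuity of the slices
    have hslice : ∀ t : Set ℝ, t ⊆ Ioo (0:ℝ) Rhat → ContinuousOn (deriv (v s)) t := by
      intro t ht
      have hmap : Continuous fun θ : ℝ => ((s, θ) : (Fin d → ℝ) × ℝ) :=
        (continuous_const.prodMk continuous_id)
      exact (hv'_cont.comp hmap.continuousOn (fun θ hθ => ⟨hs, ht hθ⟩))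
    -- pointwise bound
    have hpt : ∀ θ ∈ Ioo θj Rhat,
        ENNReal.ofReal (v s θ ^ 2 / (C ^ 2 * Rhat * (Rhat - θ)) * J s θ)
          ≤ ENNReal.ofReal (1 / (C * Rhat)) * A s := by
      intro θ hθ
      have hθ0 : (0:ℝ) < θ := lt_of_le_of_lt hθj.1 hθ.1
      have hθR : θ < Rhat := hθ.2
      by_cases hvz : v s θ = 0
      · simp [hvz]
      · have hθR' : θ < R' := by
          by_contra h
          exact hvz (hv0 s hs θ (le_of_not_gt h))
        have hIccsub : Icc θ R' ⊆ Ioo 0 Rhat :=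
          fun x hx => ⟨lt_of_lt_of_le hθ0 hx.1, lt_of_le_of_lt hx.2 hR'⟩
        have hderiv_cont : ContinuousOn (deriv (v s)) (Icc θ R') := hslice _ hIccsub
        have hint : IntervalIntegrable (deriv (v s)) volume θ R' :=
          (hderiv_cont.mono (by rw [uIcc_of_le hθR'.le])).intervalIntegrable
        have hftc : ∫ t in θ..R', deriv (v s) t = v s R' - v s θ :=
          intervalIntegral.integral_deriv_eq_sub
            (fun x hx => hv_diff s hs x (hIccsub (by rwa [uIcc_of_le hθR'.le] at hx))) hint
        have hvR' : v s R' = 0 := hv0 s hs R' le_rfl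
        have habs : |v s θ| ≤ ∫ t in Ioc θ R', |deriv (v s) t| := by
          rw [← intervalIntegral.integral_of_le hθR'.le]
          calc |v s θ| = |∫ t in θ..R', deriv (v s) t| := by
                rw [hftc, hvR', zero_sub, abs_neg]
            _ ≤ ∫ t in θ..R', |deriv (v s) t| :=
                intervalIntegral.abs_integral_le_integral_abs hθR'.le
        have habs_int : IntegrableOn (fun t => |deriv (v s) t|) (Ioc θ R') :=
          (hderiv_cont.abs.integrableOn_Icc).mono_set Ioc_subset_Icc_self
        have hof : ENNReal.ofReal (∫ t in Ioc θ R', |deriv (v s) t|)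
            = ∫⁻ t in Ioc θ R', ENNReal.ofReal |deriv (v s) t| :=
          ofReal_integral_eq_lintegral_ofReal habs_int (ae_of_all _ fun t => abs_nonneg _)
        have hfm : AEMeasurable (fun t => ENNReal.ofReal |deriv (v s) t|)
            (volume.restrict (Ioc θ R')) :=
          (((hderiv_cont.mono Ioc_subset_Icc_self).abs.aemeasurable
            measurableSet_Ioc).ennreal_ofReal)
        have hCS := cs_aux hfm
        rw [Measure.restrict_apply_univ, Real.volume_Ioc] at hCS
        set L0 : ENNReal := ∫⁻ t in Ioc θ R', ENNReal.ofReal (deriv (v s) t ^ 2) with hL0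
        have hL0eq : (∫⁻ t in Ioc θ R', (ENNReal.ofReal |deriv (v s) t|) ^ 2) = L0 := by
          refine lintegral_congr fun t => ?_
          rw [← ENNReal.ofReal_pow (abs_nonneg _), sq_abs]
        rw [hL0eq] at hCS
        -- key1
        have key1 : ENNReal.ofReal (v s θ ^ 2) ≤ ENNReal.ofReal (Rhat - θ) * L0 := by
          calc ENNReal.ofReal (v s θ ^ 2)
              = (ENNReal.ofReal |v s θ|) ^ 2 := by
                rw [← ENNReal.ofReal_pow (abs_nonneg _), sq_abs]
            _ ≤ (∫⁻ t in Ioc θ R', ENNReal.ofReal |deriv (v s) t|) ^ 2 := by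
                rw [← hof]
                exact pow_le_pow_left' (ENNReal.ofReal_le_ofReal habs) 2
            _ ≤ ENNReal.ofReal (R' - θ) * L0 := hCS
            _ ≤ ENNReal.ofReal (Rhat - θ) * L0 :=
                mul_le_mul_left (ENNReal.ofReal_le_ofReal (by linarith)) L0
        -- now include the weight
        have hJθ : 0 < J s θ := hJ_pos s hs θ ⟨hθ0, hθR⟩
        have hRθ : (0:ℝ) < Rhat - θ := sub_pos.2 hθR
        have hcpos : (0:ℝ) < C ^ 2 * Rhat * (Rhat - θ) := by positivity
        have step2 : ENNReal.ofReal (v s θ ^ 2 / (C ^ 2 * Rhat * (Rhat - θ)) * J s θ)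
            ≤ L0 * ENNReal.ofReal (J s θ * (1 / (C ^ 2 * Rhat))) := by
          have : v s θ ^ 2 / (C ^ 2 * Rhat * (Rhat - θ)) * J s θ
              = v s θ ^ 2 * (J s θ / (C ^ 2 * Rhat * (Rhat - θ))) := by ring
          rw [this, ENNReal.ofReal_mul (sq_nonneg _)]
          calc ENNReal.ofReal (v s θ ^ 2) * ENNReal.ofReal (J s θ / (C ^ 2 * Rhat * (Rhat - θ)))
              ≤ ENNReal.ofReal (Rhat - θ) * L0 *
                ENNReal.ofReal (J s θ / (C ^ 2 * Rhat * (Rhat - θ))) :=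
                mul_le_mul_left key1 _
            _ = L0 * (ENNReal.ofReal (Rhat - θ) *
                ENNReal.ofReal (J s θ / (C ^ 2 * Rhat * (Rhat - θ)))) := by ring
            _ = L0 * ENNReal.ofReal (J s θ * (1 / (C ^ 2 * Rhat))) := by
                rw [← ENNReal.ofReal_mul hRθ.le]
                congr 1
                field_simp
        -- push J into L0 and use monotonicity of J
        have step3 : L0 * ENNReal.ofReal (J s θ)
            ≤ ENNReal.ofReal C * A s := by
          have : L0 * ENNReal.ofReal (J s θ)
              = ∫⁻ t in Ioc θ R', ENNReal.ofReal (deriv (v s) t ^ 2 * J s θ) := by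
            rw [hL0, ← lintegral_mul_const' _ _ ENNReal.ofReal_ne_top]
            exact lintegral_congr fun t => (ENNReal.ofReal_mul (sq_nonneg _)).symm
          rw [this]
          calc (∫⁻ t in Ioc θ R', ENNReal.ofReal (deriv (v s) t ^ 2 * J s θ))
              ≤ ∫⁻ t in Ioc θ R', ENNReal.ofReal (C * (deriv (v s) t ^ 2 * J s t)) := by
                refine setLIntegral_mono' measurableSet_Ioc fun t ht => ?_
                refine ENNReal.ofReal_le_ofReal ?_
                have hJm := hJ_mono s hs θ t hθ0 ht.1.le (lt_of_le_of_lt ht.2 hR')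
                nlinarith [sq_nonneg (deriv (v s) t)]
            _ = ENNReal.ofReal C * ∫⁻ t in Ioc θ R', ENNReal.ofReal (deriv (v s) t ^ 2 * J s t) := by
                rw [← lintegral_const_mul' _ _ ENNReal.ofReal_ne_top]
                exact lintegral_congr fun t => ENNReal.ofReal_mul hC.le
            _ ≤ ENNReal.ofReal C * A s := by
                refine mul_le_mul_right (lintegral_mono_set ?_) _
                intro x hx
                exact ⟨lt_trans hθ0 hx.1, lt_of_le_of_lt hx.2 hR'⟩
        -- combine
        calc ENNReal.ofReal (v s θ ^ 2 / (C ^ 2 * Rhat * (Rhat - θ)) * J s θ)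
            ≤ L0 * ENNReal.ofReal (J s θ * (1 / (C ^ 2 * Rhat))) := step2
          _ = L0 * ENNReal.ofReal (J s θ) * ENNReal.ofReal (1 / (C ^ 2 * Rhat)) := by
              rw [ENNReal.ofReal_mul hJθ.le, mul_assoc]
          _ ≤ ENNReal.ofReal C * A s * ENNReal.ofReal (1 / (C ^ 2 * Rhat)) :=
              mul_le_mul_left step3 _
          _ = ENNReal.ofReal (1 / (C * Rhat)) * A s := by
              rw [mul_comm (ENNReal.ofReal C) (A s), mul_assoc,
                ← ENNReal.ofReal_mul hC.le, mul_comm]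
              congr 2
              field_simp
    -- integrate the pointwise bound over θ
    calc (∫⁻ θ in Ioo θj Rhat,
          ENNReal.ofReal (v s θ ^ 2 / (C ^ 2 * Rhat * (Rhat - θ)) * J s θ))
        ≤ ∫⁻ _ in Ioo θj Rhat, ENNReal.ofReal (1 / (C * Rhat)) * A s :=
          setLIntegral_mono' measurableSet_Ioo hpt
      _ = ENNReal.ofReal (1 / (C * Rhat)) * A s * ENNReal.ofReal (Rhat - θj) := by
          rw [setLIntegral_const, Real.volume_Ioo]
      _ ≤ ENNReal.ofReal (1 / C) * A s := by
          rw [mul_comm (ENNReal.ofReal (1 / (C * Rhat))) (A s), mul_assoc,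
            ← ENNReal.ofReal_mul (by positivity),
            mul_comm (ENNReal.ofReal (1 / C)) (A s)]
          refine mul_le_mul_right (ENNReal.ofReal_le_ofReal ?_) (A s)
          rw [div_mul_eq_mul_div, one_mul, div_le_div_iff₀ (by positivity) hC]
          nlinarith [hθj.1]
  calc (∫⁻ s in Ω, ∫⁻ θ in Ioo θj Rhat,
        ENNReal.ofReal (v s θ ^ 2 / (C ^ 2 * Rhat * (Rhat - θ)) * J s θ))
      ≤ ∫⁻ s in Ω, ENNReal.ofReal (1 / C) * A s :=
        lintegral_mono_ae ((ae_restrict_iff' hΩ).2 (ae_of_all _ key))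
    _ = ENNReal.ofReal (1 / C) * ∫⁻ s in Ω, A s :=
        lintegral_const_mul' _ _ ENNReal.ofReal_ne_top
end

section
/- Consider a star graph with k+1 edges with lengths ℓ_e > 0 and weights ρ_e > 0 (e ∈ {0,…,k}). There exists β > 0, depending only on k, (ℓ_e) and (ρ_e), such that for every δ ∈ (0, 1], every f ∈ ℂ^{k+1}, and every family g = (g_e) of continuously differentiable functions g_e : [0, δℓ_e] → ℂ with a common value g_0(0) = g_1(0) = ⋯ = g_k(0) and with g_e(δℓ_e) = f_e for all e, one has ∑_{e=0}^k ρ_e ∫_0^{δℓ_e} |g_e'(t)|² dt ≥ δ^{−1}·β·|f⌞1⃗|². -/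
open MeasureTheory Set

/-- Cauchy–Schwarz for interval integrals of a continuous real function. -/
lemma sq_integral_le {L : ℝ} (hL : 0 < L) (φ : ℝ → ℝ)
    (hφ : ContinuousOn φ (Icc 0 L)) :
    (∫ t in (0:ℝ)..L, φ t) ^ 2 ≤ L * ∫ t in (0:ℝ)..L, (φ t) ^ 2 := by
  have huIcc : uIcc (0:ℝ) L = Icc 0 L := uIcc_of_le hL.le
  have hint1 : IntervalIntegrable φ volume 0 L :=
    (huIcc ▸ hφ).intervalIntegrable
  have hint2 : IntervalIntegrable (fun t => (φ t) ^ 2) volume 0 L :=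
    (huIcc ▸ hφ.pow 2).intervalIntegrable
  set I := ∫ t in (0:ℝ)..L, φ t with hI
  set a := I / L with ha
  have key : (0:ℝ) ≤ ∫ t in (0:ℝ)..L, (φ t - a) ^ 2 := by
    apply intervalIntegral.integral_nonneg hL.le
    intro u _; positivity
  have hexp : ∫ t in (0:ℝ)..L, (φ t - a) ^ 2
      = (∫ t in (0:ℝ)..L, (φ t) ^ 2) - 2 * a * I + a ^ 2 * L := by
    have : ∀ t, (φ t - a) ^ 2 = (φ t) ^ 2 - (2 * a) * φ t + a ^ 2 := by intro t; ring
    simp_rw [this]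
    rw [intervalIntegral.integral_add ((hint2.sub (hint1.const_mul (2*a)))) intervalIntegrable_const,
      intervalIntegral.integral_sub hint2 (hint1.const_mul (2*a)),
      intervalIntegral.integral_const_mul, intervalIntegral.integral_const]
    rw [smul_eq_mul, ← hI]
    field_simp
    ring
  rw [hexp] at key
  have : 2 * a * I - a ^ 2 * L ≤ ∫ t in (0:ℝ)..L, (φ t) ^ 2 := by linarith
  have h2 : 2 * a * I - a ^ 2 * L = I ^ 2 / L := by
    rw [ha]; field_simp; ring
  rw [h2] at this
  rw [div_le_iff₀ hL] at this
  linarith [this]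

/-- Edge estimate: the boundary increment of a `C¹` function is controlled by
the Dirichlet energy. -/
lemma edge_est {L : ℝ} (hL : 0 < L) (g : ℝ → ℂ)
    (hg : ContDiffOn ℝ 1 g (Icc 0 L)) :
    ‖g L - g 0‖ ^ 2 ≤ L * ∫ t in (0:ℝ)..L, ‖deriv g t‖ ^ 2 := by
  set D := derivWithin g (Icc 0 L) with hD
  have huIcc : uIcc (0:ℝ) L = Icc 0 L := uIcc_of_le hL.le
  have hDcont : ContinuousOn D (Icc 0 L) :=
    hg.continuousOn_derivWithin (uniqueDiffOn_Icc hL) le_rfl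
  have hder : ∀ x ∈ Ioo (0:ℝ) L, HasDerivAt g (D x) x := by
    intro x hx
    have hx' : x ∈ Icc (0:ℝ) L := Ioo_subset_Icc_self hx
    have h1 : HasDerivWithinAt g (D x) (Icc 0 L) x :=
      (hg.differentiableOn one_ne_zero x hx').hasDerivWithinAt
    exact h1.hasDerivAt (Icc_mem_nhds hx.1 hx.2)
  have hderiv_eq : ∀ x ∈ Ioo (0:ℝ) L, deriv g x = D x :=
    fun x hx => (hder x hx).deriv
  have hDint : IntervalIntegrable D volume 0 L :=
    (huIcc ▸ hDcont).intervalIntegrable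
  have hDnint : IntervalIntegrable (fun t => ‖D t‖) volume 0 L :=
    (huIcc ▸ hDcont.norm).intervalIntegrable
  have hD2int : IntervalIntegrable (fun t => ‖D t‖ ^ 2) volume 0 L :=
    (huIcc ▸ (hDcont.norm.pow 2)).intervalIntegrable
  have hftc : ∫ t in (0:ℝ)..L, D t = g L - g 0 :=
    intervalIntegral.integral_eq_sub_of_hasDeriv_right_of_le hL.le hg.continuousOn
      (fun x hx => (hder x hx).hasDerivWithinAt) hDint
  have h1 : ‖g L - g 0‖ ≤ ∫ t in (0:ℝ)..L, ‖D t‖ := by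
    rw [← hftc]
    exact intervalIntegral.norm_integral_le_integral_norm hL.le
  have h2 : (∫ t in (0:ℝ)..L, ‖D t‖) ^ 2 ≤ L * ∫ t in (0:ℝ)..L, ‖D t‖ ^ 2 :=
    sq_integral_le hL _ hDcont.norm
  have hcongr : ∫ t in (0:ℝ)..L, ‖deriv g t‖ ^ 2 = ∫ t in (0:ℝ)..L, ‖D t‖ ^ 2 := by
    apply intervalIntegral.integral_congr_ae
    have hae : ∀ᵐ t : ℝ ∂volume, t ≠ L := by
      refine compl_mem_ae_iff.2 ?_
      exact measure_singleton (L : ℝ)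
    filter_upwards [hae] with t ht hmem
    rw [uIoc_of_le hL.le] at hmem
    rw [hderiv_eq t ⟨hmem.1, lt_of_le_of_ne hmem.2 ht⟩]
  rw [hcongr]
  calc ‖g L - g 0‖ ^ 2 ≤ (∫ t in (0:ℝ)..L, ‖D t‖) ^ 2 := by
        apply pow_le_pow_left₀ (norm_nonneg _) h1 2
    _ ≤ L * ∫ t in (0:ℝ)..L, ‖D t‖ ^ 2 := h2

/-- The component of `f ∈ ℂ^{k+1}` orthogonal to `1⃗ = (k+1)^{-1/2}(1,…,1)`:
`f⌞1⃗ = f − ⟨f,1⃗⟩·1⃗`, i.e. `(f⌞1⃗)_i = f_i − (∑_j f_j)/(k+1)`. -/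
noncomputable def perpOne {m : ℕ} (f : Fin m → ℂ) : Fin m → ℂ :=
  fun i => f i - (∑ j, f j) / (m : ℂ)

/-- The mean minimizes the sum of squared deviations. -/
lemma variance_le {m : ℕ} (hm : 0 < m) (f : Fin m → ℂ) (c : ℂ) :
    ∑ i, ‖perpOne f i‖ ^ 2 ≤ ∑ i, ‖f i - c‖ ^ 2 := by
  have hmC : (m : ℂ) ≠ 0 := Nat.cast_ne_zero.2 hm.ne'
  set μ := (∑ j, f j) / (m : ℂ) with hμ
  have hsum : ∑ i, (f i - μ) = 0 := by
    rw [Finset.sum_sub_distrib, Finset.sum_const, Finset.card_univ, Fintype.card_fin,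
      nsmul_eq_mul, hμ, mul_div_cancel₀ _ hmC, sub_self]
  have key : ∀ i, ‖f i - c‖ ^ 2 = ‖perpOne f i‖ ^ 2
      + 2 * ((f i - μ) * (starRingEnd ℂ) (μ - c)).re + ‖μ - c‖ ^ 2 := by
    intro i
    have h : f i - c = (f i - μ) + (μ - c) := by ring
    rw [h]
    simp only [perpOne, ← hμ, ← Complex.normSq_eq_norm_sq]
    rw [Complex.normSq_add]
    ring
  calc ∑ i, ‖perpOne f i‖ ^ 2
      ≤ ∑ i, ‖perpOne f i‖ ^ 2 + (m : ℝ) * ‖μ - c‖ ^ 2 := by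
        have : (0:ℝ) ≤ (m : ℝ) * ‖μ - c‖ ^ 2 := by positivity
        linarith
    _ = ∑ i, ‖f i - c‖ ^ 2 := by
        simp_rw [key]
        rw [Finset.sum_add_distrib, Finset.sum_add_distrib, Finset.sum_const,
          Finset.card_univ, Fintype.card_fin, nsmul_eq_mul]
        have : ∑ i, 2 * ((f i - μ) * (starRingEnd ℂ) (μ - c)).re = 0 := by
          rw [← Finset.mul_sum, ← Complex.re_sum, ← Finset.sum_mul, hsum, zero_mul]
          simp
        rw [this]
        ring

/-- On a star graph with `k+1` edges of lengths `ℓ_e` and weights `ρ_e`,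
there is `β > 0` such that for every scaling `δ ∈ (0,1]`, every boundary datum `f` and every
`C¹` star function `g` on the `δ`-scaled star with `g_e(δℓ_e) = f_e`,
`∑_e ρ_e ∫_0^{δℓ_e} |g_e'|² ≥ δ⁻¹·β·|f⌞1⃗|²`. -/
theorem stmt6 (k : ℕ) (hk : 1 ≤ k)
    (ℓ ρ : Fin (k + 1) → ℝ) (hℓ : ∀ e, 0 < ℓ e) (hρ : ∀ e, 0 < ρ e) :
    ∃ β : ℝ, 0 < β ∧
      ∀ δ : ℝ, δ ∈ Ioc (0 : ℝ) 1 → ∀ f : Fin (k + 1) → ℂ,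
        ∀ g : Fin (k + 1) → ℝ → ℂ,
          (∀ e, ContDiffOn ℝ 1 (g e) (Icc 0 (δ * ℓ e))) →
          (∀ e e', g e 0 = g e' 0) →
          (∀ e, g e (δ * ℓ e) = f e) →
          δ⁻¹ * β * (∑ i, ‖perpOne f i‖ ^ 2) ≤
            ∑ e, ρ e * ∫ t in (0 : ℝ)..(δ * ℓ e), ‖deriv (g e) t‖ ^ 2 := by
  refine ⟨(Finset.univ : Finset (Fin (k+1))).inf' Finset.univ_nonempty (fun e => ρ e / ℓ e),
    ?_, ?_⟩
  · rw [Finset.lt_inf'_iff]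
    intro e _
    exact div_pos (hρ e) (hℓ e)
  set β := (Finset.univ : Finset (Fin (k+1))).inf' Finset.univ_nonempty (fun e => ρ e / ℓ e)
    with hβ
  have hβpos : 0 < β := by
    rw [hβ, Finset.lt_inf'_iff]; intro e _; exact div_pos (hρ e) (hℓ e)
  intro δ hδ f g hg hcommon hend
  obtain ⟨hδ0, hδ1⟩ := hδ
  set c := g 0 0 with hc
  have hedge : ∀ e, ‖f e - c‖ ^ 2 ≤ (δ * ℓ e) * ∫ t in (0:ℝ)..(δ * ℓ e), ‖deriv (g e) t‖ ^ 2 := by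
    intro e
    have hL : 0 < δ * ℓ e := mul_pos hδ0 (hℓ e)
    have := edge_est hL (g e) (hg e)
    rwa [hend e, hcommon e 0] at this
  have hstep : ∀ e : Fin (k+1), δ⁻¹ * β * ‖f e - c‖ ^ 2 ≤
      ρ e * ∫ t in (0:ℝ)..(δ * ℓ e), ‖deriv (g e) t‖ ^ 2 := by
    intro e
    have hL : 0 < δ * ℓ e := mul_pos hδ0 (hℓ e)
    have hβe : β ≤ ρ e / ℓ e := Finset.inf'_le _ (Finset.mem_univ e)
    have hN : (0:ℝ) ≤ ‖f e - c‖ ^ 2 := by positivity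
    have h1 : δ⁻¹ * β * ‖f e - c‖ ^ 2 ≤ δ⁻¹ * (ρ e / ℓ e) * ‖f e - c‖ ^ 2 := by
      have hpos : (0:ℝ) < δ⁻¹ := inv_pos.2 hδ0
      exact mul_le_mul_of_nonneg_right (mul_le_mul_of_nonneg_left hβe hpos.le) hN
    have h2 : δ⁻¹ * (ρ e / ℓ e) * ‖f e - c‖ ^ 2 ≤
        δ⁻¹ * (ρ e / ℓ e) * ((δ * ℓ e) * ∫ t in (0:ℝ)..(δ * ℓ e), ‖deriv (g e) t‖ ^ 2) := by
      exact mul_le_mul_of_nonneg_left (hedge e)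
        (mul_nonneg (inv_pos.2 hδ0).le (div_pos (hρ e) (hℓ e)).le)
    have h3 : δ⁻¹ * (ρ e / ℓ e) * ((δ * ℓ e) * ∫ t in (0:ℝ)..(δ * ℓ e), ‖deriv (g e) t‖ ^ 2)
        = ρ e * ∫ t in (0:ℝ)..(δ * ℓ e), ‖deriv (g e) t‖ ^ 2 := by
      field_simp
      rw [mul_right_comm (ρ e) (ℓ e), mul_div_cancel_right₀ _ (hℓ e).ne']
    linarith
  calc δ⁻¹ * β * (∑ i, ‖perpOne f i‖ ^ 2)
      ≤ δ⁻¹ * β * (∑ i, ‖f i - c‖ ^ 2) := by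
        exact mul_le_mul_of_nonneg_left (variance_le (Nat.succ_pos k) f c)
          (mul_nonneg (inv_pos.2 hδ0).le hβpos.le)
    _ = ∑ e, δ⁻¹ * β * ‖f e - c‖ ^ 2 := by rw [Finset.mul_sum]
    _ ≤ ∑ e, ρ e * ∫ t in (0:ℝ)..(δ * ℓ e), ‖deriv (g e) t‖ ^ 2 :=
        Finset.sum_le_sum fun e _ => hstep e
end

section
/- Consider a star graph with k+1 edges with lengths ℓ_e > 0 and weights ρ_e > 0 (e ∈ {0,…,k}). There exists β > 0, depending only on k, (ℓ_e) and (ρ_e), such that for every δ ∈ (0, 1], every f ∈ ℂ^{k+1}, and every family g = (g_e) of continuously differentiable functions g_e : [0, δℓ_e] → ℂ with a common value g_0(0) = g_1(0) = ⋯ = g_k(0) and with g_e(δℓ_e) = f_e for all e, one has ∑_{e=0}^k ρ_e ∫_0^{δℓ_e} (|g_e'(t)|² + |g_e(t)|²) dt ≥ δ^{−1}·β·(|f⌞1⃗|² + δ²·|f|²). -/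
open MeasureTheory Set intervalIntegral

/-- One-edge estimates. -/
lemma edge_bound {L : ℝ} (hL : 0 < L) {g : ℝ → ℂ} (hg : ContDiffOn ℝ 1 g (Icc 0 L)) :
    ∃ A B : ℝ, 0 ≤ A ∧ 0 ≤ B ∧
      (∫ t in (0:ℝ)..L, (‖deriv g t‖ ^ 2 + ‖g t‖ ^ 2)) = A + B ∧
      ‖g L - g 0‖ ^ 2 ≤ L * A ∧
      L * ‖g L‖ ^ 2 ≤ 2 * B + 2 * L ^ 2 * A := by
  set h : ℝ → ℂ := derivWithin g (Icc 0 L) with hh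
  have hgc : ContinuousOn g (Icc 0 L) := hg.continuousOn
  have hhc : ContinuousOn h (Icc 0 L) :=
    hg.continuousOn_derivWithin (uniqueDiffOn_Icc hL) le_rfl
  have hder : ∀ x ∈ Ioo (0:ℝ) L, HasDerivAt g (h x) x := by
    intro x hx
    have : HasDerivWithinAt g (h x) (Icc 0 L) x :=
      (hg.differentiableOn one_ne_zero x (Ioo_subset_Icc_self hx)).hasDerivWithinAt
    exact this.hasDerivAt (Icc_mem_nhds hx.1 hx.2)
  -- integrability
  have hInt_h : IntervalIntegrable h volume 0 L :=
    hhc.intervalIntegrable_of_Icc hL.le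
  have hInt_hn : IntervalIntegrable (fun t => ‖h t‖) volume 0 L :=
    (hhc.norm).intervalIntegrable_of_Icc hL.le
  have hInt_h2 : IntervalIntegrable (fun t => ‖h t‖ ^ 2) volume 0 L :=
    ((hhc.norm).pow 2).intervalIntegrable_of_Icc hL.le
  have hInt_g2 : IntervalIntegrable (fun t => ‖g t‖ ^ 2) volume 0 L :=
    ((hgc.norm).pow 2).intervalIntegrable_of_Icc hL.le
  set A : ℝ := ∫ t in (0:ℝ)..L, ‖h t‖ ^ 2 with hA
  set B : ℝ := ∫ t in (0:ℝ)..L, ‖g t‖ ^ 2 with hB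
  have hA0 : 0 ≤ A := integral_nonneg hL.le (fun t _ => by positivity)
  have hB0 : 0 ≤ B := integral_nonneg hL.le (fun t _ => by positivity)
  -- deriv g = h a.e. on the interval
  have haeL : ∀ᵐ x : ℝ, x ≠ L := by
    refine MeasureTheory.ae_iff.2 ?_
    have hset : {x : ℝ | ¬ x ≠ L} = {L} := by ext x; simp
    rw [hset]; exact measure_singleton L
  have hsplit : (∫ t in (0:ℝ)..L, (‖deriv g t‖ ^ 2 + ‖g t‖ ^ 2)) = A + B := by
    have hcongr : ∫ t in (0:ℝ)..L, (‖deriv g t‖ ^ 2 + ‖g t‖ ^ 2)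
        = ∫ t in (0:ℝ)..L, (‖h t‖ ^ 2 + ‖g t‖ ^ 2) := by
      apply intervalIntegral.integral_congr_ae
      filter_upwards [haeL] with x hx hx'
      rw [Set.uIoc_of_le hL.le] at hx'
      have hxo : x ∈ Ioo (0:ℝ) L := ⟨hx'.1, lt_of_le_of_ne hx'.2 hx⟩
      rw [(hder x hxo).deriv]
    rw [hcongr, intervalIntegral.integral_add hInt_h2 hInt_g2]
  -- FTC on subintervals
  have hftc : ∀ t ∈ Icc (0:ℝ) L, (∫ u in t..L, h u) = g L - g t := by
    intro t ht
    apply intervalIntegral.integral_eq_sub_of_hasDeriv_right_of_le ht.2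
      (hgc.mono (Icc_subset_Icc ht.1 le_rfl))
      (fun x hx => (hder x ⟨lt_of_le_of_lt ht.1 hx.1, hx.2⟩).hasDerivWithinAt)
      (hInt_h.mono_set ?_)
    rw [Set.uIcc_of_le ht.2, Set.uIcc_of_le hL.le]
    exact Icc_subset_Icc ht.1 le_rfl
  set S : ℝ := ∫ t in (0:ℝ)..L, ‖h t‖ with hS
  have hS0 : 0 ≤ S := integral_nonneg hL.le (fun t _ => norm_nonneg _)
  have hbound : ∀ t ∈ Icc (0:ℝ) L, ‖g L - g t‖ ≤ S := by
    intro t ht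
    rw [← hftc t ht]
    calc ‖∫ u in t..L, h u‖ ≤ ∫ u in t..L, ‖h u‖ :=
          intervalIntegral.norm_integral_le_integral_norm ht.2
      _ ≤ S := by
          apply intervalIntegral.integral_mono_interval ht.1 ht.2 le_rfl
          · filter_upwards with x using norm_nonneg _
          · exact hInt_hn
  -- Cauchy–Schwarz : S^2 ≤ L * A
  have hCS : S ^ 2 ≤ L * A := by
    rcases eq_or_lt_of_le hS0 with hS0' | hSpos
    · rw [← hS0']; norm_num; positivity
    · set ε : ℝ := S / L with hε'
      have hε : 0 < ε := div_pos hSpos hL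
      have hpt : ∀ t ∈ Icc (0:ℝ) L, ‖h t‖ ≤ ε / 2 + (1 / (2 * ε)) * ‖h t‖ ^ 2 := by
        intro t _
        have h2 : ‖h t‖ ≤ (ε ^ 2 + ‖h t‖ ^ 2) / (2 * ε) := by
          rw [le_div_iff₀ (by positivity)]
          nlinarith [sq_nonneg (‖h t‖ - ε)]
        refine h2.trans_eq ?_
        field_simp
      have hkey : S ≤ ε / 2 * L + (1 / (2 * ε)) * A := by
        have : S ≤ ∫ t in (0:ℝ)..L, (ε / 2 + (1 / (2 * ε)) * ‖h t‖ ^ 2) := by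
          apply intervalIntegral.integral_mono_on hL.le hInt_hn
            (intervalIntegrable_const.add (hInt_h2.const_mul _)) hpt
        refine this.trans_eq ?_
        rw [intervalIntegral.integral_add intervalIntegrable_const (hInt_h2.const_mul _),
          intervalIntegral.integral_const_mul, intervalIntegral.integral_const]
        simp only [smul_eq_mul, sub_zero]
        ring
      have e1 : ε / 2 * L = S / 2 := by rw [hε']; field_simp
      have e2 : (1 / (2 * ε)) * A = L * A / (2 * S) := by
        rw [hε']; field_simp
      rw [e1, e2] at hkey
      have h3 : S / 2 ≤ L * A / (2 * S) := by linarith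
      rw [div_le_div_iff₀ (by norm_num) (by positivity)] at h3
      nlinarith
  refine ⟨A, B, hA0, hB0, hsplit, ?_, ?_⟩
  · have h0 : ‖g L - g 0‖ ≤ S := hbound 0 (left_mem_Icc.2 hL.le)
    calc ‖g L - g 0‖ ^ 2 ≤ S ^ 2 := by nlinarith [norm_nonneg (g L - g 0)]
      _ ≤ L * A := hCS
  · have hpt : ∀ t ∈ Icc (0:ℝ) L, ‖g L‖ ^ 2 ≤ 2 * ‖g t‖ ^ 2 + 2 * S ^ 2 := by
      intro t ht
      have h1 : ‖g L‖ ≤ ‖g t‖ + S := by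
        calc ‖g L‖ = ‖g t + (g L - g t)‖ := by ring_nf
          _ ≤ ‖g t‖ + ‖g L - g t‖ := norm_add_le _ _
          _ ≤ ‖g t‖ + S := by linarith [hbound t ht]
      nlinarith [mul_self_le_mul_self (norm_nonneg (g L)) h1, sq_nonneg (‖g t‖ - S)]
    have : (∫ t in (0:ℝ)..L, ‖g L‖ ^ 2) ≤ ∫ t in (0:ℝ)..L, (2 * ‖g t‖ ^ 2 + 2 * S ^ 2) := by
      apply intervalIntegral.integral_mono_on hL.le intervalIntegrable_const
        ((hInt_g2.const_mul _).add intervalIntegrable_const) hpt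
    rw [intervalIntegral.integral_const,
      intervalIntegral.integral_add (hInt_g2.const_mul _) intervalIntegrable_const,
      intervalIntegral.integral_const_mul, intervalIntegral.integral_const] at this
    simp only [smul_eq_mul, sub_zero] at this
    nlinarith [hCS]

lemma perp_le {m : ℕ} (hm : m ≠ 0) (f : Fin m → ℂ) (c : ℂ) :
    ∑ i, ‖perpOne f i‖ ^ 2 ≤ ∑ i, ‖f i - c‖ ^ 2 := by
  set a : ℂ := (∑ j, f j) / (m : ℂ) with ha
  have hma : (m : ℂ) ≠ 0 := Nat.cast_ne_zero.2 hm
  have hsum : ∑ i, (f i - a) = 0 := by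
    rw [Finset.sum_sub_distrib, Finset.sum_const, Finset.card_univ, Fintype.card_fin,
      nsmul_eq_mul, ha]
    field_simp
    ring
  have hre : ∑ i, (f i - a).re = 0 := by rw [← Complex.re_sum, hsum]; simp
  have him : ∑ i, (f i - a).im = 0 := by rw [← Complex.im_sum, hsum]; simp
  have hzw : ∀ z w : ℂ, ‖z + w‖ ^ 2 = ‖z‖ ^ 2 + ((2 * w.re) * z.re + (2 * w.im) * z.im) + ‖w‖ ^ 2 := by
    intro z w
    simp only [Complex.sq_norm, Complex.normSq_apply,
      Complex.add_re, Complex.add_im]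
    ring
  have expand : ∀ i, ‖f i - c‖ ^ 2
      = ‖f i - a‖ ^ 2 + ((2 * (a - c).re) * (f i - a).re + (2 * (a - c).im) * (f i - a).im)
        + ‖a - c‖ ^ 2 := by
    intro i
    have : f i - c = (f i - a) + (a - c) := by ring
    rw [this, hzw]
  have hperp : ∀ i, perpOne f i = f i - a := fun i => rfl
  calc ∑ i, ‖perpOne f i‖ ^ 2 = ∑ i, ‖f i - a‖ ^ 2 := by simp [hperp]
    _ ≤ ∑ i, ‖f i - a‖ ^ 2 + (m : ℝ) * ‖a - c‖ ^ 2 := le_add_of_nonneg_right (by positivity)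
    _ = ∑ i, ‖f i - c‖ ^ 2 := by
        rw [Finset.sum_congr rfl (fun i _ => expand i), Finset.sum_add_distrib,
          Finset.sum_add_distrib, Finset.sum_add_distrib, ← Finset.mul_sum, ← Finset.mul_sum, hre, him,
          Finset.sum_const, Finset.card_univ, Fintype.card_fin, nsmul_eq_mul]
        ring

/-- On a star graph with `k+1` edges of lengths `ℓ_e` and weights `ρ_e`,
there is `β > 0` such that for every scaling `δ ∈ (0,1]`, every boundary datum `f` and every
`C¹` star function `g` on the `δ`-scaled star with `g_e(δℓ_e) = f_e`,
`∑_e ρ_e ∫_0^{δℓ_e} (|g_e'|² + |g_e|²) ≥ δ⁻¹·β·(|f⌞1⃗|² + δ²·|f|²)`. -/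
theorem stmt7 (k : ℕ) (hk : 1 ≤ k)
    (ℓ ρ : Fin (k + 1) → ℝ) (hℓ : ∀ e, 0 < ℓ e) (hρ : ∀ e, 0 < ρ e) :
    ∃ β : ℝ, 0 < β ∧
      ∀ δ : ℝ, δ ∈ Ioc (0 : ℝ) 1 → ∀ f : Fin (k + 1) → ℂ,
        ∀ g : Fin (k + 1) → ℝ → ℂ,
          (∀ e, ContDiffOn ℝ 1 (g e) (Icc 0 (δ * ℓ e))) →
          (∀ e e', g e 0 = g e' 0) →
          (∀ e, g e (δ * ℓ e) = f e) →
          δ⁻¹ * β * ((∑ i, ‖perpOne f i‖ ^ 2) + δ ^ 2 * ∑ i, ‖f i‖ ^ 2) ≤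
            ∑ e, ρ e * ∫ t in (0 : ℝ)..(δ * ℓ e),
              (‖deriv (g e) t‖ ^ 2 + ‖g e t‖ ^ 2) := by
  set M : ℝ := ∑ e, (3 * ℓ e + 2 / ℓ e) / ρ e with hM
  have hMpos : 0 < M :=
    Finset.sum_pos (fun e _ => div_pos (add_pos (by linarith [hℓ e]) (div_pos two_pos (hℓ e))) (hρ e))
      ⟨0, Finset.mem_univ 0⟩
  clear_value M
  refine ⟨M⁻¹, inv_pos.2 hMpos, ?_⟩
  rintro δ ⟨hδ0, hδ1⟩ f g hg hvertex hgf
  choose A B hA0 hB0 hsplit hb hc using fun e => edge_bound (mul_pos hδ0 (hℓ e)) (hg e)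
  have hRHS : (∑ e, ρ e * ∫ t in (0 : ℝ)..(δ * ℓ e), (‖deriv (g e) t‖ ^ 2 + ‖g e t‖ ^ 2))
      = ∑ e, ρ e * (A e + B e) :=
    Finset.sum_congr rfl (fun e _ => by rw [hsplit e])
  set c : ℂ := g 0 0 with hcdef
  -- per-edge bounds
  have hfc : ∀ e, ‖f e - c‖ ^ 2 ≤ δ * (ℓ e * A e) := by
    intro e
    have h1 := hb e
    rw [hgf e, hvertex e 0, ← hcdef] at h1
    calc ‖f e - c‖ ^ 2 ≤ δ * ℓ e * A e := h1
      _ = δ * (ℓ e * A e) := by ring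
  have hF : ∀ e, δ ^ 2 * ‖f e‖ ^ 2 ≤ δ * (2 * ℓ e * A e + 2 / ℓ e * B e) := by
    intro e
    have h1 := hc e
    rw [hgf e] at h1
    have h1' := mul_le_mul_of_nonneg_left h1 hδ0.le
    have h2 : δ ^ 3 ≤ δ := by
      nlinarith [mul_nonneg (mul_nonneg hδ0.le (sub_nonneg.2 hδ1)) (by linarith : (0:ℝ) ≤ 1 + δ)]
    have h3 : δ ^ 2 * ‖f e‖ ^ 2 * ℓ e ≤ δ * (2 * ℓ e ^ 2 * A e + 2 * B e) := by
      nlinarith [mul_le_mul_of_nonneg_right h2 (mul_nonneg (sq_nonneg (ℓ e)) (hA0 e))]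
    have hle := (hℓ e)
    rw [← mul_le_mul_iff_of_pos_right hle]
    calc δ ^ 2 * ‖f e‖ ^ 2 * ℓ e ≤ δ * (2 * ℓ e ^ 2 * A e + 2 * B e) := h3
      _ = δ * (2 * ℓ e * A e + 2 / ℓ e * B e) * ℓ e := by
          have hne := (hℓ e).ne'
          field_simp
          try ring
          try exact Or.inl trivial
  have hCe : ∀ e, 3 * ℓ e + 2 / ℓ e ≤ M * ρ e := by
    intro e
    have h1 : (3 * ℓ e + 2 / ℓ e) / ρ e ≤ M := by
      rw [hM]
      exact Finset.single_le_sum (f := fun e => (3 * ℓ e + 2 / ℓ e) / ρ e)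
        (fun i _ => (div_pos (add_pos (by linarith [hℓ i]) (div_pos two_pos (hℓ i))) (hρ i)).le)
        (Finset.mem_univ e)
    calc 3 * ℓ e + 2 / ℓ e = ((3 * ℓ e + 2 / ℓ e) / ρ e) * ρ e :=
          (div_mul_cancel₀ _ (hρ e).ne').symm
      _ ≤ M * ρ e := mul_le_mul_of_nonneg_right h1 (hρ e).le
  have hP : ∑ i, ‖perpOne f i‖ ^ 2 ≤ ∑ e, δ * (ℓ e * A e) :=
    (perp_le (Nat.succ_ne_zero k) f c).trans (Finset.sum_le_sum (fun e _ => hfc e))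
  have hsum : (∑ i, ‖perpOne f i‖ ^ 2) + δ ^ 2 * ∑ i, ‖f i‖ ^ 2
      ≤ δ * M * ∑ e, ρ e * (A e + B e) := by
    calc (∑ i, ‖perpOne f i‖ ^ 2) + δ ^ 2 * ∑ i, ‖f i‖ ^ 2
        ≤ (∑ e, δ * (ℓ e * A e)) + ∑ e, δ * (2 * ℓ e * A e + 2 / ℓ e * B e) := by
          refine add_le_add hP ?_
          rw [Finset.mul_sum]
          exact Finset.sum_le_sum (fun e _ => hF e)
      _ = ∑ e, δ * (ℓ e * A e + (2 * ℓ e * A e + 2 / ℓ e * B e)) := by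
          rw [← Finset.sum_add_distrib]
          exact Finset.sum_congr rfl (fun e _ => by ring)
      _ ≤ ∑ e, δ * (M * ρ e * (A e + B e)) := by
          refine Finset.sum_le_sum (fun e _ => ?_)
          refine mul_le_mul_of_nonneg_left ?_ hδ0.le
          have h1 : ℓ e * A e + (2 * ℓ e * A e + 2 / ℓ e * B e)
              ≤ (3 * ℓ e + 2 / ℓ e) * (A e + B e) := by
            have hb1 : 0 ≤ ℓ e * B e := mul_nonneg (hℓ e).le (hB0 e)
            have hb2 : 0 ≤ 2 / ℓ e * A e :=
              mul_nonneg (div_nonneg (by norm_num) (hℓ e).le) (hA0 e)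
            nlinarith
          exact h1.trans (mul_le_mul_of_nonneg_right (hCe e)
            (add_nonneg (hA0 e) (hB0 e)))
      _ = δ * M * ∑ e, ρ e * (A e + B e) := by
          rw [Finset.mul_sum]
          exact Finset.sum_congr rfl (fun e _ => by ring)
  rw [hRHS]
  have hE0 : 0 ≤ ∑ e, ρ e * (A e + B e) :=
    Finset.sum_nonneg (fun e _ => mul_nonneg (hρ e).le (add_nonneg (hA0 e) (hB0 e)))
  calc δ⁻¹ * M⁻¹ * ((∑ i, ‖perpOne f i‖ ^ 2) + δ ^ 2 * ∑ i, ‖f i‖ ^ 2)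
      ≤ δ⁻¹ * M⁻¹ * (δ * M * ∑ e, ρ e * (A e + B e)) := by
        refine mul_le_mul_of_nonneg_left hsum ?_
        positivity
    _ = ∑ e, ρ e * (A e + B e) := by
        field_simp
end

section
/- Consider a star graph with k+1 edges with lengths ℓ_e > 0 and weights ρ_e > 0 (e ∈ {0,…,k}), let γ ∈ {0, 1}, and let f ∈ ℂ^{k+1}. Then there exists a unique family h = (h_e) of twice continuously differentiable functions h_e : [0, ℓ_e] → ℂ such that h_e'' = γ·h_e on [0, ℓ_e] for every e, h_0(0) = h_1(0) = ⋯ = h_k(0), h_e(ℓ_e) = f_e for every e, and the Kirchhoff condition ∑_{e=0}^k ρ_e·h_e'(0) = 0 holds. Moreover, for every C¹ star function g with g_e(ℓ_e) = f_e for all e, one has ∑_{e=0}^k ρ_e ∫_0^{ℓ_e} (|g_e'(t)|² + γ·|g_e(t)|²) dt ≥ ∑_{e=0}^k ρ_e ∫_0^{ℓ_e} (|h_e'(t)|² + γ·|h_e(t)|²) dt, with equality if and only if g = h. -/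
open MeasureTheory Set Complex

section helpers
lemma comb_hasDerivAt (a b : ℂ) {C S : ℝ → ℝ} {c s t : ℝ}
    (hC : HasDerivAt C c t) (hS : HasDerivAt S s t) :
    HasDerivAt (fun t => a * (C t : ℂ) + b * (S t : ℂ)) (a * c + b * s) t :=
  (hC.ofReal_comp.const_mul a).add (hS.ofReal_comp.const_mul b)

lemma deriv_facts {E : Type*} [NormedAddCommGroup E] [NormedSpace ℝ E] {u : ℝ → E}
    (hu : ContDiff ℝ 2 u) :
    Differentiable ℝ u ∧ Differentiable ℝ (deriv u) := by
  have h2 : ContDiff ℝ ((1:ℕ∞)+1) u := by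
    apply hu.of_le; norm_num
  rw [contDiff_succ_iff_deriv] at h2
  exact ⟨h2.1, h2.2.2.differentiable (by simp)⟩

lemma ode_unique_CS (γ : ℝ) {C S : ℝ → ℝ}
    (hC : ContDiff ℝ 2 C) (hS : ContDiff ℝ 2 S)
    (hC2 : ∀ t, deriv (deriv C) t = γ * C t) (hS2 : ∀ t, deriv (deriv S) t = γ * S t)
    (hC0 : C 0 = 1) (hC'0 : deriv C 0 = 0) (hS0 : S 0 = 0) (hS'0 : deriv S 0 = 1)
    {u : ℝ → ℂ} (hu : ContDiff ℝ 2 u) {L : ℝ}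
    (hode : ∀ t ∈ Icc (0:ℝ) L, deriv (deriv u) t = (γ:ℂ) * u t) :
    ∀ t ∈ Icc (0:ℝ) L, u t = u 0 * C t + deriv u 0 * S t := by
  obtain ⟨hud, hud'⟩ := deriv_facts hu
  obtain ⟨hCd, hCd'⟩ := deriv_facts hC
  obtain ⟨hSd, hSd'⟩ := deriv_facts hS
  set v : ℂ × ℂ →L[ℝ] ℂ × ℂ :=
    (ContinuousLinearMap.snd ℝ ℂ ℂ).prod ((γ:ℂ) • (ContinuousLinearMap.fst ℝ ℂ ℂ)) with hv
  set F : ℝ → ℂ × ℂ := fun t => (u t, deriv u t) with hF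
  set G : ℝ → ℂ × ℂ := fun t =>
    (u 0 * C t + deriv u 0 * S t, u 0 * deriv C t + deriv u 0 * deriv S t) with hG
  have key : EqOn F G (Icc 0 L) := by
    apply ODE_solution_unique (v := fun _ p => v p) (fun _ => v.lipschitz)
    · exact (hu.continuous.prodMk (hu.continuous_deriv one_le_two)).continuousOn
    · intro t ht
      have h1 : HasDerivAt F (deriv u t, deriv (deriv u) t) t :=
        (hud t).hasDerivAt.prodMk (hud' t).hasDerivAt
      rw [hode t (Ico_subset_Icc_self ht)] at h1
      exact h1.hasDerivWithinAt
    · refine Continuous.continuousOn (Continuous.prodMk ?_ ?_)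
      · exact ((continuous_const.mul (Complex.continuous_ofReal.comp hC.continuous)).add
          (continuous_const.mul (Complex.continuous_ofReal.comp hS.continuous)))
      · exact ((continuous_const.mul (Complex.continuous_ofReal.comp
            (hC.continuous_deriv one_le_two))).add
          (continuous_const.mul (Complex.continuous_ofReal.comp
            (hS.continuous_deriv one_le_two))))
    · intro t ht
      have h1 : HasDerivAt G
          (u 0 * deriv C t + deriv u 0 * deriv S t,
           u 0 * deriv (deriv C) t + deriv u 0 * deriv (deriv S) t) t :=
        (comb_hasDerivAt _ _ (hCd t).hasDerivAt (hSd t).hasDerivAt).prodMk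
          (comb_hasDerivAt _ _ (hCd' t).hasDerivAt (hSd' t).hasDerivAt)
      rw [hC2 t, hS2 t] at h1
      have : (u 0 * ((γ * C t : ℝ) : ℂ) + deriv u 0 * ((γ * S t : ℝ) : ℂ))
          = (γ:ℂ) * (u 0 * C t + deriv u 0 * S t) := by push_cast; ring
      rw [this] at h1
      exact h1.hasDerivWithinAt
    · simp [hF, hG, hC0, hS0, hC'0, hS'0]
  intro t ht
  exact congrArg Prod.fst (key ht)

lemma norm_add_sq_c (x y : ℂ) :
    ‖x+y‖^2 = ‖x‖^2+‖y‖^2+2*((starRingEnd ℂ) x * y).re := by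
  simp only [Complex.sq_norm, Complex.normSq_apply, Complex.add_re,
    Complex.add_im, Complex.mul_re, Complex.conj_re, Complex.conj_im]
  ring
lemma energy_decomp (X Y Z W : ℂ) (γ : ℝ) :
    ‖X‖^2 + γ*‖Z‖^2 = (‖Y‖^2 + γ*‖W‖^2) + (‖X - Y‖^2 + γ*‖Z - W‖^2)
      + 2*(((starRingEnd ℂ) Y * (X - Y)).re + γ*(((starRingEnd ℂ) W) * (Z - W)).re) := by
  have h1 := norm_add_sq_c Y (X - Y)
  have h2 := norm_add_sq_c W (Z - W)
  simp only [add_sub_cancel] at h1 h2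
  rw [h1, h2]; ring

end helpers

lemma master (k : ℕ) (ℓ ρ : Fin (k + 1) → ℝ) (hℓ : ∀ e, 0 < ℓ e) (hρ : ∀ e, 0 < ρ e)
    (γ : ℝ) (hγ0 : 0 ≤ γ) (C S : ℝ → ℝ)
    (hC : ContDiff ℝ 2 C) (hS : ContDiff ℝ 2 S)
    (hC2 : ∀ t, deriv (deriv C) t = γ * C t) (hS2 : ∀ t, deriv (deriv S) t = γ * S t)
    (hC0 : C 0 = 1) (hC'0 : deriv C 0 = 0) (hS0 : S 0 = 0) (hS'0 : deriv S 0 = 1)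
    (hCpos : ∀ t, 0 ≤ t → 0 < C t) (hSpos : ∀ t, 0 < t → 0 < S t)
    (f : Fin (k + 1) → ℂ) :
    ∃ h : Fin (k + 1) → ℝ → ℂ,
      (∀ e, ContDiff ℝ 2 (h e)) ∧
      (∀ e, ∀ t ∈ Icc (0 : ℝ) (ℓ e), deriv (deriv (h e)) t = (γ : ℂ) * h e t) ∧
      (∀ e e', h e 0 = h e' 0) ∧
      (∀ e, h e (ℓ e) = f e) ∧
      (∑ e, (ρ e : ℂ) * deriv (h e) 0 = 0) ∧
      (∀ h' : Fin (k + 1) → ℝ → ℂ,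
        (∀ e, ContDiff ℝ 2 (h' e)) →
        (∀ e, ∀ t ∈ Icc (0 : ℝ) (ℓ e), deriv (deriv (h' e)) t = (γ : ℂ) * h' e t) →
        (∀ e e', h' e 0 = h' e' 0) →
        (∀ e, h' e (ℓ e) = f e) →
        (∑ e, (ρ e : ℂ) * deriv (h' e) 0 = 0) →
        ∀ e, ∀ t ∈ Icc (0 : ℝ) (ℓ e), h' e t = h e t) ∧
      (∀ g : Fin (k + 1) → ℝ → ℂ,
        (∀ e, ContDiffOn ℝ 1 (g e) (Icc 0 (ℓ e))) →
        (∀ e e', g e 0 = g e' 0) →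
        (∀ e, g e (ℓ e) = f e) →
        (∑ e, ρ e * ∫ t in (0 : ℝ)..(ℓ e), (‖deriv (h e) t‖ ^ 2 + γ * ‖h e t‖ ^ 2))
            ≤ ∑ e, ρ e * ∫ t in (0 : ℝ)..(ℓ e), (‖deriv (g e) t‖ ^ 2 + γ * ‖g e t‖ ^ 2) ∧
        ((∑ e, ρ e * ∫ t in (0 : ℝ)..(ℓ e), (‖deriv (g e) t‖ ^ 2 + γ * ‖g e t‖ ^ 2))
              = (∑ e, ρ e * ∫ t in (0 : ℝ)..(ℓ e), (‖deriv (h e) t‖ ^ 2 + γ * ‖h e t‖ ^ 2))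
            ↔ ∀ e, ∀ t ∈ Icc (0 : ℝ) (ℓ e), g e t = h e t)) := by
  obtain ⟨hCd, hCd'⟩ := deriv_facts hC
  obtain ⟨hSd, hSd'⟩ := deriv_facts hS
  have hSl : ∀ e, (0:ℝ) < S (ℓ e) := fun e => hSpos _ (hℓ e)
  have hSlne : ∀ e, ((S (ℓ e) : ℂ)) ≠ 0 := fun e => by
    exact_mod_cast Complex.ofReal_ne_zero.mpr (hSl e).ne'
  set D : ℝ := ∑ e, ρ e * C (ℓ e) / S (ℓ e) with hD
  have hDpos : 0 < D := Finset.sum_pos (fun e _ => by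
    have h1 := hρ e
    have h2 := hCpos (ℓ e) (hℓ e).le
    have h3 := hSl e
    positivity) ⟨0, Finset.mem_univ 0⟩
  have hDne : ((D:ℂ)) ≠ 0 := Complex.ofReal_ne_zero.mpr hDpos.ne'
  set N : ℂ := ∑ e, ((ρ e / S (ℓ e) : ℝ) : ℂ) * f e with hN
  set a : ℂ := N / D with ha
  set b : Fin (k+1) → ℂ := fun e => (f e - a * C (ℓ e)) / (S (ℓ e) : ℂ) with hb
  set h : Fin (k + 1) → ℝ → ℂ := fun e t => a * (C t : ℂ) + b e * (S t : ℂ) with hh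
  -- derivative formulas
  have hder : ∀ e t, HasDerivAt (h e) (a * deriv C t + b e * deriv S t) t := fun e t =>
    comb_hasDerivAt _ _ (hCd t).hasDerivAt (hSd t).hasDerivAt
  have hd1 : ∀ e t, deriv (h e) t = a * deriv C t + b e * deriv S t := fun e t =>
    (hder e t).deriv
  have hder2 : ∀ e t, HasDerivAt (deriv (h e))
      (a * deriv (deriv C) t + b e * deriv (deriv S) t) t := by
    intro e t
    have : deriv (h e) = fun t => a * ((deriv C t : ℝ) : ℂ) + b e * ((deriv S t : ℝ) : ℂ) :=
      funext (hd1 e)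
    rw [this]
    exact comb_hasDerivAt _ _ (hCd' t).hasDerivAt (hSd' t).hasDerivAt
  have hd2 : ∀ e t, deriv (deriv (h e)) t = (γ:ℂ) * h e t := by
    intro e t
    rw [(hder2 e t).deriv, hC2, hS2, hh]
    push_cast; ring
  -- smoothness
  have hsm : ∀ e, ContDiff ℝ 2 (h e) := by
    intro e
    exact (contDiff_const.mul (Complex.ofRealCLM.contDiff.comp hC)).add
      (contDiff_const.mul (Complex.ofRealCLM.contDiff.comp hS))
  -- boundary
  have hbd : ∀ e, h e (ℓ e) = f e := by
    intro e
    rw [hh]; simp only [hb]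
    rw [div_mul_cancel₀ _ (hSlne e)]
    ring
  -- vertex
  have hv0 : ∀ e, h e 0 = a := by intro e; rw [hh]; simp [hC0, hS0]
  -- deriv at 0
  have hd0 : ∀ e, deriv (h e) 0 = b e := by
    intro e; rw [hd1, hC'0, hS'0]; push_cast; ring
  -- Kirchhoff
  have hsum_b : ∀ a' : ℂ, ∑ e, (ρ e : ℂ) * ((f e - a' * C (ℓ e)) / (S (ℓ e) : ℂ))
      = N - a' * D := by
    intro a'
    have : ∀ e : Fin (k+1), (ρ e : ℂ) * ((f e - a' * C (ℓ e)) / (S (ℓ e) : ℂ))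
        = ((ρ e / S (ℓ e) : ℝ) : ℂ) * f e - a' * ((ρ e * C (ℓ e) / S (ℓ e) : ℝ) : ℂ) := by
      intro e
      have := hSlne e
      push_cast
      field_simp
    rw [Finset.sum_congr rfl (fun e _ => this e), Finset.sum_sub_distrib, ← Finset.mul_sum,
      hN, hD]
    push_cast
    ring
  have haD : a * D = N := by rw [ha]; field_simp
  have hkir : ∑ e, (ρ e : ℂ) * deriv (h e) 0 = 0 := by
    simp only [hd0, hb]
    rw [hsum_b a, haD, sub_self]
  refine ⟨h, hsm, fun e t _ => hd2 e t, fun e e' => by rw [hv0, hv0], hbd, hkir, ?_, ?_⟩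
  · -- uniqueness
    intro h' hsm' hode' hv' hbd' hkir' e t ht
    have hrep : ∀ e, ∀ t ∈ Icc (0:ℝ) (ℓ e),
        h' e t = h' e 0 * C t + deriv (h' e) 0 * S t := fun e =>
      ode_unique_CS γ hC hS hC2 hS2 hC0 hC'0 hS0 hS'0 (hsm' e) (hode' e)
    set a' : ℂ := h' 0 0 with ha'
    have hv'' : ∀ e, h' e 0 = a' := fun e => hv' e 0
    -- endpoint gives deriv value
    have hder0 : ∀ e, deriv (h' e) 0 = (f e - a' * C (ℓ e)) / (S (ℓ e) : ℂ) := by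
      intro e
      have := hrep e (ℓ e) ⟨(hℓ e).le, le_rfl⟩
      rw [hbd' e, hv'' e] at this
      rw [eq_div_iff (hSlne e)]
      linear_combination -this
    have hkir2 : N - a' * D = 0 := by
      rw [← hsum_b a']
      rw [← hkir']
      exact Finset.sum_congr rfl (fun e _ => by rw [hder0 e])
    have haa : a' = a := by
      have h1 : a' * (D:ℂ) = N := by linear_combination -hkir2
      rw [ha, ← h1, mul_div_cancel_right₀ _ hDne]
    have := hrep e t ht
    rw [this, hv'' e, hder0 e, haa, hh]
  · -- energy minimization
    intro g hg hgv hgf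
    set Eh : Fin (k+1) → ℝ → ℝ :=
      fun e t => ‖deriv (h e) t‖^2 + γ * ‖h e t‖^2 with hEh
    set G : Fin (k+1) → ℝ → ℂ := fun e => derivWithin (g e) (Icc 0 (ℓ e)) with hGdef
    set u : Fin (k+1) → ℝ → ℂ := fun e t => g e t - h e t with hudef
    set U : Fin (k+1) → ℝ → ℂ := fun e t => G e t - deriv (h e) t with hUdef
    set Eg : Fin (k+1) → ℝ → ℝ :=
      fun e t => ‖G e t‖^2 + γ * ‖g e t‖^2 with hEg
    set Eu : Fin (k+1) → ℝ → ℝ :=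
      fun e t => ‖U e t‖^2 + γ * ‖u e t‖^2 with hEu
    set ψ : Fin (k+1) → ℝ → ℝ := fun e t =>
      2 * (((starRingEnd ℂ) (deriv (h e) t) * U e t).re
        + γ * (((starRingEnd ℂ) (h e t)) * u e t).re) with hψ
    set Φ : Fin (k+1) → ℝ → ℝ := fun e t =>
      2 * (((starRingEnd ℂ) (deriv (h e) t)) * u e t).re with hΦ
    -- continuity facts
    have hhc : ∀ e, Continuous (h e) := fun e => (hsm e).continuous
    have hh'c : ∀ e, Continuous (deriv (h e)) := fun e => (hsm e).continuous_deriv one_le_two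
    have hgc : ∀ e, ContinuousOn (g e) (Icc 0 (ℓ e)) := fun e => (hg e).continuousOn
    have hGc : ∀ e, ContinuousOn (G e) (Icc 0 (ℓ e)) := fun e =>
      (hg e).continuousOn_derivWithin (uniqueDiffOn_Icc (hℓ e)) le_rfl
    have huc : ∀ e, ContinuousOn (u e) (Icc 0 (ℓ e)) := fun e =>
      (hgc e).sub (hhc e).continuousOn
    have hUc : ∀ e, ContinuousOn (U e) (Icc 0 (ℓ e)) := fun e =>
      (hGc e).sub (hh'c e).continuousOn
    -- derivative facts on the open interval
    have hgder : ∀ e, ∀ t ∈ Ioo (0:ℝ) (ℓ e), HasDerivAt (g e) (G e t) t := by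
      intro e t ht
      have hmem : Icc (0:ℝ) (ℓ e) ∈ nhds t := Icc_mem_nhds ht.1 ht.2
      have hdiff : DifferentiableAt ℝ (g e) t :=
        (((hg e).differentiableOn one_ne_zero) t (Ioo_subset_Icc_self ht)).differentiableAt hmem
      have hGt : G e t = deriv (g e) t := derivWithin_of_mem_nhds hmem
      rw [hGt]; exact hdiff.hasDerivAt
    have hgderiv_eq : ∀ e, ∀ t ∈ Ioo (0:ℝ) (ℓ e), deriv (g e) t = G e t := by
      intro e t ht
      exact (hgder e t ht).deriv
    have huder : ∀ e, ∀ t ∈ Ioo (0:ℝ) (ℓ e), HasDerivAt (u e) (U e t) t := by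
      intro e t ht
      exact (hgder e t ht).sub ((deriv_facts (hsm e)).1 t).hasDerivAt
    -- pointwise energy decomposition (everywhere)
    have hpt : ∀ e t, Eg e t = Eh e t + Eu e t + ψ e t := by
      intro e t
      simp only [hEg, hEh, hEu, hψ, hUdef, hudef]
      exact energy_decomp (G e t) (deriv (h e) t) (g e t) (h e t) γ
    -- integrability
    have iEh : ∀ e, IntegrableOn (Eh e) (Ioo 0 (ℓ e)) := by
      intro e
      exact (((((hh'c e).norm.pow 2).add
        (continuous_const.mul ((hhc e).norm.pow 2))).continuousOn).integrableOn_Icc).mono_set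
        Ioo_subset_Icc_self
    have iEg : ∀ e, IntegrableOn (Eg e) (Ioo 0 (ℓ e)) := by
      intro e
      exact (((((hGc e).norm.pow 2).add
        (((hgc e).norm.pow 2).const_smul γ)).integrableOn_Icc).mono_set Ioo_subset_Icc_self)
    have iEu : ∀ e, IntegrableOn (Eu e) (Ioo 0 (ℓ e)) := by
      intro e
      exact (((((hUc e).norm.pow 2).add
        (((huc e).norm.pow 2).const_smul γ)).integrableOn_Icc).mono_set Ioo_subset_Icc_self)
    have iU2 : ∀ e, IntegrableOn (fun t => ‖U e t‖^2) (Ioo 0 (ℓ e)) := by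
      intro e
      exact ((((hUc e).norm.pow 2).integrableOn_Icc).mono_set Ioo_subset_Icc_self)
    have iu2 : ∀ e, IntegrableOn (fun t => ‖u e t‖^2) (Ioo 0 (ℓ e)) := by
      intro e
      exact ((((huc e).norm.pow 2).integrableOn_Icc).mono_set Ioo_subset_Icc_self)
    have hψc : ∀ e, ContinuousOn (ψ e) (Icc 0 (ℓ e)) := by
      intro e
      apply ContinuousOn.mul continuousOn_const
      apply ContinuousOn.add
      · exact Complex.continuous_re.comp_continuousOn
          (((Complex.continuous_conj.comp (hh'c e)).continuousOn).mul (hUc e))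
      · exact continuousOn_const.mul (Complex.continuous_re.comp_continuousOn
          (((Complex.continuous_conj.comp (hhc e)).continuousOn).mul (huc e)))
    have iψ : ∀ e, IntegrableOn (ψ e) (Ioo 0 (ℓ e)) := fun e =>
      ((hψc e).integrableOn_Icc).mono_set Ioo_subset_Icc_self
    -- interval-integral to Ioo conversion
    have hconv : ∀ (F : ℝ → ℝ) (e : Fin (k+1)),
        ∫ t in (0:ℝ)..(ℓ e), F t = ∫ t in Ioo (0:ℝ) (ℓ e), F t := by
      intro F e
      rw [intervalIntegral.integral_of_le (hℓ e).le, integral_Ioc_eq_integral_Ioo]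
    have hgint : ∀ e, (∫ t in (0:ℝ)..(ℓ e), (‖deriv (g e) t‖^2 + γ * ‖g e t‖^2))
        = ∫ t in Ioo (0:ℝ) (ℓ e), Eg e t := by
      intro e
      rw [hconv]
      refine setIntegral_congr_fun measurableSet_Ioo (fun t ht => ?_)
      simp only [hEg]
      rw [hgderiv_eq e t ht]
    -- FTC for the cross term
    have hΦc : ∀ e, ContinuousOn (Φ e) (Icc 0 (ℓ e)) := by
      intro e
      apply ContinuousOn.mul continuousOn_const
      exact Complex.continuous_re.comp_continuousOn
        (((Complex.continuous_conj.comp (hh'c e)).continuousOn).mul (huc e))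
    have hΦder : ∀ e, ∀ t ∈ Ioo (0:ℝ) (ℓ e), HasDerivAt (Φ e) (ψ e t) t := by
      intro e t ht
      have h1 : HasDerivAt (fun s => (starRingEnd ℂ) (deriv (h e) s))
          ((starRingEnd ℂ) (deriv (deriv (h e)) t)) t :=
        ((deriv_facts (hsm e)).2 t).hasDerivAt.star
      have h3 := (h1.mul (huder e t ht))
      have h4 := (Complex.reCLM.hasFDerivAt.comp_hasDerivAt t h3).const_mul (2:ℝ)
      have h5 : (2:ℝ) * Complex.reCLM ((starRingEnd ℂ) (deriv (deriv (h e)) t) * u e t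
          + (starRingEnd ℂ) (deriv (h e) t) * U e t) = ψ e t := by
        rw [hd2 e t]
        simp only [hψ, Complex.reCLM_apply, Complex.add_re]
        rw [map_mul (starRingEnd ℂ) ((γ:ℂ)) (h e t), Complex.conj_ofReal, mul_assoc,
          Complex.re_ofReal_mul]
        ring
      rw [← h5]
      exact h4
    have hftc : ∀ e, ∫ t in Ioo (0:ℝ) (ℓ e), ψ e t = Φ e (ℓ e) - Φ e 0 := by
      intro e
      rw [← hconv]
      apply intervalIntegral.integral_eq_sub_of_hasDeriv_right_of_le (hℓ e).le (hΦc e)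
      · exact fun t ht => (hΦder e t ht).hasDerivWithinAt
      · exact ((hψc e).mono (by rw [uIcc_of_le (hℓ e).le])).intervalIntegrable
    -- boundary values of Φ
    have hu_end : ∀ e, u e (ℓ e) = 0 := by
      intro e
      simp only [hudef]
      rw [hgf e, hbd e, sub_self]
    have hΦℓ : ∀ e, Φ e (ℓ e) = 0 := by
      intro e
      simp only [hΦ]
      rw [hu_end e, mul_zero, Complex.zero_re, mul_zero]
    set c : ℂ := g 0 0 - a with hc
    have hu0 : ∀ e, u e 0 = c := by
      intro e
      simp only [hudef]
      rw [hgv e 0, hv0 e]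
    have hΦ0 : ∀ e, Φ e 0 = 2 * ((starRingEnd ℂ) (b e) * c).re := by
      intro e
      simp only [hΦ]
      rw [hd0 e, hu0 e]
    -- the cross terms sum to zero
    have hzero : ∑ e, ρ e * Φ e 0 = 0 := by
      have h1 : ∀ e : Fin (k+1), ρ e * Φ e 0
          = 2 * ((ρ e : ℂ) * ((starRingEnd ℂ) (b e) * c)).re := by
        intro e
        rw [hΦ0 e, Complex.re_ofReal_mul]
        ring
      rw [Finset.sum_congr rfl (fun e _ => h1 e), ← Finset.mul_sum, ← Complex.re_sum]
      have h2 : ∑ e, (ρ e : ℂ) * ((starRingEnd ℂ) (b e) * c)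
          = (starRingEnd ℂ) (∑ e, (ρ e : ℂ) * b e) * c := by
        rw [map_sum, Finset.sum_mul]
        refine Finset.sum_congr rfl (fun e _ => ?_)
        rw [map_mul, Complex.conj_ofReal]
        ring
      have h3 : ∑ e, (ρ e : ℂ) * b e = 0 := by
        rw [← hkir]
        exact Finset.sum_congr rfl (fun e _ => by rw [hd0 e])
      rw [h2, h3, map_zero, zero_mul, Complex.zero_re, mul_zero]
    -- main per-edge identity
    set Q : Fin (k+1) → ℝ := fun e => ∫ t in Ioo (0:ℝ) (ℓ e), Eu e t with hQ
    have hmain : ∀ e, ∫ t in Ioo (0:ℝ) (ℓ e), Eg e t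
        = (∫ t in Ioo (0:ℝ) (ℓ e), Eh e t) + Q e - Φ e 0 := by
      intro e
      have h1 : ∫ t in Ioo (0:ℝ) (ℓ e), Eg e t
          = ∫ t in Ioo (0:ℝ) (ℓ e), ((Eh e t + Eu e t) + ψ e t) := by
        refine setIntegral_congr_fun measurableSet_Ioo (fun t _ => hpt e t)
      rw [h1, integral_add (f := fun t => Eh e t + Eu e t) (g := ψ e)
        ((iEh e).add (iEu e)) (iψ e),
        integral_add (f := fun t => Eh e t) (g := fun t => Eu e t) (iEh e) (iEu e),
        hftc e, hΦℓ e]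
      have h2 : Q e = ∫ t in Ioo (0:ℝ) (ℓ e), Eu e t := rfl
      rw [h2]
      ring
    have hQnn : ∀ e, 0 ≤ Q e := by
      intro e
      refine setIntegral_nonneg measurableSet_Ioo (fun t _ => ?_)
      simp only [hEu]
      positivity
    -- rewrite the goal sums
    have hhint : ∀ e, (∫ t in (0:ℝ)..(ℓ e), (‖deriv (h e) t‖^2 + γ * ‖h e t‖^2))
        = ∫ t in Ioo (0:ℝ) (ℓ e), Eh e t := fun e => hconv (Eh e) e
    have hsumEq : ∑ e, ρ e * ∫ t in (0:ℝ)..(ℓ e), (‖deriv (g e) t‖^2 + γ * ‖g e t‖^2)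
        = (∑ e, ρ e * ∫ t in (0:ℝ)..(ℓ e), (‖deriv (h e) t‖^2 + γ * ‖h e t‖^2))
          + ∑ e, ρ e * Q e := by
      have h1 : ∀ e : Fin (k+1),
          ρ e * ∫ t in (0:ℝ)..(ℓ e), (‖deriv (g e) t‖^2 + γ * ‖g e t‖^2)
          = ρ e * (∫ t in (0:ℝ)..(ℓ e), (‖deriv (h e) t‖^2 + γ * ‖h e t‖^2))
            + ρ e * Q e - ρ e * Φ e 0 := by
        intro e
        rw [hgint e, hmain e, hhint e]
        ring
      rw [Finset.sum_congr rfl (fun e _ => h1 e), Finset.sum_sub_distrib,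
        Finset.sum_add_distrib, hzero, sub_zero]
    constructor
    · -- inequality
      rw [hsumEq]
      have : 0 ≤ ∑ e, ρ e * Q e :=
        Finset.sum_nonneg (fun e _ => mul_nonneg (hρ e).le (hQnn e))
      linarith
    · -- equality iff
      rw [hsumEq]
      constructor
      · intro hEqSum
        have hQsum : ∑ e, ρ e * Q e = 0 := by linarith
        have hQ0 : ∀ e, Q e = 0 := by
          intro e
          have := (Finset.sum_eq_zero_iff_of_nonneg
            (fun e _ => mul_nonneg (hρ e).le (hQnn e))).mp hQsum e (Finset.mem_univ e)
          rcases mul_eq_zero.mp this with h' | h'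
          · exact absurd h' (hρ e).ne'
          · exact h'
        intro e t ht
        -- from Q e = 0 get ∫ ‖U‖² = 0
        have hsplit : Q e = (∫ t in Ioo (0:ℝ) (ℓ e), ‖U e t‖^2)
            + γ * ∫ t in Ioo (0:ℝ) (ℓ e), ‖u e t‖^2 := by
          simp only [hQ, hEu]
          rw [integral_add (iU2 e) ((iu2 e).const_mul γ), integral_const_mul]
        have hA : 0 ≤ ∫ t in Ioo (0:ℝ) (ℓ e), ‖U e t‖^2 :=
          setIntegral_nonneg measurableSet_Ioo (fun t _ => by positivity)
        have hB : 0 ≤ ∫ t in Ioo (0:ℝ) (ℓ e), ‖u e t‖^2 :=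
          setIntegral_nonneg measurableSet_Ioo (fun t _ => by positivity)
        have hU20 : ∫ t in Ioo (0:ℝ) (ℓ e), ‖U e t‖^2 = 0 := by
          have := hQ0 e
          nlinarith [mul_nonneg hγ0 hB]
        have hae : U e =ᵐ[volume.restrict (Ioo (0:ℝ) (ℓ e))] 0 := by
          have h1 := (integral_eq_zero_iff_of_nonneg_ae
            (Filter.Eventually.of_forall (fun t => by positivity)) (iU2 e)).mp hU20
          filter_upwards [h1] with t h2
          have h3 : ‖U e t‖ = 0 := by
            have h4 : ‖U e t‖^2 = 0 := h2
            exact pow_eq_zero_iff two_ne_zero |>.mp h4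
          simpa using h3
        -- FTC from t to ℓ e
        have hint0 : ∫ s in t..(ℓ e), U e s = 0 := by
          rw [intervalIntegral.integral_of_le ht.2, integral_Ioc_eq_integral_Ioo]
          refine integral_eq_zero_of_ae ?_
          exact ae_restrict_of_ae_restrict_of_subset (Ioo_subset_Ioo_left ht.1) hae
        have hftc2 : ∫ s in t..(ℓ e), U e s = u e (ℓ e) - u e t := by
          apply intervalIntegral.integral_eq_sub_of_hasDeriv_right_of_le ht.2
            ((huc e).mono (Icc_subset_Icc ht.1 le_rfl))
          · intro s hs
            have hs' : s ∈ Ioo (0:ℝ) (ℓ e) :=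
              ⟨lt_of_le_of_lt ht.1 hs.1, hs.2⟩
            exact (huder e s hs').hasDerivWithinAt
          · exact (((hUc e).mono (Icc_subset_Icc ht.1 le_rfl)).mono
              (by rw [uIcc_of_le ht.2])).intervalIntegrable
        have hut : u e t = 0 := by
          rw [hint0, hu_end e] at hftc2
          linear_combination hftc2
        simp only [hudef] at hut
        rw [sub_eq_zero] at hut
        exact hut
      · intro heq
        have h1 : ∀ e : Fin (k+1),
            (∫ t in (0:ℝ)..(ℓ e), (‖deriv (g e) t‖^2 + γ * ‖g e t‖^2))
            = ∫ t in (0:ℝ)..(ℓ e), (‖deriv (h e) t‖^2 + γ * ‖h e t‖^2) := by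
          intro e
          rw [hgint e, hhint e]
          refine setIntegral_congr_fun measurableSet_Ioo (fun t ht => ?_)
          have hev : g e =ᶠ[nhds t] h e :=
            Filter.eventuallyEq_of_mem (Icc_mem_nhds ht.1 ht.2)
              (fun s hs => heq e s hs)
          have hG : G e t = deriv (h e) t := by
            rw [← hgderiv_eq e t ht]
            exact hev.deriv_eq
          simp only [hEg, hEh]
          rw [hG, heq e t (Ioo_subset_Icc_self ht)]
        have h2 : ∑ e, ρ e * ∫ t in (0:ℝ)..(ℓ e), (‖deriv (g e) t‖^2 + γ * ‖g e t‖^2)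
            = ∑ e, ρ e * ∫ t in (0:ℝ)..(ℓ e), (‖deriv (h e) t‖^2 + γ * ‖h e t‖^2) :=
          Finset.sum_congr rfl (fun e _ => by rw [h1 e])
        rw [hsumEq] at h2
        linarith [h2]

/-- (Dirichlet problem on the skeleton of an inflated vertex.)
On a star graph with `k+1` edges of lengths `ℓ_e` and weights `ρ_e`, for `γ ∈ {0,1}` and
boundary data `f ∈ ℂ^{k+1}` there is a unique family `h` of `C²` functions with
`h_e'' = γ·h_e` on `[0,ℓ_e]`, common vertex value, `h_e(ℓ_e) = f_e`, and Kirchhoff condition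
`∑_e ρ_e·h_e'(0) = 0`; moreover `h` minimizes the energy
`∑_e ρ_e ∫_0^{ℓ_e} (|g_e'|² + γ|g_e|²)` among all `C¹` star functions `g` with
`g_e(ℓ_e) = f_e`, with equality iff `g = h`. -/
theorem stmt8 (k : ℕ) (hk : 1 ≤ k)
    (ℓ ρ : Fin (k + 1) → ℝ) (hℓ : ∀ e, 0 < ℓ e) (hρ : ∀ e, 0 < ρ e)
    (γ : ℝ) (hγ : γ = 0 ∨ γ = 1) (f : Fin (k + 1) → ℂ) :
    ∃ h : Fin (k + 1) → ℝ → ℂ,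
      (∀ e, ContDiff ℝ 2 (h e)) ∧
      (∀ e, ∀ t ∈ Icc (0 : ℝ) (ℓ e), deriv (deriv (h e)) t = (γ : ℂ) * h e t) ∧
      (∀ e e', h e 0 = h e' 0) ∧
      (∀ e, h e (ℓ e) = f e) ∧
      (∑ e, (ρ e : ℂ) * deriv (h e) 0 = 0) ∧
      (∀ h' : Fin (k + 1) → ℝ → ℂ,
        (∀ e, ContDiff ℝ 2 (h' e)) →
        (∀ e, ∀ t ∈ Icc (0 : ℝ) (ℓ e), deriv (deriv (h' e)) t = (γ : ℂ) * h' e t) →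
        (∀ e e', h' e 0 = h' e' 0) →
        (∀ e, h' e (ℓ e) = f e) →
        (∑ e, (ρ e : ℂ) * deriv (h' e) 0 = 0) →
        ∀ e, ∀ t ∈ Icc (0 : ℝ) (ℓ e), h' e t = h e t) ∧
      (∀ g : Fin (k + 1) → ℝ → ℂ,
        (∀ e, ContDiffOn ℝ 1 (g e) (Icc 0 (ℓ e))) →
        (∀ e e', g e 0 = g e' 0) →
        (∀ e, g e (ℓ e) = f e) →
        (∑ e, ρ e * ∫ t in (0 : ℝ)..(ℓ e), (‖deriv (h e) t‖ ^ 2 + γ * ‖h e t‖ ^ 2))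
            ≤ ∑ e, ρ e * ∫ t in (0 : ℝ)..(ℓ e), (‖deriv (g e) t‖ ^ 2 + γ * ‖g e t‖ ^ 2) ∧
        ((∑ e, ρ e * ∫ t in (0 : ℝ)..(ℓ e), (‖deriv (g e) t‖ ^ 2 + γ * ‖g e t‖ ^ 2))
              = (∑ e, ρ e * ∫ t in (0 : ℝ)..(ℓ e), (‖deriv (h e) t‖ ^ 2 + γ * ‖h e t‖ ^ 2))
            ↔ ∀ e, ∀ t ∈ Icc (0 : ℝ) (ℓ e), g e t = h e t)) := by
  rcases hγ with rfl | rfl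
  · exact master k ℓ ρ hℓ hρ 0 le_rfl (fun _ => 1) id contDiff_const contDiff_id
      (by intro t; simp) (by intro t; simp)
      rfl (by simp) rfl (by simp)
      (fun t _ => one_pos) (fun t ht => ht) f
  · exact master k ℓ ρ hℓ hρ 1 zero_le_one Real.cosh Real.sinh
      Real.contDiff_cosh Real.contDiff_sinh
      (by intro t; rw [Real.deriv_cosh, Real.deriv_sinh]; ring)
      (by intro t; rw [Real.deriv_sinh, Real.deriv_cosh]; ring)
      Real.cosh_zero (by rw [Real.deriv_cosh]; exact Real.sinh_zero)
      Real.sinh_zero (by rw [Real.deriv_sinh]; exact Real.cosh_zero)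
      (fun t _ => Real.cosh_pos t) (fun t ht => Real.sinh_pos_iff.mpr ht) f
end
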